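/- arXiv:math/9806070 — 5 statements merged into one kernel-verified Lean document; each statement's English description precedes it below -/
import Mathlib

section
/- Let L be a field of characteristic p > 0 with a valuation w : L* → G into a linearly ordered abelian group G (written additively). Let f(x) = a_0 x^{n_0} + a_1 x^{n_1} + ... + a_k x^{n_k} ∈ L[x] be a polynomial with exactly k+1 nonzero coefficients a_i ∈ L* (with distinct exponents n_0 < ... < n_k). Suppose r ∈ L* is not a zero of f. Then the set of values { w(α − r) : α ∈ L, f(α) = 0, w(α − r) > w(r) } has at most k elements. (In other words, the zeros of f lying in the open disk of center r and radius w(r) realize at most k distinct distances from r.) -/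
open Polynomial Finset

section Helpers

variable {Γ₀ : Type*} [LinearOrderedCommGroupWithZero Γ₀]

lemma my_eq_one_of_pow_eq_one {x : Γ₀} {n : ℕ} (hn : n ≠ 0) (h : x ^ n = 1) : x = 1 := by
  rcases lt_trichotomy x 1 with hx | hx | hx
  · exact absurd h (pow_lt_one₀ zero_le' hx hn).ne
  · exact hx
  · exact absurd h (one_lt_pow₀ hx hn).ne'

lemma my_two_point {G : Type*} [CommGroup G] [LinearOrder G] [IsOrderedMonoid G] {x y : G} {A B : ℕ}
    (hyx : y < x) (hab : A < B) : x ^ A * y ^ B < x ^ B * y ^ A := by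
  obtain ⟨c, hc, rfl⟩ : ∃ c, c ≠ 0 ∧ B = A + c := ⟨B - A, by omega, by omega⟩
  have h1 : y ^ c < x ^ c := pow_lt_pow_left' hc hyx
  calc x ^ A * y ^ (A + c) = x ^ A * y ^ A * y ^ c := by rw [pow_add, mul_assoc]
    _ < x ^ A * y ^ A * x ^ c := mul_lt_mul_right h1 _
    _ = x ^ (A + c) * y ^ A := by rw [pow_add, mul_right_comm]

lemma my_perm_prod_lt {G : Type*} [CommGroup G] [LinearOrder G] [IsOrderedMonoid G] {m : ℕ} (ε : Fin m → G)
    (hε : StrictMono ε) (d : Fin m → ℕ) (hd : StrictMono d) :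
    ∀ (N : ℕ) (σ : Equiv.Perm (Fin m)),
      (Finset.univ.filter fun i => σ i ≠ i).card ≤ N → σ ≠ 1 →
      ∏ i, ε i ^ d (σ i) < ∏ i, ε i ^ d i := by
  intro N
  induction N with
  | zero =>
    intro σ hcard hσ
    exfalso; apply hσ
    have hempty : (Finset.univ.filter fun i => σ i ≠ i) = ∅ :=
      Finset.card_eq_zero.mp (Nat.le_zero.mp hcard)
    apply Equiv.ext
    intro i
    by_contra hne
    have hmm : i ∈ (Finset.univ.filter fun i => σ i ≠ i) :=
      Finset.mem_filter.mpr ⟨Finset.mem_univ _, hne⟩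
    rw [hempty] at hmm
    exact absurd hmm (Finset.notMem_empty _)
  | succ N ih =>
    intro σ hcard hσ
    have hsne : (Finset.univ.filter fun i => σ i ≠ i).Nonempty := by
      by_contra hemp
      rw [Finset.not_nonempty_iff_eq_empty] at hemp
      apply hσ
      apply Equiv.ext
      intro i
      by_contra hne
      have hmm : i ∈ (Finset.univ.filter fun i => σ i ≠ i) :=
        Finset.mem_filter.mpr ⟨Finset.mem_univ _, hne⟩
      rw [hemp] at hmm
      exact absurd hmm (Finset.notMem_empty _)
    set s := Finset.univ.filter fun i => σ i ≠ i with hs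
    set i₀ := s.max' hsne with hi₀def
    have hi₀s : i₀ ∈ s := s.max'_mem hsne
    have hi₀ : σ i₀ ≠ i₀ := (Finset.mem_filter.mp hi₀s).2
    have hfix : ∀ i, i₀ < i → σ i = i := by
      intro i hi
      by_contra hne
      exact absurd (s.le_max' i (Finset.mem_filter.mpr ⟨Finset.mem_univ _, hne⟩))
        (not_le.mpr hi)
    have hσi₀ : σ i₀ < i₀ := by
      rcases lt_trichotomy (σ i₀) i₀ with h | h | h
      · exact h
      · exact absurd h hi₀
      · exact absurd (σ.injective (hfix (σ i₀) h)) hi₀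
    set i₁ := σ.symm i₀ with hi₁def
    have hσi₁ : σ i₁ = i₀ := σ.apply_symm_apply i₀
    have hi₁ne : i₁ ≠ i₀ := by
      intro h; rw [h] at hσi₁; exact hi₀ hσi₁
    have hi₁s : i₁ ∈ s := Finset.mem_filter.mpr ⟨Finset.mem_univ _, by
      rw [hσi₁]; exact fun h => hi₁ne h.symm⟩
    have hi₁lt : i₁ < i₀ := lt_of_le_of_ne (s.le_max' _ hi₁s) hi₁ne
    set σ' := σ * Equiv.swap i₁ i₀ with hσ'def
    have hσ'i₀ : σ' i₀ = i₀ := by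
      simp only [hσ'def, Equiv.Perm.mul_apply, Equiv.swap_apply_right]
      exact hσi₁
    have hσ'i₁ : σ' i₁ = σ i₀ := by
      simp only [hσ'def, Equiv.Perm.mul_apply, Equiv.swap_apply_left]
    have hσ'other : ∀ i, i ≠ i₀ → i ≠ i₁ → σ' i = σ i := by
      intro i h0 h1
      simp only [hσ'def, Equiv.Perm.mul_apply, Equiv.swap_apply_of_ne_of_ne h1 h0]
    have hmem1 : i₁ ∈ Finset.univ.erase i₀ :=
      Finset.mem_erase.mpr ⟨hi₁ne, Finset.mem_univ _⟩
    have hstep : ∏ i, ε i ^ d (σ i) < ∏ i, ε i ^ d (σ' i) := by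
      rw [← Finset.mul_prod_erase _ (fun i => ε i ^ d (σ i)) (Finset.mem_univ i₀),
          ← Finset.mul_prod_erase _ _ hmem1,
          ← Finset.mul_prod_erase _ (fun i => ε i ^ d (σ' i)) (Finset.mem_univ i₀),
          ← Finset.mul_prod_erase _ _ hmem1]
      have hR : ∏ i ∈ (Finset.univ.erase i₀).erase i₁, ε i ^ d (σ' i)
          = ∏ i ∈ (Finset.univ.erase i₀).erase i₁, ε i ^ d (σ i) := by
        refine Finset.prod_congr rfl fun i hi => ?_
        obtain ⟨hne1, hne0, -⟩ : i ≠ i₁ ∧ i ≠ i₀ ∧ True := by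
          have h1 := Finset.mem_erase.mp hi
          have h2 := Finset.mem_erase.mp h1.2
          exact ⟨h1.1, h2.1, trivial⟩
        rw [hσ'other i hne0 hne1]
      rw [hR, hσ'i₀, hσ'i₁, hσi₁]
      have key : ε i₀ ^ d (σ i₀) * ε i₁ ^ d i₀ < ε i₀ ^ d i₀ * ε i₁ ^ d (σ i₀) :=
        my_two_point (hε hi₁lt) (hd hσi₀)
      rw [← mul_assoc, ← mul_assoc]
      exact mul_lt_mul_left key _
    by_cases h1 : σ' = 1
    · rw [h1] at hstep
      simpa using hstep
    · refine hstep.trans (ih σ' ?_ h1)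
      have hsub : (Finset.univ.filter fun i => σ' i ≠ i) ⊆ s.erase i₀ := by
        intro i hi
        have hi2 := (Finset.mem_filter.mp hi).2
        rcases eq_or_ne i i₀ with rfl | h0
        · exact absurd hσ'i₀ hi2
        · refine Finset.mem_erase.mpr ⟨h0, Finset.mem_filter.mpr ⟨Finset.mem_univ _, ?_⟩⟩
          rcases eq_or_ne i i₁ with rfl | hne1
          · rw [hσi₁]; exact fun h => hi₁ne h.symm
          · rw [← hσ'other i h0 hne1]; exact hi2
      have hcle := Finset.card_le_card hsub
      have herase := Finset.card_erase_of_mem hi₀s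
      omega

end Helpers

section LemA

variable {K : Type*} [Field K]

/-- `g` has trailing coefficient exactly at `t`. -/
def PolySpec (g : Polynomial K) (t : ℕ) : Prop :=
  (∀ s, s < t → g.coeff s = 0) ∧ g.coeff t ≠ 0

lemma exists_polySpec (g : Polynomial K) (hg : g ≠ 0) : ∃ t, PolySpec g t := by
  have hne : {t | g.coeff t ≠ 0}.Nonempty := by
    have hsupp : g.support.Nonempty :=
      Finset.nonempty_iff_ne_empty.mpr fun h => hg (Polynomial.support_eq_empty.mp h)
    obtain ⟨t, ht⟩ := hsupp
    exact ⟨t, Polynomial.mem_support_iff.mp ht⟩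
  refine ⟨sInf {t | g.coeff t ≠ 0}, fun s hs => ?_, Nat.sInf_mem hne⟩
  by_contra hne'
  exact absurd (Nat.sInf_le hne') (not_le.mpr hs)

lemma lemA : ∀ (m : ℕ) (q : Fin m → Polynomial K),
    (∀ e : Fin m → K, (∑ l, e l • q l) = 0 → e = 0) →
    ∃ (Q : Matrix (Fin m) (Fin m) K) (d : Fin m → ℕ),
      StrictMono d ∧ ∀ i, PolySpec (∑ l, Q i l • q l) (d i) := by
  intro m
  induction m with
  | zero =>
    intro q _
    exact ⟨0, Fin.elim0, fun a => a.elim0, fun i => i.elim0⟩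
  | succ m ih =>
    intro q hq
    have hq0 : q 0 ≠ 0 := by
      intro h
      have hsum : (∑ l, ((Pi.single 0 1 : Fin (m+1) → K)) l • q l) = 0 := by
        rw [Finset.sum_eq_single 0]
        · rw [Pi.single_eq_same, h, smul_zero]
        · intro b _ hb; rw [Pi.single_eq_of_ne hb, zero_smul]
        · intro hb; exact absurd (Finset.mem_univ _) hb
      have := congrFun (hq _ hsum) 0
      rw [Pi.single_eq_same] at this
      exact one_ne_zero this
    have hTne : (⋃ (e : Fin (m+1) → K), {t | PolySpec (∑ l, e l • q l) t}).Nonempty := by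
      obtain ⟨t, ht⟩ := exists_polySpec (q 0) hq0
      refine ⟨t, Set.mem_iUnion.mpr ⟨(Pi.single 0 1 : Fin (m+1) → K), ?_⟩⟩
      have hsum : (∑ l, ((Pi.single 0 1 : Fin (m+1) → K)) l • q l) = q 0 := by
        rw [Finset.sum_eq_single 0]
        · rw [Pi.single_eq_same, one_smul]
        · intro b _ hb; rw [Pi.single_eq_of_ne hb, zero_smul]
        · intro hb; exact absurd (Finset.mem_univ _) hb
      rw [Set.mem_setOf_eq, hsum]; exact ht
    set T : Set ℕ := ⋃ (e : Fin (m+1) → K), {t | PolySpec (∑ l, e l • q l) t} with hT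
    set d₀ := sInf T with hd₀
    have hd₀T : d₀ ∈ T := Nat.sInf_mem hTne
    obtain ⟨c, hc⟩ : ∃ e : Fin (m+1) → K, PolySpec (∑ l, e l • q l) d₀ := by
      obtain ⟨s, ⟨e, rfl⟩, hmem⟩ := hd₀T
      exact ⟨e, hmem⟩
    have hmin : ∀ (e : Fin (m+1) → K) (t : ℕ), PolySpec (∑ l, e l • q l) t → d₀ ≤ t :=
      fun e t ht => Nat.sInf_le (Set.mem_iUnion.mpr ⟨e, ht⟩)
    set h : Polynomial K := ∑ l, c l • q l with hh
    have hhc : h.coeff d₀ ≠ 0 := hc.2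
    obtain ⟨l₀, hl₀⟩ : ∃ l, c l ≠ 0 := by
      by_contra hall
      push_neg at hall
      apply hhc
      rw [hh]
      rw [Finset.sum_eq_zero (fun l _ => by rw [hall l, zero_smul])]
      simp
    set lam : Fin m → K := fun l' => (q (l₀.succAbove l')).coeff d₀ * (h.coeff d₀)⁻¹ with hlam
    set q' : Fin m → Polynomial K := fun l' => q (l₀.succAbove l') - lam l' • h with hq'def
    have hq'coeff : ∀ l', (q' l').coeff d₀ = 0 := by
      intro l'
      rw [hq'def]
      simp only [Polynomial.coeff_sub, Polynomial.coeff_smul, smul_eq_mul, hlam]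
      field_simp
      simp
    have hcombo : ∀ e' : Fin m → K,
        (∑ l', e' l' • q' l')
          = ∑ l, ((Fin.insertNth l₀ 0 e' : Fin (m+1) → K) l - (∑ l', e' l' * lam l') * c l) • q l := by
      intro e'
      have h1 : (∑ l, ((Fin.insertNth l₀ 0 e' : Fin (m+1) → K)) l • q l)
          = ∑ l', e' l' • q (l₀.succAbove l') := by
        rw [Fin.sum_univ_succAbove (fun l => ((Fin.insertNth l₀ 0 e' : Fin (m+1) → K)) l • q l) l₀]
        simp [Fin.insertNth_apply_same, Fin.insertNth_apply_succAbove]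
      calc (∑ l', e' l' • q' l')
          = ∑ l', (e' l' • q (l₀.succAbove l') - (e' l' * lam l') • h) := by
            refine Finset.sum_congr rfl fun l' _ => ?_
            rw [hq'def, smul_sub, smul_smul]
        _ = (∑ l', e' l' • q (l₀.succAbove l')) - ∑ l', (e' l' * lam l') • h :=
            Finset.sum_sub_distrib _ _
        _ = (∑ l, ((Fin.insertNth l₀ 0 e' : Fin (m+1) → K)) l • q l)
              - (∑ l', e' l' * lam l') • ∑ l, c l • q l := by
            rw [h1, ← Finset.sum_smul, hh]
        _ = ∑ l, ((Fin.insertNth l₀ 0 e' : Fin (m+1) → K) l - (∑ l', e' l' * lam l') * c l) • q l := by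
            rw [Finset.smul_sum, ← Finset.sum_sub_distrib]
            refine Finset.sum_congr rfl fun l _ => ?_
            rw [sub_smul, smul_smul]
    have hq' : ∀ e' : Fin m → K, (∑ l', e' l' • q' l') = 0 → e' = 0 := by
      intro e' he'
      rw [hcombo] at he'
      have hE := hq _ he'
      have hμ : (∑ l', e' l' * lam l') = 0 := by
        have h0 := congrFun hE l₀
        rw [Fin.insertNth_apply_same] at h0
        simp only [Pi.zero_apply, zero_sub, neg_eq_zero] at h0
        exact (mul_eq_zero.mp h0).resolve_right hl₀
      funext l'
      have h0 := congrFun hE (l₀.succAbove l')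
      rw [Fin.insertNth_apply_succAbove, hμ, zero_mul, sub_zero] at h0
      exact h0
    obtain ⟨Q', d', hd', hspec'⟩ := ih q' hq'
    set μ : Fin m → K := fun i' => ∑ l', Q' i' l' * lam l' with hμdef
    set Q : Matrix (Fin (m+1)) (Fin (m+1)) K :=
      Fin.cons c (fun i' l => (Fin.insertNth l₀ 0 (Q' i') : Fin (m+1) → K) l - μ i' * c l) with hQ
    have hrow0 : (∑ l, Q 0 l • q l) = h := by
      rw [hh]
      refine Finset.sum_congr rfl fun l _ => ?_
      rw [hQ, Fin.cons_zero]
    have hrowsucc : ∀ i', (∑ l, Q i'.succ l • q l) = ∑ l', Q' i' l' • q' l' := by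
      intro i'
      rw [hcombo (Q' i')]
      refine Finset.sum_congr rfl fun l _ => ?_
      rw [hQ, Fin.cons_succ]
    have hgt : ∀ i', d₀ < d' i' := by
      intro i'
      have hs' := hspec' i'
      have hg'' : PolySpec (∑ l, Q i'.succ l • q l) (d' i') := by
        rw [hrowsucc]; exact hs'
      have hle := hmin _ _ hg''
      have hne : d' i' ≠ d₀ := by
        intro heq
        have hz : (∑ l', Q' i' l' • q' l').coeff d₀ = 0 := by
          rw [Polynomial.finset_sum_coeff]
          exact Finset.sum_eq_zero fun l' _ => by
            rw [Polynomial.coeff_smul, hq'coeff l', smul_zero]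
        rw [← heq] at hz
        exact hs'.2 hz
      omega
    refine ⟨Q, Fin.cons d₀ d', ?_, ?_⟩
    · intro i j hij
      rcases Fin.eq_zero_or_eq_succ j with rfl | ⟨j', rfl⟩
      · exact absurd hij (by simp [Fin.lt_def])
      · rcases Fin.eq_zero_or_eq_succ i with rfl | ⟨i', rfl⟩
        · simpa [Fin.cons_zero, Fin.cons_succ] using hgt j'
        · simp only [Fin.cons_succ]
          exact hd' (by exact_mod_cast Fin.succ_lt_succ_iff.mp hij)
    · intro i
      rcases Fin.eq_zero_or_eq_succ i with rfl | ⟨i', rfl⟩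
      · rw [Fin.cons_zero, hrow0]
        rw [hh] at hc ⊢
        exact hc
      · rw [Fin.cons_succ, hrowsucc]
        exact hspec' i'

end LemA

section EvalVal

variable {L : Type*} [Field L] {Γ₀ : Type*} [LinearOrderedCommGroupWithZero Γ₀]

lemma my_eval_val (w : Valuation L Γ₀) (G : Polynomial L) (dG : ℕ)
    (hlow : ∀ t, t < dG → G.coeff t = 0)
    (hdiag : w (G.coeff dG) = 1)
    (hle : ∀ t, w (G.coeff t) ≤ 1)
    (u : L) (hu0 : w u ≠ 0) (hu1 : w u < 1) :
    w (G.eval u) = w u ^ dG := by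
  have hcd : G.coeff dG ≠ 0 := by
    intro h; rw [h, map_zero] at hdiag; exact zero_ne_one hdiag
  have hdle : dG ≤ G.natDegree := Polynomial.le_natDegree_of_ne_zero hcd
  have hmem : dG ∈ Finset.range (G.natDegree + 1) := Finset.mem_range.mpr (by omega)
  have hmain : w (G.coeff dG * u ^ dG) = w u ^ dG := by
    rw [Valuation.map_mul, hdiag, one_mul, Valuation.map_pow]
  have h0 : w (G.coeff dG * u ^ dG) ≠ 0 := by
    rw [hmain]; exact pow_ne_zero _ hu0
  have hrest : ∀ t, t ≠ dG → w (G.coeff t * u ^ t) < w (G.coeff dG * u ^ dG) := by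
    intro t htne
    rw [hmain]
    rcases lt_or_gt_of_ne htne with hlt | hgt
    · rw [hlow t hlt, zero_mul, Valuation.map_zero]
      exact zero_lt_iff.mpr (pow_ne_zero _ hu0)
    · rw [Valuation.map_mul, Valuation.map_pow]
      calc w (G.coeff t) * w u ^ t ≤ 1 * w u ^ t := mul_le_mul_left (hle t) _
        _ = w u ^ t := one_mul _
        _ < w u ^ dG := by
            obtain ⟨s, hs, rfl⟩ : ∃ s, s ≠ 0 ∧ t = dG + s := ⟨t - dG, by omega, by omega⟩
            rw [pow_add]
            have h1 : w u ^ s < 1 := pow_lt_one₀ zero_le' hu1 hs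
            calc w u ^ dG * w u ^ s
                < w u ^ dG * 1 :=
                  (OrderIso.mulLeft₀ (w u ^ dG) (zero_lt_iff.mpr (pow_ne_zero _ hu0))).strictMono h1
              _ = w u ^ dG := mul_one _
  rw [Polynomial.eval_eq_sum_range]
  have key : w (∑ i ∈ Finset.range (G.natDegree + 1), G.coeff i * u ^ i)
      = w (G.coeff dG * u ^ dG) := by
    refine Valuation.map_sum_eq_of_lt w hmem ?_
    intro tt htt
    have htt2 := Finset.mem_sdiff.mp htt
    exact hrest tt (by simpa using htt2.2)
  rw [key, hmain]
end EvalVal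

theorem zeros_in_disk_realize_at_most_k_distances
    {L : Type*} [Field L] {p : ℕ} [hp : Fact p.Prime] [CharP L p]
    {Γ₀ : Type*} [LinearOrderedCommGroupWithZero Γ₀] (w : Valuation L Γ₀)
    {k : ℕ} (a : Fin (k + 1) → L) (ha : ∀ i, a i ≠ 0)
    (n : Fin (k + 1) → ℕ) (hn : StrictMono n)
    (f : Polynomial L)
    (hf : f = ∑ i, Polynomial.C (a i) * Polynomial.X ^ (n i))
    (r : L) (hr : r ≠ 0) (hfr : Polynomial.eval r f ≠ 0) :
    {γ : Γ₀ | ∃ α : L, Polynomial.eval α f = 0 ∧ w (α - r) < w r ∧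
        γ = w (α - r)}.ncard ≤ k := by
  classical
  by_contra hcon
  push_neg at hcon
  set S : Set Γ₀ := {γ : Γ₀ | ∃ α : L, Polynomial.eval α f = 0 ∧ w (α - r) < w r ∧
      γ = w (α - r)} with hS
  obtain ⟨t, hts, htcard⟩ := Set.exists_subset_card_eq (show k + 1 ≤ S.ncard from hcon)
  have htfin : t.Finite := Set.finite_of_ncard_ne_zero (by omega)
  have hFcard : htfin.toFinset.card = k + 1 := by
    rw [← Set.ncard_eq_toFinset_card t htfin]; exact htcard
  set oi := htfin.toFinset.orderIsoOfFin hFcard with hoi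
  set γv : Fin (k+1) → Γ₀ := fun j => (oi j : Γ₀) with hγv
  have hγmono : StrictMono γv := fun i j hij => Subtype.coe_lt_coe.mpr (oi.strictMono hij)
  have hγS : ∀ j, γv j ∈ S := fun j => hts (htfin.mem_toFinset.mp (oi j).2)
  choose α hαzero hαlt hαeq using hγS
  set u : Fin (k+1) → L := fun j => (α j - r) / r with hu
  have hwr0 : w r ≠ 0 := w.ne_zero_iff.mpr hr
  have hαr : ∀ j, α j - r ≠ 0 := by
    intro j h0
    rw [sub_eq_zero] at h0
    exact hfr (h0 ▸ hαzero j)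
  have hwu : ∀ j, w (u j) = γv j * (w r)⁻¹ := by
    intro j
    show w ((α j - r) / r) = γv j * (w r)⁻¹
    rw [Valuation.map_div, div_eq_mul_inv, hαeq j]
  have hwu0 : ∀ j, w (u j) ≠ 0 := by
    intro j
    rw [hwu j]
    exact mul_ne_zero (by rw [hαeq j]; exact w.ne_zero_iff.mpr (hαr j)) (inv_ne_zero hwr0)
  have hwrinvpos : (0:Γ₀) < (w r)⁻¹ := zero_lt_iff.mpr (inv_ne_zero hwr0)
  have hwu1 : ∀ j, w (u j) < 1 := by
    intro j
    have hlt1 : γv j < w r := by rw [hαeq j]; exact hαlt j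
    rw [hwu j, ← mul_inv_cancel₀ hwr0]
    exact (OrderIso.mulRight₀ (w r)⁻¹ hwrinvpos).strictMono hlt1
  have hwumono : StrictMono fun j => w (u j) := by
    intro i j hij
    show w (u i) < w (u j)
    rw [hwu i, hwu j]
    exact (OrderIso.mulRight₀ (w r)⁻¹ hwrinvpos).strictMono (hγmono hij)
  -- prime field
  set φ : ZMod p →+* L := ZMod.castHom dvd_rfl L with hφ
  have hφunit : ∀ c : ZMod p, c ≠ 0 → w (φ c) = 1 := by
    intro c hc
    have h1 : c ^ (p - 1) = 1 := ZMod.pow_card_sub_one_eq_one hc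
    have h2 : (w (φ c)) ^ (p - 1) = 1 := by
      rw [← Valuation.map_pow, ← map_pow, h1, map_one, Valuation.map_one]
    exact my_eq_one_of_pow_eq_one (by have := hp.out.one_lt; omega) h2
  have hφle : ∀ c : ZMod p, w (φ c) ≤ 1 := by
    intro c
    rcases eq_or_ne c 0 with rfl | hc
    · rw [map_zero, Valuation.map_zero]; exact zero_le'
    · rw [hφunit c hc]
  -- the q family over the prime field
  set q : Fin (k+1) → Polynomial (ZMod p) := fun l => (1 + Polynomial.X) ^ (n l) with hqdef
  have hqind : ∀ e : Fin (k+1) → ZMod p, (∑ l, e l • q l) = 0 → e = 0 := by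
    intro e he
    have h2 := congrArg (Polynomial.aeval (Polynomial.X - 1 : Polynomial (ZMod p))) he
    rw [map_sum, map_zero] at h2
    have h3 : ∀ l, (Polynomial.aeval (Polynomial.X - 1 : Polynomial (ZMod p))) (e l • q l)
        = e l • (Polynomial.X : Polynomial (ZMod p)) ^ (n l) := by
      intro l
      rw [map_smul, hqdef]
      congr 1
      rw [map_pow, map_add, map_one, Polynomial.aeval_X]
      congr 1
      ring
    rw [Finset.sum_congr rfl (fun l _ => h3 l)] at h2
    funext l
    have h4 := congrArg (fun P => Polynomial.coeff P (n l)) h2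
    simp only [Polynomial.finset_sum_coeff, Polynomial.coeff_smul, Polynomial.coeff_X_pow,
      Polynomial.coeff_zero, smul_eq_mul] at h4
    rw [Finset.sum_eq_single l] at h4
    · simpa using h4
    · intro b _ hbl
      have hnb : ¬ (n l = n b) := fun hh => hbl (hn.injective hh.symm)
      simp [hnb]
    · intro hl; exact absurd (Finset.mem_univ _) hl
  obtain ⟨Q, d, hd, hspec⟩ := lemA (k+1) q hqind
  set g : Fin (k+1) → Polynomial (ZMod p) := fun i => ∑ l, Q i l • q l with hg
  set G : Fin (k+1) → Polynomial L := fun i => (g i).map φ with hG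
  have hGval : ∀ j i, w ((G i).eval (u j)) = w (u j) ^ d i := by
    intro j i
    refine my_eval_val w (G i) (d i) ?_ ?_ ?_ (u j) (hwu0 j) (hwu1 j)
    · intro s hs
      rw [hG]
      simp only [Polynomial.coeff_map]
      rw [(hspec i).1 s hs, map_zero]
    · rw [hG]
      simp only [Polynomial.coeff_map]
      exact hφunit _ (hspec i).2
    · intro s
      rw [hG]
      simp only [Polynomial.coeff_map]
      exact hφle _
  set Amat : Matrix (Fin (k+1)) (Fin (k+1)) L := fun j l => (1 + u j) ^ (n l) with hA
  set Bmat : Matrix (Fin (k+1)) (Fin (k+1)) L := fun j i => (G i).eval (u j) with hB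
  have hBA : Bmat = Amat * (Q.map φ).transpose := by
    ext j i
    rw [Matrix.mul_apply]
    have hGi : G i = ∑ l, Polynomial.C (φ (Q i l)) * (1 + Polynomial.X : Polynomial L) ^ (n l) := by
      show Polynomial.map φ (∑ l, Q i l • q l) = _
      rw [Polynomial.map_sum]
      refine Finset.sum_congr rfl fun l _ => ?_
      rw [Polynomial.smul_eq_C_mul, Polynomial.map_mul, Polynomial.map_C]
      simp only [hqdef]
      rw [Polynomial.map_pow, Polynomial.map_add, Polynomial.map_one, Polynomial.map_X]
    show (G i).eval (u j) = _
    rw [hGi, Polynomial.eval_finset_sum]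
    refine Finset.sum_congr rfl fun l _ => ?_
    rw [Polynomial.eval_mul, Polynomial.eval_C, Polynomial.eval_pow, Polynomial.eval_add,
      Polynomial.eval_one, Polynomial.eval_X]
    rw [Matrix.transpose_apply, Matrix.map_apply]
    show _ = (1 + u j) ^ (n l) * φ (Q i l)
    ring
  set b : Fin (k+1) → L := fun l => a l * r ^ (n l) with hb
  have hbne : b ≠ 0 := by
    intro h
    exact (mul_ne_zero (ha 0) (pow_ne_zero _ hr)) (congrFun h 0)
  have hker : Amat.mulVec b = 0 := by
    funext j
    have hαj : (1 + u j) * r = α j := by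
      show (1 + (α j - r) / r) * r = α j
      field_simp
      ring
    have h1 : ∀ l, Amat j l * b l = a l * (α j) ^ (n l) := by
      intro l
      show (1 + u j) ^ (n l) * (a l * r ^ (n l)) = _
      calc (1 + u j) ^ n l * (a l * r ^ n l) = a l * ((1 + u j) * r) ^ n l := by
            rw [mul_pow]; ring
        _ = a l * (α j) ^ n l := by rw [hαj]
    have h2 := hαzero j
    rw [hf, Polynomial.eval_finset_sum] at h2
    simp only [Polynomial.eval_mul, Polynomial.eval_C, Polynomial.eval_pow,
      Polynomial.eval_X] at h2
    show (Amat.mulVec b) j = 0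
    rw [Matrix.mulVec, dotProduct]
    rw [Finset.sum_congr rfl (fun l _ => h1 l)]
    exact h2
  have hdetA : Amat.det = 0 := by
    rw [← Matrix.exists_mulVec_eq_zero_iff]
    exact ⟨b, hbne, hker⟩
  have hdetB : Bmat.det = 0 := by
    rw [hBA, Matrix.det_mul, hdetA, zero_mul]
  -- dominance contradiction
  set ε : Fin (k+1) → Γ₀ˣ := fun j => Units.mk0 (w (u j)) (hwu0 j) with hε
  have hεmono : StrictMono ε := by
    intro i j hij
    rw [← Units.val_lt_val]
    exact hwumono hij
  have hterm : ∀ σ : Equiv.Perm (Fin (k+1)),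
      w (∏ i, Bmat (σ i) i) = ((∏ i, ε (σ i) ^ d i : Γ₀ˣ) : Γ₀) := by
    intro σ
    rw [map_prod w (fun i => Bmat (σ i) i) Finset.univ, Units.coe_prod]
    refine Finset.prod_congr rfl fun i _ => ?_
    show w ((G i).eval (u (σ i))) = _
    rw [hGval (σ i) i, Units.val_pow_eq_pow_val]
    rfl
  have hlt : ∀ σ : Equiv.Perm (Fin (k+1)), σ ≠ 1 →
      (∏ i, ε (σ i) ^ d i : Γ₀ˣ) < ∏ i, ε i ^ d i := by
    intro σ hσ
    have h1 : (∏ i, ε (σ i) ^ d i : Γ₀ˣ) = ∏ i, ε i ^ d (σ⁻¹ i) := by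
      rw [← Equiv.prod_comp σ (fun i => ε i ^ d (σ⁻¹ i))]
      refine Finset.prod_congr rfl fun i _ => ?_
      rw [← Equiv.Perm.mul_apply, inv_mul_cancel, Equiv.Perm.one_apply]
    rw [h1]
    refine my_perm_prod_lt ε hεmono d hd (Finset.univ.filter fun i => σ⁻¹ i ≠ i).card σ⁻¹
      le_rfl ?_
    intro h1'
    exact hσ (by rwa [inv_eq_one] at h1')
  have hdetsum : (0 : L) = ∑ σ : Equiv.Perm (Fin (k+1)),
      Equiv.Perm.sign σ • ∏ i, Bmat (σ i) i := by
    rw [← Matrix.det_apply, hdetB]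
  rw [← Finset.add_sum_erase _ _ (Finset.mem_univ (1 : Equiv.Perm (Fin (k+1))))] at hdetsum
  have hT1 : Equiv.Perm.sign (1 : Equiv.Perm (Fin (k+1))) • ∏ i, Bmat ((1 : Equiv.Perm (Fin (k+1))) i) i
      = - ∑ σ ∈ Finset.univ.erase (1 : Equiv.Perm (Fin (k+1))), Equiv.Perm.sign σ • ∏ i, Bmat (σ i) i :=
    eq_neg_of_add_eq_zero_left hdetsum.symm
  have hwT1 : w (Equiv.Perm.sign (1 : Equiv.Perm (Fin (k+1))) • ∏ i, Bmat ((1 : Equiv.Perm (Fin (k+1))) i) i)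
      = ((∏ i, ε i ^ d i : Γ₀ˣ) : Γ₀) := by
    rw [Equiv.Perm.sign_one, one_smul]
    have := hterm 1
    simpa using this
  have hwrest : w (∑ σ ∈ Finset.univ.erase (1 : Equiv.Perm (Fin (k+1))),
      Equiv.Perm.sign σ • ∏ i, Bmat (σ i) i) < ((∏ i, ε i ^ d i : Γ₀ˣ) : Γ₀) := by
    refine w.map_sum_lt (Units.ne_zero _) ?_
    intro σ hσ
    have hσne : σ ≠ 1 := (Finset.mem_erase.mp hσ).1
    have hws : w (Equiv.Perm.sign σ • ∏ i, Bmat (σ i) i) = w (∏ i, Bmat (σ i) i) := by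
      rcases Int.units_eq_one_or (Equiv.Perm.sign σ) with hsg | hsg <;> rw [hsg]
      · rw [Units.smul_def, Units.val_one, one_zsmul]
      · rw [Units.smul_def, Units.val_neg, Units.val_one, neg_one_zsmul, Valuation.map_neg]
    rw [hws, hterm σ]
    exact_mod_cast Units.val_lt_val.mpr (hlt σ hσne)
  rw [hT1, Valuation.map_neg] at hwT1
  rw [hwT1] at hwrest
  exact absurd hwrest (lt_irrefl _)
end

section
/- Let f(x) = a_0 x^{n_0} + a_1 x^{n_1} + ... + a_k x^{n_k} ∈ K[x] be a polynomial with exactly k+1 nonzero coefficients a_i ∈ K* (distinct exponents n_0 < ... < n_k), and assume k ≥ 1. Then for every g ∈ G, the number of distinct zeros α of f in K with v(α) = g is at most (q − 1)·q^{k−1}. -/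
/-!
STATEMENT 8 (zeros of given valuation; the sphere count `Z_u ≤ (q−1)q^{k−1}`).

`K` is a field of characteristic `p > 0` with a valuation `v : K* → G`, encoded
multiplicatively as a Mathlib `Valuation v : K → Γ₀`; the residue field of the
valuation subring is finite with `q` elements.  An element `g` of the value
group `G` corresponds to a nonzero `g : Γ₀`.

If `f = a₀x^{n₀} + ⋯ + a_k x^{n_k}` has exactly `k+1` nonzero coefficients and
`k ≥ 1`, then for every `g ∈ G` the number of distinct zeros `α` of `f` in `K`
with `v(α) = g` is at most `(q − 1)·q^{k−1}`.
-/

open Polynomial Finset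
open scoped Classical

namespace SparseAux

variable {K : Type*} [Field K] {Γ₀ : Type*} [LinearOrderedCommGroupWithZero Γ₀]

lemma mul_lt_mul_right₀' {a b c : Γ₀} (hc : c ≠ 0) (h : a < b) : a * c < b * c := by
  rw [mul_comm a c, mul_comm b c]
  exact mul_lt_mul_of_pos_left h (zero_lt_iff.2 hc)

lemma le_of_mul_le_mul_right₀ {a b c : Γ₀} (hc : c ≠ 0) (h : a * c ≤ b * c) : a ≤ b := by
  have := mul_le_mul_left h c⁻¹
  simpa [mul_assoc, mul_inv_cancel₀ hc] using this

/-- In a sum that vanishes, the maximum valuation is attained at two distinct indices. -/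
lemma exists_two_max (v : Valuation K Γ₀) {ι : Type*} (s : Finset ι) (t : ι → K)
    (hne : s.Nonempty) (h0 : ∀ i ∈ s, t i ≠ 0) (hsum : ∑ i ∈ s, t i = 0) :
    ∃ i ∈ s, ∃ j ∈ s, i ≠ j ∧ v (t i) = v (t j) ∧ ∀ l ∈ s, v (t l) ≤ v (t i) := by
  classical
  obtain ⟨i, hi, hmax⟩ := s.exists_max_image (fun l => v (t l)) hne
  by_cases hex : ∃ j ∈ s, j ≠ i ∧ v (t j) = v (t i)
  · obtain ⟨j, hj, hji, hvj⟩ := hex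
    exact ⟨i, hi, j, hj, (Ne.symm hji), hvj.symm, hmax⟩
  · exfalso
    push_neg at hex
    have hvi : v (t i) ≠ 0 := by
      simpa [Valuation.ne_zero_iff] using h0 i hi
    have hlt : ∀ l ∈ s \ {i}, v (t l) < v (t i) := by
      intro l hl
      rw [Finset.mem_sdiff, Finset.mem_singleton] at hl
      exact lt_of_le_of_ne (hmax l hl.1) (hex l hl.1 hl.2)
    have := v.map_sum_eq_of_lt hi hlt
    rw [hsum] at this
    simp at this
    exact hvi this.symm

lemma one_of_pow_eq_one {γ : Γ₀} {m : ℕ} (hm : m ≠ 0) (h : γ ^ m = 1) : γ = 1 := by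
  rcases lt_trichotomy γ 1 with hlt | heq | hgt
  · exact absurd (h ▸ pow_lt_one₀ zero_le' hlt hm) (lt_irrefl _)
  · exact heq
  · exact absurd (h ▸ one_lt_pow₀ hgt hm) (lt_irrefl _)

lemma val_natCast {p : ℕ} [hp : Fact p.Prime] [CharP K p] (v : Valuation K Γ₀)
    {m : ℕ} (h : ¬ p ∣ m) : v (m : K) = 1 := by
  have hm0 : m ≠ 0 := by rintro rfl; exact h (dvd_zero p)
  have hcop : m.Coprime p := (Nat.coprime_comm.mp ((Nat.Prime.coprime_iff_not_dvd hp.out).mpr h))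
  have hmod : m ^ (p - 1) ≡ 1 [MOD p] := by
    have := Nat.ModEq.pow_totient hcop
    rwa [Nat.totient_prime hp.out] at this
  have hpos : 1 ≤ m ^ (p - 1) := Nat.one_le_iff_ne_zero.2 (pow_ne_zero _ hm0)
  have hdvd : p ∣ m ^ (p - 1) - 1 := (Nat.modEq_iff_dvd' hpos).mp hmod.symm
  obtain ⟨c, hc⟩ := hdvd
  have hexp : m ^ (p - 1) = 1 + p * c := by omega
  have hcast : ((m : K)) ^ (p - 1) = 1 := by
    have : ((m ^ (p - 1) : ℕ) : K) = ((1 + p * c : ℕ) : K) := by rw [hexp]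
    push_cast at this
    rwa [CharP.cast_eq_zero K p, zero_mul, add_zero] at this
  have : (v (m : K)) ^ (p - 1) = 1 := by
    rw [← map_pow, hcast, map_one]
  exact one_of_pow_eq_one (by have := hp.out.two_le; omega) this

/-- A valuation takes at most `m` distinct nonzero values on the ℤ-span of `m` elements
(in characteristic `p`). -/
lemma card_le_of_values {p : ℕ} [hp : Fact p.Prime] [CharP K p] (v : Valuation K Γ₀)
    {m : ℕ} (ρ : Fin m → K) (T : Finset Γ₀)
    (hT : ∀ γ ∈ T, γ ≠ 0 ∧ ∃ c : Fin m → ℤ, v (∑ i, (c i : K) * ρ i) = γ) :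
    T.card ≤ m := by
  classical
  by_contra hlt
  push_neg at hlt
  choose hne0 c hc using hT
  set cc : T → Fin m → ℤ := fun γ => c γ.1 γ.2 with hcc
  set z : T → K := fun γ => ∑ i, (cc γ i : K) * ρ i with hzdef
  have hz : ∀ γ : T, v (z γ) = γ.1 := fun γ => hc γ.1 γ.2
  have hcard : Fintype.card (Fin m → ZMod p) < Fintype.card (T → ZMod p) := by
    have h1 : Fintype.card (Fin m → ZMod p) = p ^ m := by simp [ZMod.card]
    have h2 : Fintype.card (T → ZMod p) = p ^ T.card := by simp [ZMod.card]
    rw [h1, h2]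
    exact Nat.pow_lt_pow_right hp.out.one_lt hlt
  obtain ⟨lam, lam', hnefun, heq⟩ := Fintype.exists_ne_map_eq_of_card_lt
    (fun (lam : T → ZMod p) => (fun i : Fin m => ∑ γ : T, lam γ * ((cc γ i : ℤ) : ZMod p))) hcard
  set μ : T → ZMod p := lam - lam' with hμdef
  have hμ : μ ≠ 0 := sub_ne_zero.2 hnefun
  have hμsum : ∀ i : Fin m, ∑ γ : T, μ γ * ((cc γ i : ℤ) : ZMod p) = 0 := by
    intro i
    have h := congrFun heq i
    simp only [hμdef, Pi.sub_apply, sub_mul, Finset.sum_sub_distrib]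
    rw [h, sub_self]
  set w : T → K := fun γ => (((μ γ).val : ℕ) : K) * z γ with hwdef
  have hzero : ∑ γ : T, w γ = 0 := by
    have step1 : ∑ γ : T, w γ
        = ∑ i : Fin m, ((∑ γ : T, ((μ γ).val : ℤ) * cc γ i : ℤ) : K) * ρ i := by
      calc ∑ γ : T, w γ
          = ∑ γ : T, ∑ i : Fin m, (((μ γ).val : K) * (cc γ i : K)) * ρ i := by
            refine Finset.sum_congr rfl fun γ _ => ?_
            rw [hwdef]
            simp only [hzdef, Finset.mul_sum, mul_assoc]
        _ = ∑ i : Fin m, ∑ γ : T, (((μ γ).val : K) * (cc γ i : K)) * ρ i := Finset.sum_comm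
        _ = ∑ i : Fin m, ((∑ γ : T, ((μ γ).val : ℤ) * cc γ i : ℤ) : K) * ρ i := by
            refine Finset.sum_congr rfl fun i _ => ?_
            push_cast
            rw [Finset.sum_mul]
    rw [step1]
    refine Finset.sum_eq_zero fun i _ => ?_
    have hdvd : (p : ℤ) ∣ ∑ γ : T, ((μ γ).val : ℤ) * cc γ i := by
      rw [← ZMod.intCast_zmod_eq_zero_iff_dvd]
      push_cast
      have hvv : ∀ γ : T, (((μ γ).val : ℕ) : ZMod p) = μ γ := fun γ => by
        rw [ZMod.natCast_val, ZMod.cast_id]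
      calc (∑ γ : T, (((μ γ).val : ℕ) : ZMod p) * ((cc γ i : ℤ) : ZMod p))
          = ∑ γ : T, μ γ * ((cc γ i : ℤ) : ZMod p) := by
            refine Finset.sum_congr rfl fun γ _ => by rw [hvv γ]
        _ = 0 := hμsum i
    obtain ⟨c0, hc0⟩ := hdvd
    rw [hc0]
    push_cast
    rw [CharP.cast_eq_zero K p]
    ring
  -- now derive a contradiction from distinct valuations
  set s : Finset T := Finset.univ.filter (fun γ : T => μ γ ≠ 0) with hsdef
  have hsum_s : ∑ γ ∈ s, w γ = 0 := by
    rw [← hzero]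
    apply Finset.sum_subset (Finset.subset_univ s)
    intro γ _ hγ
    simp only [hsdef, Finset.mem_filter, Finset.mem_univ, true_and, not_not] at hγ
    simp [hwdef, hγ]
  have hsne : s.Nonempty := by
    obtain ⟨γ, hγ⟩ := Function.ne_iff.mp hμ
    refine ⟨γ, ?_⟩
    simp only [hsdef, Finset.mem_filter, Finset.mem_univ, true_and]
    simpa using hγ
  have hvone : ∀ γ ∈ s, v ((((μ γ).val : ℕ) : K)) = 1 := by
    intro γ hγ
    simp only [hsdef, Finset.mem_filter] at hγ
    refine val_natCast (p := p) v ?_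
    have h1 : (μ γ).val < p := ZMod.val_lt _
    have h2 : (μ γ).val ≠ 0 := by
      intro h
      exact hγ.2 ((ZMod.val_eq_zero _).mp h)
    intro hdvd
    exact h2 (Nat.eq_zero_of_dvd_of_lt hdvd h1)
  have h0 : ∀ γ ∈ s, w γ ≠ 0 := by
    intro γ hγ
    have h1 : v (w γ) = γ.1 := by
      rw [hwdef]
      simp only
      rw [Valuation.map_mul, hvone γ hγ, one_mul, hz γ]
    intro h
    rw [h, Valuation.map_zero] at h1
    exact hne0 γ.1 γ.2 h1.symm
  obtain ⟨γ1, h1, γ2, h2, hne12, heqv, -⟩ := exists_two_max v s w hsne h0 hsum_s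
  have hv1 : v (w γ1) = γ1.1 := by
    rw [hwdef]; simp only; rw [Valuation.map_mul, hvone γ1 h1, one_mul, hz γ1]
  have hv2 : v (w γ2) = γ2.1 := by
    rw [hwdef]; simp only; rw [Valuation.map_mul, hvone γ2 h2, one_mul, hz γ2]
  apply hne12
  apply Subtype.ext
  rw [← hv1, ← hv2, heqv]


/-- `j` attains the maximum of `l ↦ ε l * η ^ l` over `J`. -/
def IsMaxAt (J : Finset ℕ) (ε : ℕ → Γ₀) (η : Γ₀) (j : ℕ) : Prop :=
  j ∈ J ∧ ∀ l ∈ J, ε l * η ^ l ≤ ε j * η ^ j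

/-- the maximum is attained at two distinct indices -/
def Adm (J : Finset ℕ) (ε : ℕ → Γ₀) (η : Γ₀) : Prop :=
  ∃ i j, i ≠ j ∧ IsMaxAt J ε η i ∧ IsMaxAt J ε η j

/-- Newton-envelope counting: the set of `η ∈ (0,1)` at which the maximum is attained
twice has cardinality less than the number of values of `ε` on `J`. -/
lemma envelope (J : Finset ℕ) (ε : ℕ → Γ₀) (hJ : ∀ j ∈ J, ε j ≠ 0)
    (D : Finset Γ₀) (hD : ∀ η ∈ D, η ≠ 0 ∧ η < 1 ∧ Adm J ε η) (hne : D.Nonempty) :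
    D.card + 1 ≤ (J.image ε).card := by
  classical
  -- the argmax set
  set A : Γ₀ → Finset ℕ := fun η => J.filter (fun l => ∀ l' ∈ J, ε l' * η ^ l' ≤ ε l * η ^ l)
    with hA
  have hAmem : ∀ {η j}, j ∈ A η ↔ IsMaxAt J ε η j := by
    intro η j
    simp [hA, IsMaxAt, Finset.mem_filter]
  have hA2 : ∀ η ∈ D, ∃ x ∈ A η, ∃ y ∈ A η, x ≠ y := by
    intro η hη
    obtain ⟨-, -, i, j, hij, hi, hj⟩ := hD η hη
    exact ⟨i, hAmem.2 hi, j, hAmem.2 hj, hij⟩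
  have hAne : ∀ η ∈ D, (A η).Nonempty := by
    intro η hη
    obtain ⟨x, hx, -⟩ := hA2 η hη
    exact ⟨x, hx⟩
  set jm : Γ₀ → ℕ := fun η => if h : (A η).Nonempty then (A η).max' h else 0 with hjm
  have hjm_mem : ∀ η ∈ D, jm η ∈ A η := by
    intro η hη
    rw [hjm]; simp only [dif_pos (hAne η hη)]
    exact (A η).max'_mem _
  have hjm_max : ∀ η ∈ D, ∀ l ∈ A η, l ≤ jm η := by
    intro η hη l hl
    rw [hjm]; simp only [dif_pos (hAne η hη)]
    exact (A η).le_max' l hl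
  have hApne : ∀ η ∈ D, ((A η).erase (jm η)).Nonempty := by
    intro η hη
    obtain ⟨x, hx, y, hy, hxy⟩ := hA2 η hη
    rcases eq_or_ne x (jm η) with rfl | hxne
    · exact ⟨y, Finset.mem_erase.2 ⟨fun h => hxy h.symm, hy⟩⟩
    · exact ⟨x, Finset.mem_erase.2 ⟨hxne, hx⟩⟩
  set pm : Γ₀ → ℕ := fun η => if h : ((A η).erase (jm η)).Nonempty then ((A η).erase (jm η)).max' h else 0
    with hpm
  have hpm_mem : ∀ η ∈ D, pm η ∈ A η ∧ pm η ≠ jm η := by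
    intro η hη
    rw [hpm]; simp only [dif_pos (hApne η hη)]
    have := ((A η).erase (jm η)).max'_mem (hApne η hη)
    rw [Finset.mem_erase] at this
    exact ⟨this.2, this.1⟩
  have hpm_lt : ∀ η ∈ D, pm η < jm η := by
    intro η hη
    exact lt_of_le_of_ne (hjm_max η hη _ (hpm_mem η hη).1) (hpm_mem η hη).2
  -- basic facts
  have hmaxat : ∀ η ∈ D, ∀ j ∈ A η, ∀ l ∈ J, ε l * η ^ l ≤ ε j * η ^ j := by
    intro η hη j hj l hl
    exact ((hAmem.1 hj).2) l hl
  have hAJ : ∀ η ∈ D, ∀ j ∈ A η, j ∈ J := fun η hη j hj => (hAmem.1 hj).1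
  have hη0 : ∀ η ∈ D, η ≠ 0 := fun η hη => (hD η hη).1
  have hη1 : ∀ η ∈ D, η < 1 := fun η hη => (hD η hη).2.1
  -- tie equality between any two argmax elements
  have htie : ∀ η ∈ D, ∀ i ∈ A η, ∀ j ∈ A η, ε i * η ^ i = ε j * η ^ j := by
    intro η hη i hi j hj
    exact le_antisymm (hmaxat η hη j hj i (hAJ η hη i hi)) (hmaxat η hη i hi j (hAJ η hη j hj))
  -- F2 : partner value strictly below
  have hF2 : ∀ η ∈ D, ε (pm η) < ε (jm η) := by
    intro η hη
    have hi := (hpm_mem η hη).1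
    have hjmm := hjm_mem η hη
    have hlt := hpm_lt η hη
    have htie' := htie η hη (pm η) hi (jm η) hjmm
    -- η^(jm) = η^(pm) * η^(jm - pm)
    have hpow : η ^ (jm η) = η ^ (pm η) * η ^ (jm η - pm η) := by
      rw [← pow_add]
      congr 1
      omega
    rw [hpow, ← mul_assoc] at htie'
    -- cancel η ^ pm η
    have hcan : ε (pm η) = ε (jm η) * η ^ (jm η - pm η) := by
      have h2 : ε (pm η) * η ^ (pm η) = (ε (jm η) * η ^ (jm η - pm η)) * η ^ (pm η) := by
        rw [htie']; ac_rfl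
      exact mul_right_cancel₀ (pow_ne_zero _ (hη0 η hη)) h2
    rw [hcan]
    have hp1 : η ^ (jm η - pm η) < 1 := pow_lt_one₀ zero_le' (hη1 η hη) (by omega)
    calc ε (jm η) * η ^ (jm η - pm η) < ε (jm η) * 1 :=
          mul_lt_mul_of_pos_left hp1 (zero_lt_iff.2 (hJ _ (hAJ η hη _ hjmm)))
      _ = ε (jm η) := mul_one _
  -- F3a : monotonicity of jm
  have hF3a : ∀ η₁ ∈ D, ∀ η₂ ∈ D, η₁ < η₂ → jm η₁ ≤ jm η₂ := by
    intro η₁ hη₁ η₂ hη₂ hlt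
    by_contra hgt
    push_neg at hgt -- jm η₂ < jm η₁
    set j₁ := jm η₁; set j₂ := jm η₂
    have h1 : ε j₂ * η₁ ^ j₂ ≤ ε j₁ * η₁ ^ j₁ :=
      hmaxat η₁ hη₁ j₁ (hjm_mem η₁ hη₁) j₂ (hAJ η₂ hη₂ j₂ (hjm_mem η₂ hη₂))
    have h2 : ε j₁ * η₂ ^ j₁ ≤ ε j₂ * η₂ ^ j₂ :=
      hmaxat η₂ hη₂ j₂ (hjm_mem η₂ hη₂) j₁ (hAJ η₁ hη₁ j₁ (hjm_mem η₁ hη₁))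
    have h3 := mul_le_mul' h1 h2
    -- rearrange
    have h4 : (ε j₁ * ε j₂) * (η₁ ^ j₂ * η₂ ^ j₁) ≤ (ε j₁ * ε j₂) * (η₁ ^ j₁ * η₂ ^ j₂) := by
      calc (ε j₁ * ε j₂) * (η₁ ^ j₂ * η₂ ^ j₁) = (ε j₂ * η₁ ^ j₂) * (ε j₁ * η₂ ^ j₁) := by ac_rfl
        _ ≤ (ε j₁ * η₁ ^ j₁) * (ε j₂ * η₂ ^ j₂) := h3
        _ = (ε j₁ * ε j₂) * (η₁ ^ j₁ * η₂ ^ j₂) := by ac_rfl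
    have hee : (ε j₁ * ε j₂) ≠ 0 :=
      mul_ne_zero (hJ _ (hAJ η₁ hη₁ j₁ (hjm_mem η₁ hη₁))) (hJ _ (hAJ η₂ hη₂ j₂ (hjm_mem η₂ hη₂)))
    have h5 : η₁ ^ j₂ * η₂ ^ j₁ ≤ η₁ ^ j₁ * η₂ ^ j₂ := by
      refine le_of_mul_le_mul_right₀ hee ?_
      calc (η₁ ^ j₂ * η₂ ^ j₁) * (ε j₁ * ε j₂) = (ε j₁ * ε j₂) * (η₁ ^ j₂ * η₂ ^ j₁) := by ac_rfl
        _ ≤ (ε j₁ * ε j₂) * (η₁ ^ j₁ * η₂ ^ j₂) := h4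
        _ = (η₁ ^ j₁ * η₂ ^ j₂) * (ε j₁ * ε j₂) := by ac_rfl
    -- write j₁ = j₂ + s
    have hs : j₁ = j₂ + (j₁ - j₂) := by omega
    rw [hs, pow_add, pow_add] at h5
    -- h5 : η₁^j₂ * (η₂^j₂ * η₂^s) ≤ η₁^j₂ * η₁^s * η₂^j₂
    have h6 : η₂ ^ (j₁ - j₂) * (η₁ ^ j₂ * η₂ ^ j₂) ≤ η₁ ^ (j₁ - j₂) * (η₁ ^ j₂ * η₂ ^ j₂) := by
      calc η₂ ^ (j₁ - j₂) * (η₁ ^ j₂ * η₂ ^ j₂) = η₁ ^ j₂ * (η₂ ^ j₂ * η₂ ^ (j₁ - j₂)) := by ac_rfl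
        _ ≤ η₁ ^ j₂ * η₁ ^ (j₁ - j₂) * η₂ ^ j₂ := h5
        _ = η₁ ^ (j₁ - j₂) * (η₁ ^ j₂ * η₂ ^ j₂) := by ac_rfl
    have h7 : η₂ ^ (j₁ - j₂) ≤ η₁ ^ (j₁ - j₂) :=
      le_of_mul_le_mul_right₀ (mul_ne_zero (pow_ne_zero _ (hη0 η₁ hη₁)) (pow_ne_zero _ (hη0 η₂ hη₂))) h6
    have h8 : η₁ ^ (j₁ - j₂) < η₂ ^ (j₁ - j₂) := pow_lt_pow_left₀ hlt zero_le' (by omega)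
    exact absurd (h7.trans_lt h8) (lt_irrefl _)
  -- F3b : injectivity of jm
  have hF3b : ∀ η₁ ∈ D, ∀ η₂ ∈ D, η₁ < η₂ → jm η₁ ≠ jm η₂ := by
    intro η₁ hη₁ η₂ hη₂ hlt heqj
    set j := jm η₂
    set i := pm η₂
    have hij : i < j := hpm_lt η₂ hη₂
    have htie2 : ε i * η₂ ^ i = ε j * η₂ ^ j := htie η₂ hη₂ i (hpm_mem η₂ hη₂).1 j (hjm_mem η₂ hη₂)
    -- ε i = ε j * η₂ ^ (j - i)
    have hpow2 : η₂ ^ j = η₂ ^ i * η₂ ^ (j - i) := by rw [← pow_add]; congr 1; omega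
    have hei : ε i = ε j * η₂ ^ (j - i) := by
      refine mul_right_cancel₀ (pow_ne_zero i (hη0 η₂ hη₂)) ?_
      rw [htie2, hpow2]; ac_rfl
    -- max at η₁ for i
    have hmax1 : ε i * η₁ ^ i ≤ ε (jm η₁) * η₁ ^ (jm η₁) :=
      hmaxat η₁ hη₁ (jm η₁) (hjm_mem η₁ hη₁) i (hAJ η₂ hη₂ i (hpm_mem η₂ hη₂).1)
    rw [heqj] at hmax1
    -- substitute
    have hpow1 : η₁ ^ j = η₁ ^ i * η₁ ^ (j - i) := by rw [← pow_add]; congr 1; omega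
    rw [hei, hpow1] at hmax1
    -- hmax1 : ε j * η₂^(j-i) * η₁^i ≤ ε j * (η₁^i * η₁^(j-i))
    have h6 : η₂ ^ (j - i) * (ε j * η₁ ^ i) ≤ η₁ ^ (j - i) * (ε j * η₁ ^ i) := by
      calc η₂ ^ (j - i) * (ε j * η₁ ^ i) = ε j * η₂ ^ (j - i) * η₁ ^ i := by ac_rfl
        _ ≤ ε j * (η₁ ^ i * η₁ ^ (j - i)) := hmax1
        _ = η₁ ^ (j - i) * (ε j * η₁ ^ i) := by ac_rfl
    have h7 : η₂ ^ (j - i) ≤ η₁ ^ (j - i) :=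
      le_of_mul_le_mul_right₀
        (mul_ne_zero (hJ _ (hAJ η₂ hη₂ j (hjm_mem η₂ hη₂))) (pow_ne_zero _ (hη0 η₁ hη₁))) h6
    have h8 : η₁ ^ (j - i) < η₂ ^ (j - i) := pow_lt_pow_left₀ hlt zero_le' (by omega)
    exact absurd (h7.trans_lt h8) (lt_irrefl _)
  -- F4 : strict monotonicity of the level
  have hF4 : ∀ η₁ ∈ D, ∀ η₂ ∈ D, η₁ < η₂ → ε (jm η₁) < ε (jm η₂) := by
    intro η₁ hη₁ η₂ hη₂ hlt
    have hj12 : jm η₁ < jm η₂ :=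
      lt_of_le_of_ne (hF3a η₁ hη₁ η₂ hη₂ hlt) (hF3b η₁ hη₁ η₂ hη₂ hlt)
    set j₁ := jm η₁; set j₂ := jm η₂
    have hmax2 : ε j₁ * η₂ ^ j₁ ≤ ε j₂ * η₂ ^ j₂ :=
      hmaxat η₂ hη₂ j₂ (hjm_mem η₂ hη₂) j₁ (hAJ η₁ hη₁ j₁ (hjm_mem η₁ hη₁))
    have hpow : η₂ ^ j₂ = η₂ ^ j₁ * η₂ ^ (j₂ - j₁) := by rw [← pow_add]; congr 1; omega
    rw [hpow] at hmax2
    have h5 : ε j₁ ≤ ε j₂ * η₂ ^ (j₂ - j₁) := by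
      refine le_of_mul_le_mul_right₀ (pow_ne_zero j₁ (hη0 η₂ hη₂)) ?_
      calc ε j₁ * η₂ ^ j₁ ≤ ε j₂ * (η₂ ^ j₁ * η₂ ^ (j₂ - j₁)) := hmax2
        _ = (ε j₂ * η₂ ^ (j₂ - j₁)) * η₂ ^ j₁ := by ac_rfl
    have h6 : ε j₂ * η₂ ^ (j₂ - j₁) < ε j₂ := by
      have := mul_lt_mul_of_pos_left
        (pow_lt_one₀ zero_le' (hη1 η₂ hη₂) (by omega : j₂ - j₁ ≠ 0)) (zero_lt_iff.2 (hJ _ (hAJ η₂ hη₂ j₂ (hjm_mem η₂ hη₂))))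
      simpa using this
    exact h5.trans_lt h6
  -- assemble
  set φ : Γ₀ → Γ₀ := fun η => ε (jm η) with hφ
  have hinj : Set.InjOn φ D := by
    intro η₁ h₁ η₂ h₂ he
    by_contra hne'
    rcases lt_or_gt_of_ne hne' with h | h
    · exact absurd he (ne_of_lt (hF4 η₁ h₁ η₂ h₂ h))
    · exact absurd he.symm (ne_of_lt (hF4 η₂ h₂ η₁ h₁ h))
  set ηmin := D.min' hne with hηmin
  have hηminD : ηmin ∈ D := D.min'_mem hne
  set ℓ₀ := ε (pm ηmin) with hℓ₀
  have hℓ₀mem : ℓ₀ ∈ J.image ε :=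
    Finset.mem_image.2 ⟨pm ηmin, hAJ ηmin hηminD _ (hpm_mem ηmin hηminD).1, rfl⟩
  have hℓ₀lt : ∀ η ∈ D, ℓ₀ < φ η := by
    intro η hη
    rcases eq_or_ne η ηmin with h | hne'
    · subst h
      exact hF2 _ hη
    · have : ηmin < η := lt_of_le_of_ne (D.min'_le η hη) (Ne.symm hne')
      exact (hF2 ηmin hηminD).trans (hF4 ηmin hηminD η hη this)
  have hsub : D.image φ ⊆ (J.image ε).erase ℓ₀ := by
    intro x hx
    obtain ⟨η, hη, rfl⟩ := Finset.mem_image.1 hx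
    refine Finset.mem_erase.2 ⟨(hℓ₀lt η hη).ne', ?_⟩
    exact Finset.mem_image.2 ⟨jm η, hAJ η hη _ (hjm_mem η hη), rfl⟩
  have hcard1 : D.card = (D.image φ).card := (Finset.card_image_of_injOn hinj).symm
  have hcard2 : (D.image φ).card ≤ (J.image ε).card - 1 := by
    have := Finset.card_le_card hsub
    rwa [Finset.card_erase_of_mem hℓ₀mem] at this
  have hpos : 1 ≤ (J.image ε).card := Finset.card_pos.2 ⟨ℓ₀, hℓ₀mem⟩
  omega


lemma isUnit_iff_val_eq_one (v : Valuation K Γ₀) (x : v.valuationSubring) :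
    IsUnit x ↔ v (x : K) = 1 := by
  constructor
  · rintro ⟨u, rfl⟩
    have h1 : ((u * u⁻¹ : v.valuationSubringˣ) : v.valuationSubring) = 1 := by
      rw [mul_inv_cancel]
      rfl
    have h2 : v ((u : v.valuationSubring) : K) * v (((u⁻¹ : v.valuationSubringˣ) : v.valuationSubring) : K) = 1 := by
      rw [← Valuation.map_mul]
      norm_cast
      rw [h1]
      simp
    have hu : v ((u : v.valuationSubring) : K) ≤ 1 := (u : v.valuationSubring).2
    have hv : v (((u⁻¹ : v.valuationSubringˣ) : v.valuationSubring) : K) ≤ 1 :=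
      ((u⁻¹ : v.valuationSubringˣ) : v.valuationSubring).2
    by_contra hne
    have hlt : v ((u : v.valuationSubring) : K) < 1 := lt_of_le_of_ne hu hne
    have : v ((u : v.valuationSubring) : K) * v (((u⁻¹ : v.valuationSubringˣ) : v.valuationSubring) : K) < 1 := by
      calc v ((u : v.valuationSubring) : K) * v (((u⁻¹ : v.valuationSubringˣ) : v.valuationSubring) : K)
          ≤ v ((u : v.valuationSubring) : K) * 1 := mul_le_mul_right hv _
        _ = v ((u : v.valuationSubring) : K) := mul_one _
        _ < 1 := hlt
    rw [h2] at this
    exact absurd this (lt_irrefl _)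
  · intro hx
    have hx0 : (x : K) ≠ 0 := by
      intro h
      rw [h, Valuation.map_zero] at hx
      exact zero_ne_one hx
    have hinv : v ((x : K)⁻¹) ≤ 1 := by
      rw [map_inv₀, hx]
      norm_num
    refine IsUnit.of_mul_eq_one (a := x) ⟨(x : K)⁻¹, hinv⟩ ?_
    ext
    simp [mul_inv_cancel₀ hx0]


/-- Residue of an element of `K` (defaulting to `0` off the valuation ring). -/
noncomputable def resOf (v : Valuation K Γ₀) (x : K) : IsLocalRing.ResidueField v.valuationSubring :=
  if h : v x ≤ 1 then IsLocalRing.residue v.valuationSubring ⟨x, h⟩ else 0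

lemma resOf_eq_zero_iff (v : Valuation K Γ₀) {x : K} (hx : v x ≤ 1) : resOf v x = 0 ↔ v x < 1 := by
  rw [resOf, dif_pos hx]
  have : (IsLocalRing.residue v.valuationSubring ⟨x, hx⟩ = 0) ↔
      (⟨x, hx⟩ : v.valuationSubring) ∈ IsLocalRing.maximalIdeal v.valuationSubring := by
    exact Ideal.Quotient.eq_zero_iff_mem
  rw [this, IsLocalRing.mem_maximalIdeal, mem_nonunits_iff, isUnit_iff_val_eq_one]
  simp only
  constructor
  · intro h; exact lt_of_le_of_ne hx h
  · intro h; exact ne_of_lt h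

lemma resOf_sub (v : Valuation K Γ₀) (x y : K) (hx : v x ≤ 1) (hy : v y ≤ 1) :
    resOf v x - resOf v y = resOf v (x - y) := by
  have hxy : v (x - y) ≤ 1 := v.map_sub_le hx hy
  rw [resOf, resOf, resOf, dif_pos hx, dif_pos hy, dif_pos hxy]
  rw [← map_sub]
  rfl

lemma resOf_eq_iff (v : Valuation K Γ₀) {x y : K} (hx : v x ≤ 1) (hy : v y ≤ 1) :
    resOf v x = resOf v y ↔ v (x - y) < 1 := by
  have hxy : v (x - y) ≤ 1 := v.map_sub_le hx hy
  rw [← resOf_eq_zero_iff v hxy, ← resOf_sub v x y hx hy, sub_eq_zero]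

lemma resOf_ne_zero (v : Valuation K Γ₀) {x : K} (hx : v x = 1) : resOf v x ≠ 0 := by
  intro h
  rw [resOf_eq_zero_iff v hx.le, hx] at h
  exact absurd h (lt_irrefl _)


lemma div_lt_one_iff₀' {a b : Γ₀} (hb : b ≠ 0) : a / b < 1 ↔ a < b := by
  rw [div_eq_mul_inv]
  constructor
  · intro h
    have := mul_lt_mul_right₀' hb h
    rwa [mul_assoc, inv_mul_cancel₀ hb, mul_one, one_mul] at this
  · intro h
    have := mul_lt_mul_right₀' (inv_ne_zero hb) h
    rwa [mul_inv_cancel₀ hb] at this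

lemma div_le_one_iff₀' {a b : Γ₀} (hb : b ≠ 0) : a / b ≤ 1 ↔ a ≤ b := by
  rw [div_eq_mul_inv]
  constructor
  · intro h
    have := mul_le_mul_left h b
    rwa [mul_assoc, inv_mul_cancel₀ hb, mul_one, one_mul] at this
  · intro h
    have := mul_le_mul_left h b⁻¹
    rwa [mul_inv_cancel₀ hb] at this

lemma resOf_zero (v : Valuation K Γ₀) : resOf v 0 = 0 := by
  rw [resOf, dif_pos (by simp : v (0 : K) ≤ 1)]
  have : (⟨(0 : K), by simp⟩ : v.valuationSubring) = 0 := rfl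
  rw [this, map_zero]

lemma tree_inner (v : Valuation K Γ₀) {q : ℕ} (hq : Nat.card (IsLocalRing.ResidueField v.valuationSubring) = q)
    (hq0 : 0 < q) {g : Γ₀} (hg : g ≠ 0) :
    ∀ (r : ℕ) (S : Finset K), (∀ x ∈ S, v x = g) →
      (∀ x ∈ S, ∀ y ∈ S, x ≠ y → v (x - y) < g) →
      (∀ x ∈ S, ((S.erase x).image (fun y => v (x - y))).card ≤ r) →
      S.card ≤ q ^ r := by
  classical
  have hfin : Finite (IsLocalRing.ResidueField v.valuationSubring) :=
    (Nat.card_pos_iff.mp (hq ▸ hq0)).2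
  letI : Fintype (IsLocalRing.ResidueField v.valuationSubring) := Fintype.ofFinite _
  have hcardq : Fintype.card (IsLocalRing.ResidueField v.valuationSubring) = q := by
    rw [← Nat.card_eq_fintype_card, hq]
  intro r
  induction r with
  | zero =>
    intro S h1 h2 h3
    by_contra hcon
    push_neg at hcon
    rw [pow_zero] at hcon
    obtain ⟨x, hx, y, hy, hxy⟩ := Finset.one_lt_card.mp hcon
    have : v (x - y) ∈ (S.erase x).image (fun y => v (x - y)) :=
      mem_image_of_mem _ (Finset.mem_erase.2 ⟨Ne.symm hxy, hy⟩)
    have hc := h3 x hx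
    rw [Nat.le_zero, Finset.card_eq_zero] at hc
    rw [hc] at this
    exact absurd this (Finset.notMem_empty _)
  | succ r ih =>
    intro S h1 h2 h3
    by_cases hS1 : S.card ≤ 1
    · exact hS1.trans (Nat.one_le_pow _ _ hq0)
    push_neg at hS1
    obtain ⟨x₀, hx₀, y₀, hy₀, hxy₀⟩ := Finset.one_lt_card.mp hS1
    set P := ((S ×ˢ S).filter (fun z => z.1 ≠ z.2)).image (fun z => v (z.1 - z.2)) with hP
    have hPne : P.Nonempty := ⟨v (x₀ - y₀),
      mem_image.2 ⟨(x₀, y₀), by simp [Finset.mem_filter, Finset.mem_product, hx₀, hy₀, hxy₀], rfl⟩⟩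
    set δ := P.max' hPne with hδ
    obtain ⟨⟨aa, bb⟩, habmem, habδ⟩ := mem_image.1 (P.max'_mem hPne)
    rw [← hδ] at habδ
    rw [Finset.mem_filter, Finset.mem_product] at habmem
    obtain ⟨⟨haa, hbb⟩, hab⟩ := habmem
    have hab' : aa ≠ bb := hab
    have hδ0 : δ ≠ 0 := by
      rw [← habδ]
      simp [sub_eq_zero, Valuation.ne_zero_iff]
      exact hab'
    have hδg : δ < g := by
      rw [← habδ]
      exact h2 aa haa bb hbb hab'
    have hle : ∀ x ∈ S, ∀ y ∈ S, x ≠ y → v (x - y) ≤ δ := by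
      intro x hx y hy hxy
      exact P.le_max' _ (mem_image.2 ⟨(x, y), by simp [Finset.mem_filter, Finset.mem_product, hx, hy, hxy], rfl⟩)
    set d₀ := aa - bb with hd₀def
    have hd₀ : v d₀ = δ := habδ
    set cf : K → IsLocalRing.ResidueField v.valuationSubring :=
      fun x => resOf v ((x - aa) / d₀) with hcf
    have hcf_le : ∀ x ∈ S, v ((x - aa) / d₀) ≤ 1 := by
      intro x hx
      rcases eq_or_ne x aa with rfl | hne
      · simp
      · rw [map_div₀, hd₀, div_le_one_iff₀' hδ0]
        exact hle x hx aa haa hne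
    have key1 : ∀ x ∈ S, ∀ y ∈ S, (cf x = cf y ↔ v (x - y) < δ) := by
      intro x hx y hy
      simp only [hcf]
      rw [resOf_eq_iff v (hcf_le x hx) (hcf_le y hy)]
      have hrw : (x - aa) / d₀ - (y - aa) / d₀ = (x - y) / d₀ := by ring
      rw [hrw, map_div₀, hd₀, div_lt_one_iff₀' hδ0]
    -- two elements in different fibers
    have hcfaabb : cf aa ≠ cf bb := by
      simp only [hcf]
      have h1' : (aa - aa) / d₀ = 0 := by simp
      have hab0 : aa - bb ≠ 0 := sub_ne_zero.2 hab'
      have h2' : (bb - aa) / d₀ = -1 := by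
        rw [hd₀def, div_eq_iff hab0]
        ring
      rw [h1', h2', resOf_zero]
      intro h
      refine resOf_ne_zero v (x := (-1 : K)) (by simp) ?_
      exact h.symm
    -- fiberwise count
    have hmapsto : ∀ x ∈ S, cf x ∈ S.image cf := fun x hx => mem_image_of_mem _ hx
    have hcardsum : S.card = ∑ b ∈ S.image cf, (S.filter fun x => cf x = b).card :=
      Finset.card_eq_sum_card_fiberwise hmapsto
    have himg : (S.image cf).card ≤ q := by
      calc (S.image cf).card ≤ Fintype.card (IsLocalRing.ResidueField v.valuationSubring) :=
            Finset.card_le_univ _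
        _ = q := hcardq
    have hfiber : ∀ b ∈ S.image cf, (S.filter fun x => cf x = b).card ≤ q ^ r := by
      intro b hb
      set T := S.filter (fun x => cf x = b) with hT
      have hTsub : T ⊆ S := Finset.filter_subset _ _
      refine ih T (fun x hx => h1 x (hTsub hx)) (fun x hx y hy hxy => h2 x (hTsub hx) y (hTsub hy) hxy) ?_
      intro x hx
      have hxS : x ∈ S := hTsub hx
      have hxb : cf x = b := (Finset.mem_filter.1 hx).2
      -- there is an element of S at distance exactly δ from x
      have hexists : ∃ y ∈ S, y ≠ x ∧ v (x - y) = δ := by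
        by_cases hax : cf aa = cf x
        · have hne : x ≠ bb := by
            intro h
            apply hcfaabb
            rw [hax, h]
          refine ⟨bb, hbb, Ne.symm hne, ?_⟩
          refine le_antisymm (hle x hxS bb hbb hne) ?_
          rcases lt_or_ge (v (x - bb)) δ with hlt | hge
          · exact absurd (hax.trans ((key1 x hxS bb hbb).2 hlt)) hcfaabb
          · exact hge
        · have hne : x ≠ aa := by
            intro h
            apply hax
            rw [h]
          refine ⟨aa, haa, Ne.symm hne, ?_⟩
          refine le_antisymm (hle x hxS aa haa hne) ?_
          rcases lt_or_ge (v (x - aa)) δ with hlt | hge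
          · exact absurd ((key1 x hxS aa haa).2 hlt).symm hax
          · exact hge
      obtain ⟨y, hyS, hyx, hvy⟩ := hexists
      have hδmem : δ ∈ (S.erase x).image (fun y => v (x - y)) :=
        mem_image.2 ⟨y, Finset.mem_erase.2 ⟨hyx, hyS⟩, hvy⟩
      have hsub : (T.erase x).image (fun y => v (x - y)) ⊆
          ((S.erase x).image (fun y => v (x - y))).erase δ := by
        intro w hw
        obtain ⟨z, hz, rfl⟩ := mem_image.1 hw
        have hzT := Finset.mem_erase.1 hz
        have hzS : z ∈ S := hTsub hzT.2
        refine Finset.mem_erase.2 ⟨?_, mem_image.2 ⟨z, Finset.mem_erase.2 ⟨hzT.1, hzS⟩, rfl⟩⟩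
        have : v (x - z) < δ := by
          refine (key1 x hxS z hzS).1 ?_
          rw [hxb, (Finset.mem_filter.1 hzT.2).2]
        exact ne_of_lt this
      calc ((T.erase x).image (fun y => v (x - y))).card
          ≤ (((S.erase x).image (fun y => v (x - y))).erase δ).card := Finset.card_le_card hsub
        _ = ((S.erase x).image (fun y => v (x - y))).card - 1 := Finset.card_erase_of_mem hδmem
        _ ≤ (r + 1) - 1 := by
            have := h3 x hxS
            omega
        _ = r := rfl
    calc S.card = ∑ b ∈ S.image cf, (S.filter fun x => cf x = b).card := hcardsum
      _ ≤ (S.image cf).card * q ^ r := by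
          have := Finset.sum_le_card_nsmul (S.image cf) _ (q ^ r) hfiber
          simpa [smul_eq_mul] using this
      _ ≤ q * q ^ r := Nat.mul_le_mul_right _ himg
      _ = q ^ (r + 1) := by rw [pow_succ]; ring

lemma tree_top (v : Valuation K Γ₀) {q : ℕ} (hq : Nat.card (IsLocalRing.ResidueField v.valuationSubring) = q)
    (hq0 : 0 < q) {g : Γ₀} (hg : g ≠ 0) (r : ℕ) (S : Finset K)
    (h1 : ∀ x ∈ S, v x = g)
    (h3 : ∀ x ∈ S, (((S.erase x).image (fun y => v (x - y))).filter (fun w => w < g)).card ≤ r) :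
    S.card ≤ (q - 1) * q ^ r := by
  classical
  have hfin : Finite (IsLocalRing.ResidueField v.valuationSubring) :=
    (Nat.card_pos_iff.mp (hq ▸ hq0)).2
  letI : Fintype (IsLocalRing.ResidueField v.valuationSubring) := Fintype.ofFinite _
  have hcardq : Fintype.card (IsLocalRing.ResidueField v.valuationSubring) = q := by
    rw [← Nat.card_eq_fintype_card, hq]
  rcases Finset.eq_empty_or_nonempty S with rfl | ⟨x₀, hx₀⟩
  · simp
  set cf : K → IsLocalRing.ResidueField v.valuationSubring :=
    fun x => resOf v (x / x₀) with hcf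
  have hg0 : v x₀ = g := h1 x₀ hx₀
  have hx₀0 : x₀ ≠ 0 := by
    intro h
    rw [h, Valuation.map_zero] at hg0
    exact hg (hg0.symm)
  have hcf_le : ∀ x ∈ S, v (x / x₀) ≤ 1 := by
    intro x hx
    rw [map_div₀, hg0, h1 x hx, div_le_one_iff₀' hg]
  have hcf_eq : ∀ x ∈ S, v (x / x₀) = 1 := by
    intro x hx
    rw [map_div₀, hg0, h1 x hx, div_self hg]
  have key1 : ∀ x ∈ S, ∀ y ∈ S, (cf x = cf y ↔ v (x - y) < g) := by
    intro x hx y hy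
    simp only [hcf]
    rw [resOf_eq_iff v (hcf_le x hx) (hcf_le y hy)]
    have hrw : x / x₀ - y / x₀ = (x - y) / x₀ := by ring
    rw [hrw, map_div₀, hg0, div_lt_one_iff₀' hg]
  have hcf0 : ∀ x ∈ S, cf x ≠ 0 := by
    intro x hx
    exact resOf_ne_zero v (hcf_eq x hx)
  have hmapsto : ∀ x ∈ S, cf x ∈ S.image cf := fun x hx => mem_image_of_mem _ hx
  have hcardsum : S.card = ∑ b ∈ S.image cf, (S.filter fun x => cf x = b).card :=
    Finset.card_eq_sum_card_fiberwise hmapsto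
  have himg : (S.image cf).card ≤ q - 1 := by
    have hsub : S.image cf ⊆ Finset.univ.erase 0 := by
      intro b hb
      obtain ⟨x, hx, rfl⟩ := mem_image.1 hb
      exact Finset.mem_erase.2 ⟨hcf0 x hx, Finset.mem_univ _⟩
    calc (S.image cf).card ≤ (Finset.univ.erase (0 : IsLocalRing.ResidueField v.valuationSubring)).card :=
          Finset.card_le_card hsub
      _ = Fintype.card (IsLocalRing.ResidueField v.valuationSubring) - 1 := by
          rw [Finset.card_erase_of_mem (Finset.mem_univ _), Finset.card_univ]
      _ = q - 1 := by rw [hcardq]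
  have hfiber : ∀ b ∈ S.image cf, (S.filter fun x => cf x = b).card ≤ q ^ r := by
    intro b hb
    set T := S.filter (fun x => cf x = b) with hT
    have hTsub : T ⊆ S := Finset.filter_subset _ _
    refine tree_inner v hq hq0 hg r T (fun x hx => h1 x (hTsub hx)) ?_ ?_
    · intro x hx y hy hxy
      refine (key1 x (hTsub hx) y (hTsub hy)).1 ?_
      rw [(Finset.mem_filter.1 hx).2, (Finset.mem_filter.1 hy).2]
    · intro x hx
      have hxS : x ∈ S := hTsub hx
      have hsub2 : (T.erase x).image (fun y => v (x - y)) ⊆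
          (((S.erase x).image (fun y => v (x - y))).filter (fun w => w < g)) := by
        intro w hw
        obtain ⟨z, hz, rfl⟩ := mem_image.1 hw
        have hzT := Finset.mem_erase.1 hz
        have hzS : z ∈ S := hTsub hzT.2
        refine Finset.mem_filter.2 ⟨mem_image.2 ⟨z, Finset.mem_erase.2 ⟨hzT.1, hzS⟩, rfl⟩, ?_⟩
        refine (key1 x hxS z hzS).1 ?_
        rw [(Finset.mem_filter.1 hx).2, (Finset.mem_filter.1 hzT.2).2]
      calc ((T.erase x).image (fun y => v (x - y))).card
          ≤ (((S.erase x).image (fun y => v (x - y))).filter (fun w => w < g)).card :=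
            Finset.card_le_card hsub2
        _ ≤ r := h3 x hxS
  calc S.card = ∑ b ∈ S.image cf, (S.filter fun x => cf x = b).card := hcardsum
    _ ≤ (S.image cf).card * q ^ r := by
        have := Finset.sum_le_card_nsmul (S.image cf) _ (q ^ r) hfiber
        simpa [smul_eq_mul] using this
    _ ≤ (q - 1) * q ^ r := Nat.mul_le_mul_right _ himg


/-- Per-root bound on the number of sub-sphere distances to other roots. -/
lemma per_root_bound {p : ℕ} [hp : Fact p.Prime] [CharP K p] (v : Valuation K Γ₀)
    {k : ℕ} (hk : 1 ≤ k)
    (a : Fin (k + 1) → K) (ha : ∀ i, a i ≠ 0)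
    (n : Fin (k + 1) → ℕ) (hn : StrictMono n)
    (f : Polynomial K)
    (hf : f = ∑ i, Polynomial.C (a i) * Polynomial.X ^ (n i))
    {g : Γ₀} (hg : g ≠ 0)
    (hf0 : f ≠ 0)
    {x : K} (hx : Polynomial.eval x f = 0) (hvx : v x = g)
    (D : Finset Γ₀)
    (hD : ∀ h ∈ D, h ≠ 0 ∧ h < g ∧ ∃ y : K, y ≠ x ∧ Polynomial.eval y f = 0 ∧ h = v (x - y)) :
    D.card ≤ k - 1 := by
  classical
  have hx0 : x ≠ 0 := by
    intro h; rw [h, Valuation.map_zero] at hvx; exact hg hvx.symm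
  set N := f.natDegree with hN
  set cfn : ℕ → K := fun j => ((Polynomial.taylor x) f).coeff j with hcfn
  set J : Finset ℕ := (Finset.range (N + 1)).filter (fun j => cfn j ≠ 0 ∧ 1 ≤ j) with hJdef
  set ε : ℕ → Γ₀ := fun j => v (cfn j) * g ^ j with hε
  -- coefficient formula
  have hρsum : ∑ i : Fin (k+1), a i * x ^ (n i) = 0 := by
    have := hx
    rw [hf] at this
    simpa [Polynomial.eval_finset_sum] using this
  have hcoeff_formula : ∀ j : ℕ, cfn j * x ^ j
      = ∑ i : Fin (k+1), ((n i).choose j : K) * (a i * x ^ (n i)) := by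
    intro j
    have h1 : cfn j = ∑ i : Fin (k+1), ((n i).choose j : K) * a i * x ^ (n i - j) := by
      rw [hcfn]
      simp only
      rw [Polynomial.taylor_coeff, hf, map_sum, Polynomial.eval_finset_sum]
      refine Finset.sum_congr rfl fun i _ => ?_
      rw [Polynomial.C_mul_X_pow_eq_monomial, Polynomial.hasseDeriv_monomial,
        Polynomial.eval_monomial]
    rw [h1, Finset.sum_mul]
    refine Finset.sum_congr rfl fun i _ => ?_
    rcases le_or_gt j (n i) with hle | hlt
    · have hxp : x ^ (n i - j) * x ^ j = x ^ (n i) := by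
        rw [← pow_add]
        congr 1
        omega
      calc ((n i).choose j : K) * a i * x ^ (n i - j) * x ^ j
          = ((n i).choose j : K) * a i * (x ^ (n i - j) * x ^ j) := by ring
        _ = ((n i).choose j : K) * (a i * x ^ (n i)) := by rw [hxp]; ring
    · rw [Nat.choose_eq_zero_of_lt hlt]
      simp
  -- nonvanishing of ε on J
  have hεne : ∀ j ∈ J, ε j ≠ 0 := by
    intro j hj
    rw [hJdef, Finset.mem_filter] at hj
    rw [hε]
    exact mul_ne_zero (by simpa [Valuation.ne_zero_iff] using hj.2.1) (pow_ne_zero _ hg)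
  -- value set bound
  have hvalcard : (J.image ε).card ≤ k := by
    refine card_le_of_values (p := p) v (fun i : Fin k => a i.succ * x ^ (n i.succ)) _ ?_
    intro γ hγ
    obtain ⟨j, hjJ, rfl⟩ := Finset.mem_image.1 hγ
    refine ⟨hεne j hjJ, ⟨fun i => ((n i.succ).choose j : ℤ) - ((n 0).choose j : ℤ), ?_⟩⟩
    have hcombo : ∑ i : Fin k, ((((n i.succ).choose j : ℤ) - ((n 0).choose j : ℤ) : ℤ) : K)
        * (a i.succ * x ^ (n i.succ)) = cfn j * x ^ j := by
      have expand : ∀ i : Fin (k+1), ((((n i).choose j : ℤ) - ((n 0).choose j : ℤ) : ℤ) : K)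
          * (a i * x ^ (n i))
          = ((n i).choose j : K) * (a i * x ^ (n i)) - ((n 0).choose j : K) * (a i * x ^ (n i)) := by
        intro i
        push_cast
        ring
      have hsum0 : ∑ i : Fin (k+1), ((((n i).choose j : ℤ) - ((n 0).choose j : ℤ) : ℤ) : K)
          * (a i * x ^ (n i)) = cfn j * x ^ j := by
        calc ∑ i : Fin (k+1), ((((n i).choose j : ℤ) - ((n 0).choose j : ℤ) : ℤ) : K) * (a i * x ^ (n i))
            = ∑ i : Fin (k+1), (((n i).choose j : K) * (a i * x ^ (n i))
                - ((n 0).choose j : K) * (a i * x ^ (n i))) := by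
              exact Finset.sum_congr rfl fun i _ => expand i
          _ = (∑ i : Fin (k+1), ((n i).choose j : K) * (a i * x ^ (n i)))
                - ((n 0).choose j : K) * ∑ i : Fin (k+1), (a i * x ^ (n i)) := by
              rw [Finset.sum_sub_distrib, Finset.mul_sum]
          _ = cfn j * x ^ j := by rw [hρsum, hcoeff_formula j]; ring
      rw [← hsum0, Fin.sum_univ_succ]
      simp
    rw [hcombo]
    simp only [hε]
    rw [Valuation.map_mul, Valuation.map_pow, hvx]
  -- each element of D is an admissible slope
  rcases Finset.eq_empty_or_nonempty D with rfl | hDne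
  · simp
  set Dη : Finset Γ₀ := D.image (fun h => h * g⁻¹) with hDη
  have hcardDη : Dη.card = D.card := Finset.card_image_of_injective _ (mul_left_injective₀ (inv_ne_zero hg))
  have hkey : ∀ j : ℕ, ∀ h : Γ₀, ε j * (h * g⁻¹) ^ j = v (cfn j) * h ^ j := by
    intro j h
    show (v (cfn j) * g ^ j) * (h * g⁻¹) ^ j = v (cfn j) * h ^ j
    rw [mul_pow]
    calc v (cfn j) * g ^ j * (h ^ j * (g⁻¹) ^ j)
        = v (cfn j) * h ^ j * (g ^ j * (g⁻¹) ^ j) := by ac_rfl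
      _ = v (cfn j) * h ^ j := by
          rw [← mul_pow, mul_inv_cancel₀ hg, one_pow, mul_one]
  have hJne : J.Nonempty := by
    by_contra hJe
    rw [Finset.not_nonempty_iff_eq_empty] at hJe
    have htay0 : (Polynomial.taylor x) f = 0 := by
      ext m
      rcases Nat.eq_or_lt_of_le (Nat.zero_le m) with h0 | h1
      · rw [← h0]
        rw [Polynomial.taylor_coeff_zero]
        simpa using hx
      · rcases le_or_gt m N with hm | hm
        · have : m ∉ J := by rw [hJe]; exact Finset.notMem_empty m
          rw [hJdef, Finset.mem_filter] at this
          push_neg at this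
          have := this (Finset.mem_range.2 (by omega))
          rcases eq_or_ne (cfn m) 0 with hc | hc
          · simpa [hcfn] using hc
          · exact absurd (by omega : 1 ≤ m) (by simpa [hc] using this)
        · apply Polynomial.coeff_eq_zero_of_natDegree_lt
          rw [Polynomial.natDegree_taylor]
          exact hm
    have : f = 0 := by
      have := Polynomial.taylor_injective x (by rw [htay0, map_zero] : (Polynomial.taylor x) f = (Polynomial.taylor x) 0)
      exact this
    exact hf0 this
  have hadm : ∀ η ∈ Dη, η ≠ 0 ∧ η < 1 ∧ Adm J ε η := by
    intro η hη
    obtain ⟨h, hhD, rfl⟩ := Finset.mem_image.1 hη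
    obtain ⟨hh0, hhg, y, hyx, hyroot, hhv⟩ := hD h hhD
    refine ⟨mul_ne_zero hh0 (inv_ne_zero hg), ?_, ?_⟩
    · have := mul_lt_mul_right₀' (inv_ne_zero hg) hhg
      rwa [mul_inv_cancel₀ hg] at this
    · -- admissibility from the root y
      set d : K := y - x with hd
      have hd0 : d ≠ 0 := sub_ne_zero.2 hyx
      have hvd : v d = h := by rw [hd, ← Valuation.map_sub_swap, ← hhv]
      have hsum0 : ∑ j ∈ J, cfn j * d ^ j = 0 := by
        have hexp : Polynomial.eval y f = ∑ j ∈ Finset.range (N + 1), cfn j * d ^ j := by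
          have h1 : Polynomial.eval y f = Polynomial.eval d ((Polynomial.taylor x) f) := by
            rw [Polynomial.taylor_eval]
            congr 1
            rw [hd]
            ring
          rw [h1, Polynomial.eval_eq_sum_range, Polynomial.natDegree_taylor]
        have hsub : ∑ j ∈ J, cfn j * d ^ j = ∑ j ∈ Finset.range (N + 1), cfn j * d ^ j := by
          refine Finset.sum_subset (Finset.filter_subset _ _) ?_
          intro j hjr hjJ
          rw [hJdef, Finset.mem_filter] at hjJ
          push_neg at hjJ
          rcases eq_or_ne (cfn j) 0 with hc | hc
          · rw [hc, zero_mul]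
          · have hj1 := hjJ hjr hc
            have hj0 : j = 0 := by omega
            rw [hj0]
            have : cfn 0 = 0 := by
              rw [hcfn]
              simpa [Polynomial.taylor_coeff_zero] using hx
            rw [this, zero_mul]
        rw [hsub, ← hexp, hyroot]
      obtain ⟨j₁, hj₁, j₂, hj₂, hjne, hveq, hvmax⟩ :=
        exists_two_max v J (fun j => cfn j * d ^ j) hJne
          (fun j hj => by
            rw [hJdef, Finset.mem_filter] at hj
            exact mul_ne_zero hj.2.1 (pow_ne_zero _ hd0)) hsum0
      have hvterm : ∀ j : ℕ, v (cfn j * d ^ j) = ε j * (h * g⁻¹) ^ j := by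
        intro j
        rw [hkey j h, Valuation.map_mul, Valuation.map_pow, hvd]
      refine ⟨j₂, j₁, Ne.symm hjne, ⟨hj₂, ?_⟩, ⟨hj₁, ?_⟩⟩
      · intro l hl
        rw [← hvterm l, ← hvterm j₂, ← hveq]
        exact hvmax l hl
      · intro l hl
        rw [← hvterm l, ← hvterm j₁]
        exact hvmax l hl
  have := envelope J ε hεne Dη hadm (by
    obtain ⟨h, hh⟩ := hDne
    exact ⟨h * g⁻¹, Finset.mem_image_of_mem _ hh⟩)
  rw [hcardDη] at this
  omega

end SparseAux

theorem zeros_of_fixed_valuation_bound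
    {K : Type*} [Field K] {p : ℕ} [hp : Fact p.Prime] [CharP K p]
    {Γ₀ : Type*} [LinearOrderedCommGroupWithZero Γ₀] (v : Valuation K Γ₀)
    {q : ℕ}
    (hq : Nat.card (IsLocalRing.ResidueField v.valuationSubring) = q)
    (hq0 : 0 < q)
    {k : ℕ} (hk : 1 ≤ k)
    (a : Fin (k + 1) → K) (ha : ∀ i, a i ≠ 0)
    (n : Fin (k + 1) → ℕ) (hn : StrictMono n)
    (f : Polynomial K)
    (hf : f = ∑ i, Polynomial.C (a i) * Polynomial.X ^ (n i))
    (g : Γ₀) (hg : g ≠ 0) :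
    {x : K | Polynomial.eval x f = 0 ∧ v x = g}.ncard ≤ (q - 1) * q ^ (k - 1) := by
  classical
  have hcoeff : f.coeff (n (Fin.last k)) = a (Fin.last k) := by
    rw [hf, Polynomial.finset_sum_coeff]
    rw [Finset.sum_eq_single (Fin.last k)]
    · simp [Polynomial.coeff_C_mul, Polynomial.coeff_X_pow]
    · intro i _ hine
      have hne : n (Fin.last k) ≠ n i := fun h => hine (hn.injective h.symm)
      simp [Polynomial.coeff_C_mul, Polynomial.coeff_X_pow, hne]
    · intro h
      exact absurd (Finset.mem_univ _) h
  have hf0 : f ≠ 0 := by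
    intro h
    apply ha (Fin.last k)
    rw [← hcoeff, h, Polynomial.coeff_zero]
  have hSfin : {x : K | Polynomial.eval x f = 0 ∧ v x = g}.Finite := by
    refine Set.Finite.subset (f.roots.toFinset : Finset K).finite_toSet ?_
    intro x hx
    simp only [Finset.coe_sort_coe, Multiset.mem_toFinset, Finset.mem_coe]
    rw [Polynomial.mem_roots']
    exact ⟨hf0, hx.1⟩
  rw [Set.ncard_eq_toFinset_card _ hSfin]
  set St := hSfin.toFinset with hSt
  have hmem : ∀ x, x ∈ St ↔ (Polynomial.eval x f = 0 ∧ v x = g) := by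
    intro x
    rw [hSt, Set.Finite.mem_toFinset]
    rfl
  refine SparseAux.tree_top v hq hq0 hg (k - 1) St (fun x hx => ((hmem x).1 hx).2) ?_
  intro x hx
  obtain ⟨hxroot, hxv⟩ := (hmem x).1 hx
  refine SparseAux.per_root_bound (p := p) v hk a ha n hn f hf hg hf0 hxroot hxv _ ?_
  intro h hh
  rw [Finset.mem_filter] at hh
  obtain ⟨himg, hlt⟩ := hh
  obtain ⟨y, hy, rfl⟩ := Finset.mem_image.1 himg
  have hyE := Finset.mem_erase.1 hy
  obtain ⟨hyroot, hyv⟩ := (hmem y).1 hyE.2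
  refine ⟨?_, hlt, y, hyE.1, hyroot, rfl⟩
  rw [Valuation.ne_zero_iff, sub_ne_zero]
  exact Ne.symm hyE.1
end

section
/- Let L be a field with a surjective nontrivial valuation w : L* → G onto a linearly ordered abelian group G ≠ {0}, and suppose the residue field of w has exactly q elements. Let x_0 ∈ L, g ∈ G, and let D = { x ∈ L : w(x − x_0) > g } be the open disk of radius g about x_0. Let S ⊆ D be a finite nonempty set, and let m ≥ 1 be an integer such that for every r ∈ D \ S the set { w(α − r) : α ∈ S } has at most m elements. Then S has at most q^{m−1} elements. -/
lemma residue_eq_iff' {L : Type*} [Field L] {Γ₀ : Type*}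
    [LinearOrderedCommGroupWithZero Γ₀] (w : Valuation L Γ₀)
    (a b : w.valuationSubring) :
    IsLocalRing.residue w.valuationSubring a = IsLocalRing.residue w.valuationSubring b ↔
      w ((a : L) - (b : L)) < 1 := by
  have h1 : IsLocalRing.residue w.valuationSubring a = IsLocalRing.residue w.valuationSubring b
      ↔ a - b ∈ IsLocalRing.maximalIdeal w.valuationSubring := Ideal.Quotient.eq
  rw [h1, ValuationSubring.valuation_lt_one_iff]
  have h2 := (Valuation.isEquiv_valuation_valuationSubring w).lt_one_iff_lt_one
    (x := (a : L) - (b : L))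
  push_cast
  rw [← h2]

lemma disk_key {L : Type*} [Field L] {Γ₀ : Type*}
    [LinearOrderedCommGroupWithZero Γ₀] (w : Valuation L Γ₀)
    (hsurj : Function.Surjective w)
    (hnontriv : ∃ γ : Γ₀, γ ≠ 0 ∧ γ ≠ 1)
    (x₀ : L) (g : Γ₀)
    (S : Set L) (hSfin : S.Finite)
    (hSD : S ⊆ {x : L | w (x - x₀) < g})
    {a b : L} (ha : a ∈ S) (hb : b ∈ S) (hab : a ≠ b) :
    ∃ (h : Γ₀) (φ : L → IsLocalRing.ResidueField w.valuationSubring),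
      h ≠ 0 ∧ h < g ∧
      (∀ α ∈ S, ∀ β ∈ S, (φ α = φ β ↔ w (α - β) < h)) ∧
      (∀ a' ∈ S, ∃ r, w (r - a') < h ∧ r ∉ S) ∧
      (∀ a' ∈ S, ∀ r, w (r - a') < h → r ∉ S →
        r ∈ {x : L | w (x - x₀) < g} \ S ∧
        {γ : Γ₀ | ∃ α ∈ S, φ α = φ a' ∧ γ = w (α - r)}.ncard + 1
          ≤ {γ : Γ₀ | ∃ α ∈ S, γ = w (α - r)}.ncard) := by
  classical
  set sf := hSfin.toFinset with hsf
  have hmem : ∀ x : L, x ∈ sf ↔ x ∈ S := fun x => hSfin.mem_toFinset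
  set P : Finset Γ₀ := (sf ×ˢ sf).image (fun p => w (p.1 - p.2)) with hP
  have hPne : P.Nonempty :=
    ⟨w (a - b), Finset.mem_image.mpr ⟨(a, b),
      Finset.mem_product.mpr ⟨(hmem a).mpr ha, (hmem b).mpr hb⟩, rfl⟩⟩
  set h := P.max' hPne with hh
  have hle : ∀ α ∈ S, ∀ β ∈ S, w (α - β) ≤ h := by
    intro α hα β hβ
    apply Finset.le_max'
    exact Finset.mem_image.mpr ⟨(α, β),
      Finset.mem_product.mpr ⟨(hmem α).mpr hα, (hmem β).mpr hβ⟩, rfl⟩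
  have hab' : a - b ≠ 0 := sub_ne_zero.mpr hab
  have hne : h ≠ 0 := by
    intro h0
    have h1 := hle a ha b hb
    rw [h0, le_zero_iff] at h1
    exact hab' ((Valuation.zero_iff w).mp h1)
  have hpos : (0 : Γ₀) < h := zero_lt_iff.mpr hne
  obtain ⟨p, hp, hpv⟩ := Finset.mem_image.mp (P.max'_mem hPne)
  obtain ⟨hp1, hp2⟩ := Finset.mem_product.mp hp
  have hp1S := (hmem _).mp hp1
  have hp2S := (hmem _).mp hp2
  have hdiam : ∀ α ∈ S, ∀ β ∈ S, w (α - β) < g := by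
    intro α hα β hβ
    have e : α - β = (α - x₀) - (β - x₀) := by ring
    rw [e]
    exact lt_of_le_of_lt (w.map_sub _ _) (max_lt (hSD hα) (hSD hβ))
  have hg : h < g := by
    rw [hh, ← hpv]
    exact hdiam _ hp1S _ hp2S
  obtain ⟨c, hc⟩ := hsurj h
  have hc0 : c ≠ 0 := by rintro rfl; rw [map_zero] at hc; exact hne hc.symm
  have hO : ∀ α ∈ S, w ((α - a) / c) ≤ 1 := by
    intro α hα
    rw [map_div₀, hc]
    exact (div_le_one₀ hpos).mpr (hle α hα a ha)
  set φ : L → IsLocalRing.ResidueField w.valuationSubring := fun α =>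
    IsLocalRing.residue w.valuationSubring
      (if hα : w ((α - a) / c) ≤ 1 then (⟨(α - a) / c, hα⟩ : w.valuationSubring) else 0) with hφ
  have K2 : ∀ α ∈ S, ∀ β ∈ S, (φ α = φ β ↔ w (α - β) < h) := by
    intro α hα β hβ
    rw [hφ]
    dsimp only
    rw [dif_pos (hO α hα), dif_pos (hO β hβ), residue_eq_iff']
    have e : ((⟨(α - a) / c, hO α hα⟩ : w.valuationSubring) : L)
        - ((⟨(β - a) / c, hO β hβ⟩ : w.valuationSubring) : L) = (α - β) / c := by
      push_cast
      field_simp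
      ring
    rw [e, map_div₀, hc, div_lt_iff₀ hpos, one_mul]
  have K3 : ∀ a' ∈ S, ∃ r, w (r - a') < h ∧ r ∉ S := by
    intro a' _
    obtain ⟨γ, hγ0, hγ1⟩ := hnontriv
    have hγ₀ : ∃ γ₀ : Γ₀, γ₀ ≠ 0 ∧ γ₀ < 1 := by
      rcases lt_or_gt_of_ne hγ1 with hlt | hgt
      · exact ⟨γ, hγ0, hlt⟩
      · exact ⟨γ⁻¹, inv_ne_zero hγ0, inv_lt_one_of_one_lt₀ hgt⟩
    obtain ⟨γ₀, hγ₀0, hγ₀1⟩ := hγ₀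
    obtain ⟨t, ht⟩ := hsurj γ₀
    set f : ℕ → L := fun k => a' + c * t ^ (k + 1) with hf
    have hfmem : ∀ k, f k ∈ {x : L | w (x - a') < h} := by
      intro k
      have e : f k - a' = c * t ^ (k + 1) := by rw [hf]; ring
      simp only [Set.mem_setOf_eq, e, map_mul, map_pow, hc, ht]
      exact mul_lt_of_lt_one_right hpos (pow_lt_one₀ zero_le' hγ₀1 k.succ_ne_zero)
    have hinj : Function.Injective f := by
      intro k l hkl
      have e1 : c * t ^ (k + 1) = c * t ^ (l + 1) := by
        have := hkl
        rw [hf] at this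
        exact add_left_cancel this
      have e2 : h * γ₀ ^ (k + 1) = h * γ₀ ^ (l + 1) := by
        have := congrArg w e1
        rwa [map_mul, map_mul, map_pow, map_pow, hc, ht] at this
      have e3 : γ₀ ^ (k + 1) = γ₀ ^ (l + 1) := mul_left_cancel₀ hne e2
      have := pow_right_injective₀ (zero_lt_iff.mpr hγ₀0) (ne_of_lt hγ₀1) e3
      omega
    have hinf : {x : L | w (x - a') < h}.Infinite :=
      Set.infinite_of_injective_forall_mem hinj hfmem
    obtain ⟨r, hr⟩ := (hinf.diff hSfin).nonempty
    exact ⟨r, hr.1, hr.2⟩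
  refine ⟨h, φ, hne, hg, K2, K3, ?_⟩
  intro a' ha' r hr1 hr2
  have hrD : w (r - x₀) < g := by
    have e : r - x₀ = (r - a') + (a' - x₀) := by ring
    rw [e]
    exact lt_of_le_of_lt (w.map_add _ _) (max_lt (hr1.trans hg) (hSD ha'))
  refine ⟨⟨hrD, hr2⟩, ?_⟩
  set T : Set Γ₀ := {γ : Γ₀ | ∃ α ∈ S, γ = w (α - r)} with hT
  set Tb : Set Γ₀ := {γ : Γ₀ | ∃ α ∈ S, φ α = φ a' ∧ γ = w (α - r)} with hTb
  have hTfin : T.Finite := by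
    have e : T = (fun α => w (α - r)) '' S := by
      ext γ; simp [hT, eq_comm]
    rw [e]
    exact hSfin.image _
  have hTbsub : Tb ⊆ T := by
    rintro γ ⟨α, hα, -, rfl⟩
    exact ⟨α, hα, rfl⟩
  have hφp : φ p.1 ≠ φ p.2 := by
    intro heq
    have hlt := (K2 p.1 hp1S p.2 hp2S).mp heq
    rw [hpv, ← hh] at hlt
    exact lt_irrefl _ hlt
  have hβ : ∃ β ∈ S, φ β ≠ φ a' := by
    by_cases hpa : φ p.1 = φ a'
    · exact ⟨p.2, hp2S, fun hc' => hφp (hpa.trans hc'.symm)⟩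
    · exact ⟨p.1, hp1S, hpa⟩
  obtain ⟨β, hβS, hβφ⟩ := hβ
  have hβa' : w (β - a') = h :=
    le_antisymm (hle β hβS a' ha') (not_lt.mp fun hlt => hβφ ((K2 β hβS a' ha').mpr hlt))
  have hβr : w (β - r) = h := by
    have e : β - r = (β - a') - (r - a') := by ring
    rw [e, Valuation.map_sub_eq_of_lt_left]
    · exact hβa'
    · rw [hβa']; exact hr1
  have hhT : h ∈ T := ⟨β, hβS, hβr.symm⟩
  have hhTb : h ∉ Tb := by
    rintro ⟨α, hαS, hαφ, hγ⟩
    have h1 : w (α - a') < h := (K2 α hαS a' ha').mp hαφ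
    have h2 : w (α - r) < h := by
      have e : α - r = (α - a') - (r - a') := by ring
      rw [e]
      exact lt_of_le_of_lt (w.map_sub _ _) (max_lt h1 hr1)
    exact absurd hγ.symm h2.ne
  calc Tb.ncard + 1 = (insert h Tb).ncard :=
        (Set.ncard_insert_of_notMem hhTb (hTfin.subset hTbsub)).symm
    _ ≤ T.ncard := Set.ncard_le_ncard (Set.insert_subset hhT hTbsub) hTfin

lemma disk_aux {L : Type*} [Field L] {Γ₀ : Type*}
    [LinearOrderedCommGroupWithZero Γ₀] (w : Valuation L Γ₀)
    (hsurj : Function.Surjective w)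
    (hnontriv : ∃ γ : Γ₀, γ ≠ 0 ∧ γ ≠ 1)
    {q : ℕ}
    (hq : Nat.card (IsLocalRing.ResidueField w.valuationSubring) = q)
    (hq0 : 0 < q) :
    ∀ n : ℕ, ∀ (x₀ : L) (g : Γ₀), g ≠ 0 → ∀ S : Set L, S.Finite →
      S ⊆ {x : L | w (x - x₀) < g} →
      (∀ r ∈ {x : L | w (x - x₀) < g} \ S,
        {γ : Γ₀ | ∃ α ∈ S, γ = w (α - r)}.ncard ≤ n + 1) →
      S.ncard ≤ q ^ n := by
  intro n
  induction n with
  | zero =>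
    intro x₀ g hg S hSfin hSD hdist
    rw [pow_zero]
    refine (Set.ncard_le_one hSfin).mpr ?_
    intro a ha b hb
    by_contra hab
    obtain ⟨h, φ, hne, hg', K2, K3, K4⟩ :=
      disk_key w hsurj hnontriv x₀ g S hSfin hSD ha hb hab
    obtain ⟨r, hr1, hr2⟩ := K3 a ha
    obtain ⟨hrD, hineq⟩ := K4 a ha r hr1 hr2
    have hT1 := hdist r hrD
    have hzero : {γ : Γ₀ | ∃ α ∈ S, φ α = φ a ∧ γ = w (α - r)}.ncard = 0 := by omega
    have hTbfin : {γ : Γ₀ | ∃ α ∈ S, φ α = φ a ∧ γ = w (α - r)}.Finite := by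
      apply (hSfin.image (fun α => w (α - r))).subset
      rintro γ ⟨α, hα, -, rfl⟩
      exact ⟨α, hα, rfl⟩
    rw [Set.ncard_eq_zero hTbfin] at hzero
    have : w (a - r) ∈ {γ : Γ₀ | ∃ α ∈ S, φ α = φ a ∧ γ = w (α - r)} := ⟨a, ha, rfl, rfl⟩
    rw [hzero] at this
    exact this
  | succ n ih =>
    intro x₀ g hg S hSfin hSD hdist
    by_cases hsub : ∀ a ∈ S, ∀ b ∈ S, a = b
    · exact le_trans ((Set.ncard_le_one hSfin).mpr hsub) (Nat.one_le_pow _ _ hq0)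
    · push_neg at hsub
      obtain ⟨a, ha, b, hb, hab⟩ := hsub
      obtain ⟨h, φ, hne, hg', K2, K3, K4⟩ :=
        disk_key w hsurj hnontriv x₀ g S hSfin hSD ha hb hab
      classical
      set sf := hSfin.toFinset with hsf
      have hScard : S.ncard = sf.card := by
        rw [← Set.ncard_coe_finset, hSfin.coe_toFinset]
      rw [hScard, Finset.card_eq_sum_card_image φ sf]
      have hbound : ∀ β ∈ sf.image φ, (sf.filter fun x => φ x = β).card ≤ q ^ n := by
        intro β hβ
        obtain ⟨a', ha'f, ha'φ⟩ := Finset.mem_image.mp hβ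
        have ha'S : a' ∈ S := hSfin.mem_toFinset.mp ha'f
        set Sb : Set L := {x ∈ S | φ x = β} with hSb
        have hSbsub : Sb ⊆ S := fun x hx => hx.1
        have hSbfin : Sb.Finite := hSfin.subset hSbsub
        have hfc : ((sf.filter fun x => φ x = β) : Set L) = Sb := by
          ext x
          simp [hSb, hsf, hSfin.mem_toFinset]
        have hcard : (sf.filter fun x => φ x = β).card = Sb.ncard := by
          rw [← Set.ncard_coe_finset, hfc]
        rw [hcard]
        apply ih a' h hne Sb hSbfin
        · intro x hx
          exact (K2 x hx.1 a' ha'S).mp (hx.2.trans ha'φ.symm)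
        · intro r hr
          obtain ⟨hrD, hrS⟩ := hr
          have hrnotS : r ∉ S := fun hrS' =>
            hrS ⟨hrS', ((K2 r hrS' a' ha'S).mpr hrD).trans ha'φ⟩
          obtain ⟨hrDg, hineq⟩ := K4 a' ha'S r hrD hrnotS
          have hT := hdist r hrDg
          have e : {γ : Γ₀ | ∃ α ∈ Sb, γ = w (α - r)}
              = {γ : Γ₀ | ∃ α ∈ S, φ α = φ a' ∧ γ = w (α - r)} := by
            ext γ
            constructor
            · rintro ⟨α, ⟨hαS, hαφ⟩, rfl⟩
              exact ⟨α, hαS, hαφ.trans ha'φ.symm, rfl⟩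
            · rintro ⟨α, hαS, hαφ, rfl⟩
              exact ⟨α, ⟨hαS, hαφ.trans ha'φ⟩, rfl⟩
          rw [e]
          omega
      calc ∑ β ∈ sf.image φ, (sf.filter fun x => φ x = β).card
          ≤ (sf.image φ).card * q ^ n := by
            have := Finset.sum_le_card_nsmul (sf.image φ) _ (q ^ n) hbound
            simpa using this
        _ ≤ q * q ^ n := by
            have hfin : Finite (IsLocalRing.ResidueField w.valuationSubring) :=
              Nat.finite_of_card_ne_zero (by omega)
            have : Fintype (IsLocalRing.ResidueField w.valuationSubring) := Fintype.ofFinite _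
            have hcard : (sf.image φ).card ≤ q := by
              calc (sf.image φ).card ≤ Fintype.card (IsLocalRing.ResidueField w.valuationSubring) :=
                    Finset.card_le_univ _
                _ = q := by rw [← Nat.card_eq_fintype_card, hq]
            exact Nat.mul_le_mul_right _ hcard
        _ = q ^ (n + 1) := (pow_succ' q n).symm


/-!
STATEMENT 9 (the combinatorial tree/disk argument).

`L` is a field with a valuation `w : L* → G` encoded multiplicatively as a
Mathlib `Valuation w : L → Γ₀`; `w` is surjective onto `Γ₀` (i.e. `w(L*) = G`)
and nontrivial (`G ≠ {0}`, i.e. `Γ₀` contains an element other than `0` and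
`1`); the residue field of the valuation subring has exactly `q` elements.

Let `D = {x : w(x − x₀) > g}` be the open disk of radius `g ∈ G` about `x₀`
(multiplicatively, `w (x - x₀) < g` with `g ≠ 0`).  If `S ⊆ D` is finite and
nonempty and `m ≥ 1` is such that for every `r ∈ D \ S` the set
`{w(α − r) : α ∈ S}` has at most `m` elements, then `S` has at most `q^{m−1}`
elements.
-/
theorem disk_tree_counting_bound
    {L : Type*} [Field L]
    {Γ₀ : Type*} [LinearOrderedCommGroupWithZero Γ₀] (w : Valuation L Γ₀)
    (hsurj : Function.Surjective w)
    (hnontriv : ∃ γ : Γ₀, γ ≠ 0 ∧ γ ≠ 1)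
    {q : ℕ}
    (hq : Nat.card (IsLocalRing.ResidueField w.valuationSubring) = q)
    (hq0 : 0 < q)
    (x₀ : L) (g : Γ₀) (hg : g ≠ 0)
    (S : Set L) (hSfin : S.Finite) (hSne : S.Nonempty)
    (hSD : S ⊆ {x : L | w (x - x₀) < g})
    {m : ℕ} (hm : 1 ≤ m)
    (hdist : ∀ r ∈ {x : L | w (x - x₀) < g} \ S,
        {γ : Γ₀ | ∃ α ∈ S, γ = w (α - r)}.ncard ≤ m) :
    S.ncard ≤ q ^ (m - 1) := by
  obtain ⟨n, rfl⟩ : ∃ n, m = n + 1 := ⟨m - 1, by omega⟩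
  have hmn : n + 1 - 1 = n := by omega
  rw [hmn]
  exact disk_aux w hsurj hnontriv hq hq0 n x₀ g hg S hSfin hSD hdist
end

section
/- Every valued field has a maximally complete immediate extension. Precisely: let K be a field with a valuation v : K* → G. Then there exists an immediate extension (M, u) of (K, v) such that (M, u) is maximally complete, i.e., (M, u) admits no immediate extension (N, t) with N strictly larger than M. -/
universe u v

/-!
STATEMENT 11 (Krull: every valued field has a maximally complete immediate
extension).

Valuations are encoded multiplicatively: a Mathlib `Valuation v : K → Γ₀` with
`Γ₀` a `LinearOrderedCommGroupWithZero` corresponds to an additive valuation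
`v : K* → G`.  An extension `(M, u) ⊇ (K, v)` is *immediate* if it has the same
value group (`u(M*) = v(K*)`; since the value groups agree we may take the
valuation of the extension with values in the same `Γ₀`) and the same residue
field (the induced embedding of residue fields is an isomorphism; it is
automatically injective, so this says every element of `O_M` is congruent
mod `m_M` to an element of `O_K`).  A valued field is *maximally complete* if
every immediate extension of it is trivial, i.e. the field embedding is
surjective.
-/

/-- `(M, u)` together with the embedding `ι : K → M` is an immediate extension
of `(K, v)`: `u` restricts to `v`, the value groups coincide, and the residue
fields coincide. -/
def IsImmediateExtension {K : Type u} {M : Type v} [Field K] [Field M]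
    {Γ₀ : Type*} [LinearOrderedCommGroupWithZero Γ₀]
    (v : Valuation K Γ₀) (u : Valuation M Γ₀) (ι : K →+* M) : Prop :=
  (∀ x : K, u (ι x) = v x) ∧
  (∀ y : M, y ≠ 0 → ∃ x : K, x ≠ 0 ∧ v x = u y) ∧
  (∀ y : M, u y ≤ 1 → ∃ x : K, v x ≤ 1 ∧ u (y - ι x) < 1)

/-- `(M, u)` is maximally complete: it admits no nontrivial immediate
extension. -/
def IsMaximallyComplete {M : Type u} [Field M]
    {Γ₀ : Type v} [LinearOrderedCommGroupWithZero Γ₀]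
    (u : Valuation M Γ₀) : Prop :=
  ∀ (N : Type u) (_ : Field N) (t : Valuation N Γ₀) (j : M →+* N),
    IsImmediateExtension u t j → Function.Surjective j

open Cardinal

namespace KrullAux

attribute [local instance] Classical.propDecidable

section Bound

variable {K : Type u} {L : Type u} [Field K] [Field L]
  {Γ₀ : Type v} [LinearOrderedCommGroupWithZero Γ₀]
  {v : Valuation K Γ₀} {w : Valuation L Γ₀} {ι : K →+* L}
  (h : IsImmediateExtension v w ι)

/-- first witness: an element of `K` with the same value as `z`. -/
noncomputable def witc (z : L) (hz : z ≠ 0) : K := (h.2.1 z hz).choose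

lemma witc_ne (z : L) (hz : z ≠ 0) : witc h z hz ≠ 0 := (h.2.1 z hz).choose_spec.1

lemma v_witc (z : L) (hz : z ≠ 0) : v (witc h z hz) = w z := (h.2.1 z hz).choose_spec.2

lemma unit_le (z : L) (hz : z ≠ 0) : w (z * (ι (witc h z hz))⁻¹) ≤ 1 := by
  have hwz : w z ≠ 0 := (Valuation.ne_zero_iff w).2 hz
  rw [map_mul, map_inv₀, h.1, v_witc, mul_inv_cancel₀ hwz]

/-- second witness: residue approximation of the unit `z / ι c`. -/
noncomputable def wita (z : L) (hz : z ≠ 0) : K :=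
  (h.2.2 (z * (ι (witc h z hz))⁻¹) (unit_le h z hz)).choose

lemma res_lt (z : L) (hz : z ≠ 0) :
    w (z * (ι (witc h z hz))⁻¹ - ι (wita h z hz)) < 1 :=
  (h.2.2 (z * (ι (witc h z hz))⁻¹) (unit_le h z hz)).choose_spec.2

/-- the combined step witness. -/
noncomputable def wit (z : L) (hz : z ≠ 0) : K × K := (witc h z hz, wita h z hz)

lemma wit_lt {z z' : L} (hz : z ≠ 0) (hz' : z' ≠ 0)
    (hww : wit h z hz = wit h z' hz') : w (z - z') < w z := by
  have hc : witc h z hz = witc h z' hz' := congrArg Prod.fst hww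
  have ha : wita h z hz = wita h z' hz' := congrArg Prod.snd hww
  set c := witc h z hz with hcdef
  set a := wita h z hz with hadef
  have hvz : v c = w z := v_witc h z hz
  have hvz' : v c = w z' := by rw [hc]; exact v_witc h z' hz'
  have hc0 : c ≠ 0 := witc_ne h z hz
  have hιc : ι c ≠ 0 := fun e => hc0 (ι.injective (by rw [e, map_zero]))
  have key : z - z' = ι c * ((z * (ι c)⁻¹ - ι a) - (z' * (ι c)⁻¹ - ι a)) := by
    field_simp
    ring
  have r1 : w (z * (ι c)⁻¹ - ι a) < 1 := res_lt h z hz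
  have r2 : w (z' * (ι c)⁻¹ - ι a) < 1 := by
    rw [ha, hc]; exact res_lt h z' hz'
  have hd : w ((z * (ι c)⁻¹ - ι a) - (z' * (ι c)⁻¹ - ι a)) < 1 :=
    lt_of_le_of_lt (w.map_sub _ _) (max_lt r1 r2)
  have hpos : (0 : Γ₀) < v c := by
    rw [hvz, zero_lt_iff]; exact (Valuation.ne_zero_iff w).2 hz
  calc w (z - z') = v c * w ((z * (ι c)⁻¹ - ι a) - (z' * (ι c)⁻¹ - ι a)) := by
        rw [key, map_mul, h.1]
    _ < v c * 1 := mul_lt_mul_of_pos_left hd hpos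
    _ = w z := by rw [mul_one, hvz]


section Rec

variable (W : Type u) [LinearOrder W] [WellFoundedLT W]

/-- transfinite separation data. -/
noncomputable def stepAux : W → L → Option (K × K) :=
  (wellFounded_lt (α := W)).fix
    (C := fun _ => L → Option (K × K)) fun a prev x =>
    let r := (⟨x, fun _ _ => rfl⟩ :
      ∃ y : L, ∀ b, (hb : b < a) → prev b hb y = prev b hb x).choose
    if hx : x = r then none
    else some (wit h (x - r) (sub_ne_zero.2 hx))

/-- representative of the stage-`a` class of `x`. -/
noncomputable def rep (a : W) (x : L) : L :=
  (⟨x, fun _ _ => rfl⟩ :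
    ∃ y : L, ∀ b, b < a → stepAux h W b y = stepAux h W b x).choose

lemma rep_spec (a : W) (x : L) :
    ∀ b, b < a → stepAux h W b (rep h W a x) = stepAux h W b x := by
  have := (⟨x, fun _ _ => rfl⟩ :
    ∃ y : L, ∀ b, b < a → stepAux h W b y = stepAux h W b x).choose_spec
  exact this

lemma rep_congr {a : W} {x y : L}
    (hxy : ∀ b, b < a → stepAux h W b y = stepAux h W b x) :
    rep h W a y = rep h W a x := by
  have key : ∀ (p q : L → Prop) (hp : ∃ z, p z) (hq : ∃ z, q z),
      p = q → hp.choose = hq.choose := by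
    rintro p q hp hq rfl; rfl
  exact key _ _ _ _ (by
    funext z
    exact propext ⟨fun H b hb => (H b hb).trans (hxy b hb),
      fun H b hb => (H b hb).trans (hxy b hb).symm⟩)

lemma step_eq (a : W) (x : L) :
    stepAux h W a x =
      if hx : x = rep h W a x then none
      else some (wit h (x - rep h W a x) (sub_ne_zero.2 hx)) := by
  unfold stepAux
  rw [WellFounded.fix_eq]
  rfl


lemma exists_step_none (hW : #K < #W) (x : L) :
    ∃ a : W, stepAux h W a x = none := by
  by_contra hcon
  push_neg at hcon
  have h1 : ∀ a : W, x ≠ rep h W a x := by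
    intro a hxr
    exact hcon a (by rw [step_eq, dif_pos hxr])
  have h2 : ∀ a : W, stepAux h W a x
      = some (wit h (x - rep h W a x) (sub_ne_zero.2 (h1 a))) := by
    intro a; rw [step_eq, dif_neg (h1 a)]
  have key : ∀ a a' : W, a < a' →
      w (x - rep h W a' x) < w (x - rep h W a x) := by
    intro a a' haa
    have hy : ∀ b, b < a' → stepAux h W b (rep h W a' x) = stepAux h W b x :=
      rep_spec h W a' x
    have hrepy : rep h W a (rep h W a' x) = rep h W a x :=
      rep_congr h W (fun b hb => hy b (hb.trans haa))
    have h3 : stepAux h W a (rep h W a' x)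
        = some (wit h (x - rep h W a x) (sub_ne_zero.2 (h1 a))) :=
      (hy a haa).trans (h2 a)
    rw [step_eq] at h3
    by_cases hcase : rep h W a' x = rep h W a (rep h W a' x)
    · rw [dif_pos hcase] at h3; exact absurd h3 (by simp)
    · rw [dif_neg hcase] at h3
      have h4 := Option.some.inj h3
      have h5 := wit_lt h (sub_ne_zero.2 (h1 a)) (sub_ne_zero.2 hcase) h4.symm
      rw [hrepy, sub_sub_sub_cancel_right] at h5
      exact h5
  set cfun : W → K := fun a => witc h (x - rep h W a x) (sub_ne_zero.2 (h1 a)) with hcfun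
  have hvc : ∀ a : W, v (cfun a) = w (x - rep h W a x) := fun a => v_witc h _ _
  have hinj : Function.Injective cfun := by
    intro a a' heq
    by_contra hne
    rcases lt_or_gt_of_ne hne with hlt | hlt
    · exact absurd (by rw [← hvc a, ← hvc a', heq]) (ne_of_lt (key a a' hlt))
    · exact absurd (by rw [← hvc a, ← hvc a', heq]) (ne_of_gt (key a' a hlt))
  exact absurd (Cardinal.mk_le_of_injective hinj) (not_le.2 hW)

lemma step_injective (hW : #K < #W) :
    Function.Injective (fun (x : L) (a : W) => stepAux h W a x) := by
  intro x y hxy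
  have hall : ∀ a : W, stepAux h W a x = stepAux h W a y := fun a => congrFun hxy a
  obtain ⟨a, ha⟩ := exists_step_none h W hW x
  have hx : x = rep h W a x := by
    by_contra hne; rw [step_eq, dif_neg hne] at ha; exact absurd ha (by simp)
  have hrep : rep h W a y = rep h W a x :=
    rep_congr h W (fun b _ => (hall b).symm)
  have hay : stepAux h W a y = none := (hall a).symm.trans ha
  have hy : y = rep h W a y := by
    by_contra hne; rw [step_eq, dif_neg hne] at hay; exact absurd hay (by simp)
  rw [hy, hrep, ← hx]

end Rec

/-- Krull's cardinality bound for immediate extensions. -/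
theorem card_le_of_immediate (h : IsImmediateExtension v w ι) :
    Cardinal.mk L ≤ 2 ^ Order.succ (#K + ℵ₀) := by
  set κ := #K + ℵ₀ with hκ
  have κinf : ℵ₀ ≤ κ := self_le_add_left _ _
  let W := (Order.succ κ).ord.ToType
  have hWcard : #W = Order.succ κ := by
    rw [Cardinal.mk_toType, Cardinal.card_ord]
  have hW : #K < #W := by
    rw [hWcard]
    exact lt_of_le_of_lt (self_le_add_right _ _) (Order.lt_succ κ)
  have hle : #L ≤ #(W → Option (K × K)) :=
    Cardinal.mk_le_of_injective (step_injective h W hW)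
  have hKκ : #K ≤ κ := self_le_add_right _ _
  have hopt : #(Option (K × K)) ≤ 2 ^ κ := by
    have h1 : #(Option (K × K)) = #K * #K + 1 := by simp
    rw [h1]
    calc #K * #K + 1 ≤ κ * κ + κ := by
          gcongr <;>
            first
              | exact hKκ
              | exact le_trans Cardinal.one_le_aleph0 κinf
      _ = κ + κ := by rw [Cardinal.mul_eq_self κinf]
      _ = κ := Cardinal.add_eq_self κinf
      _ ≤ 2 ^ κ := le_of_lt (Cardinal.cantor κ)
  calc #L ≤ #(W → Option (K × K)) := hle
    _ = #(Option (K × K)) ^ #W := (Cardinal.power_def _ _).symm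
    _ ≤ (2 ^ κ) ^ #W := Cardinal.power_le_power_right hopt
    _ = 2 ^ (κ * #W) := (Cardinal.power_mul).symm
    _ = 2 ^ Order.succ κ := by
        rw [hWcard, Cardinal.mul_eq_max κinf (κinf.trans (Order.le_succ κ)),
          max_eq_right (le_of_lt (Order.lt_succ κ))]

end Bound

section Zorn

variable {K : Type u} [Field K] {Γ₀ : Type v} [LinearOrderedCommGroupWithZero Γ₀]
  (v : Valuation K Γ₀) (S : Type u)

/-- A valued-field structure on a subset of `S`, immediate over `(K, v)`. -/
structure Ext where
  car : Set S
  [fld : Field ↥car]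
  val : Valuation (↥car) Γ₀
  emb : K →+* ↥car
  imm : IsImmediateExtension v val emb

attribute [instance] Ext.fld

/-- The extension order on `Ext`. -/
def ExtLE (E₁ E₂ : Ext v S) : Prop :=
  ∃ hsub : E₁.car ⊆ E₂.car,
    (∀ x y : ↥E₁.car,
      Set.inclusion hsub (x + y) = Set.inclusion hsub x + Set.inclusion hsub y) ∧
    (∀ x y : ↥E₁.car,
      Set.inclusion hsub (x * y) = Set.inclusion hsub x * Set.inclusion hsub y) ∧
    Set.inclusion hsub 1 = 1 ∧
    (∀ x : ↥E₁.car, E₂.val (Set.inclusion hsub x) = E₁.val x) ∧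
    (∀ a : K, Set.inclusion hsub (E₁.emb a) = E₂.emb a)

variable {v S}

lemma ExtLE.refl (E : Ext v S) : ExtLE v S E E :=
  ⟨subset_rfl, fun _ _ => rfl, fun _ _ => rfl, rfl, fun _ => rfl, fun _ => rfl⟩

lemma ExtLE.trans {E₁ E₂ E₃ : Ext v S} (h₁ : ExtLE v S E₁ E₂) (h₂ : ExtLE v S E₂ E₃) :
    ExtLE v S E₁ E₃ := by
  obtain ⟨s₁, a₁, m₁, o₁, v₁, e₁⟩ := h₁
  obtain ⟨s₂, a₂, m₂, o₂, v₂, e₂⟩ := h₂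
  refine ⟨s₁.trans s₂, ?_, ?_, ?_, ?_, ?_⟩
  · intro x y
    exact Subtype.ext ((congrArg Subtype.val (a₁ x y)).trans
      (congrArg Subtype.val (a₂ (Set.inclusion s₁ x) (Set.inclusion s₁ y))))
  · intro x y
    exact Subtype.ext ((congrArg Subtype.val (m₁ x y)).trans
      (congrArg Subtype.val (m₂ (Set.inclusion s₁ x) (Set.inclusion s₁ y))))
  · exact (congrArg (Set.inclusion s₂) o₁).trans o₂
  · intro x
    exact (v₂ (Set.inclusion s₁ x)).trans (v₁ x)
  · intro a
    exact (congrArg (Set.inclusion s₂) (e₁ a)).trans (e₂ a)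

/-- The inclusion ring homomorphism attached to `ExtLE`. -/
noncomputable def ExtLE.hom {E₁ E₂ : Ext v S} (hle : ExtLE v S E₁ E₂) :
    ↥E₁.car →+* ↥E₂.car where
  toFun := Set.inclusion hle.choose
  map_one' := hle.choose_spec.2.2.1
  map_mul' := hle.choose_spec.2.1
  map_add' := hle.choose_spec.1
  map_zero' := by
    have h := hle.choose_spec.1 0 0
    rw [add_zero] at h
    exact (add_eq_right.1 h.symm)

lemma ExtLE.hom_coe {E₁ E₂ : Ext v S} (hle : ExtLE v S E₁ E₂) (x : ↥E₁.car) :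
    (hle.hom x : S) = (x : S) := rfl

lemma ExtLE.hom_val {E₁ E₂ : Ext v S} (hle : ExtLE v S E₁ E₂) (x : ↥E₁.car) :
    E₂.val (hle.hom x) = E₁.val x := hle.choose_spec.2.2.2.1 x

lemma ExtLE.hom_emb {E₁ E₂ : Ext v S} (hle : ExtLE v S E₁ E₂) (a : K) :
    hle.hom (E₁.emb a) = E₂.emb a := hle.choose_spec.2.2.2.2 a

section Chain

variable {c : Set (Ext v S)} (hc : IsChain (ExtLE v S) c) (hne : c.Nonempty)

include hc

/-- union of the carriers of a chain. -/
def Uset : Set S := ⋃ E ∈ c, E.car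

omit hc in
lemma sub_Uset {E : Ext v S} (hE : E ∈ c) : E.car ⊆ Uset (c := c) := by
  intro x hx
  exact Set.mem_biUnion hE hx

omit hc in
lemma mem_ex (x : ↥(Uset (c := c))) : ∃ E : Ext v S, E ∈ c ∧ (x : S) ∈ E.car := by
  obtain ⟨E, hE, hx⟩ := Set.mem_iUnion₂.1 x.2
  exact ⟨E, hE, hx⟩

lemma mem_ex2 (x y : ↥(Uset (c := c))) :
    ∃ E : Ext v S, E ∈ c ∧ (x : S) ∈ E.car ∧ (y : S) ∈ E.car := by
  obtain ⟨E₁, h₁, hx⟩ := mem_ex x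
  obtain ⟨E₂, h₂, hy⟩ := mem_ex y
  rcases eq_or_ne E₁ E₂ with rfl | hne'
  · exact ⟨E₁, h₁, hx, hy⟩
  rcases hc h₁ h₂ hne' with hle | hle
  · exact ⟨E₂, h₂, hle.choose hx, hy⟩
  · exact ⟨E₁, h₁, hx, hle.choose hy⟩

lemma mem_ex3 (x y z : ↥(Uset (c := c))) :
    ∃ E : Ext v S, E ∈ c ∧ (x : S) ∈ E.car ∧ (y : S) ∈ E.car ∧ (z : S) ∈ E.car := by
  obtain ⟨E₁, h₁, hx, hy⟩ := mem_ex2 hc x y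
  obtain ⟨E₂, h₂, hz⟩ := mem_ex z
  rcases eq_or_ne E₁ E₂ with rfl | hne'
  · exact ⟨E₁, h₁, hx, hy, hz⟩
  rcases hc h₁ h₂ hne' with hle | hle
  · exact ⟨E₂, h₂, hle.choose hx, hle.choose hy, hz⟩
  · exact ⟨E₁, h₁, hx, hy, hle.choose hz⟩

/-- compatibility of values of binary operations across the chain -/
lemma compat₂ {E F : Ext v S} (hE : E ∈ c) (hF : F ∈ c)
    (f : ∀ (G : Ext v S), ↥G.car → ↥G.car → ↥G.car)
    (hf : ∀ (G₁ G₂ : Ext v S) (hle : ExtLE v S G₁ G₂) (x y : ↥G₁.car),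
      hle.hom (f G₁ x y) = f G₂ (hle.hom x) (hle.hom y))
    {x y : S} (hxE : x ∈ E.car) (hyE : y ∈ E.car) (hxF : x ∈ F.car) (hyF : y ∈ F.car) :
    ((f E ⟨x, hxE⟩ ⟨y, hyE⟩ : ↥E.car) : S) = ((f F ⟨x, hxF⟩ ⟨y, hyF⟩ : ↥F.car) : S) := by
  rcases eq_or_ne E F with rfl | hne'
  · rfl
  rcases hc hE hF hne' with hle | hle
  · have h1 := congrArg Subtype.val (hf E F hle ⟨x, hxE⟩ ⟨y, hyE⟩)
    rw [ExtLE.hom_coe] at h1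
    exact h1
  · have h1 := congrArg Subtype.val (hf F E hle ⟨x, hxF⟩ ⟨y, hyF⟩)
    rw [ExtLE.hom_coe] at h1
    exact h1.symm

/-- compatibility of values of unary operations across the chain -/
lemma compat₁ {E F : Ext v S} (hE : E ∈ c) (hF : F ∈ c)
    (f : ∀ (G : Ext v S), ↥G.car → ↥G.car)
    (hf : ∀ (G₁ G₂ : Ext v S) (hle : ExtLE v S G₁ G₂) (x : ↥G₁.car),
      hle.hom (f G₁ x) = f G₂ (hle.hom x))
    {x : S} (hxE : x ∈ E.car) (hxF : x ∈ F.car) :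
    ((f E ⟨x, hxE⟩ : ↥E.car) : S) = ((f F ⟨x, hxF⟩ : ↥F.car) : S) := by
  rcases eq_or_ne E F with rfl | hne'
  · rfl
  rcases hc hE hF hne' with hle | hle
  · have h1 := congrArg Subtype.val (hf E F hle ⟨x, hxE⟩)
    rw [ExtLE.hom_coe] at h1
    exact h1
  · have h1 := congrArg Subtype.val (hf F E hle ⟨x, hxF⟩)
    rw [ExtLE.hom_coe] at h1
    exact h1.symm

/-- compatibility of constants across the chain -/
lemma compat₀ {E F : Ext v S} (hE : E ∈ c) (hF : F ∈ c)
    (f : ∀ (G : Ext v S), ↥G.car)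
    (hf : ∀ (G₁ G₂ : Ext v S) (hle : ExtLE v S G₁ G₂), hle.hom (f G₁) = f G₂) :
    ((f E : ↥E.car) : S) = ((f F : ↥F.car) : S) := by
  rcases eq_or_ne E F with rfl | hne'
  · rfl
  rcases hc hE hF hne' with hle | hle
  · have h1 := congrArg Subtype.val (hf E F hle)
    rw [ExtLE.hom_coe] at h1
    exact h1
  · have h1 := congrArg Subtype.val (hf F E hle)
    rw [ExtLE.hom_coe] at h1
    exact h1.symm

lemma compat_val {E F : Ext v S} (hE : E ∈ c) (hF : F ∈ c)
    {x : S} (hxE : x ∈ E.car) (hxF : x ∈ F.car) :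
    E.val ⟨x, hxE⟩ = F.val ⟨x, hxF⟩ := by
  rcases eq_or_ne E F with rfl | hne'
  · rfl
  rcases hc hE hF hne' with hle | hle
  · have h1 := hle.hom_val ⟨x, hxE⟩
    have h2 : hle.hom ⟨x, hxE⟩ = ⟨x, hxF⟩ := Subtype.ext rfl
    rw [h2] at h1
    exact h1.symm
  · have h1 := hle.hom_val ⟨x, hxF⟩
    have h2 : hle.hom ⟨x, hxF⟩ = ⟨x, hxE⟩ := Subtype.ext rfl
    rw [h2] at h1
    exact h1

lemma compat_emb {E F : Ext v S} (hE : E ∈ c) (hF : F ∈ c) (a : K) :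
    ((E.emb a : ↥E.car) : S) = ((F.emb a : ↥F.car) : S) := by
  rcases eq_or_ne E F with rfl | hne'
  · rfl
  rcases hc hE hF hne' with hle | hle
  · have h1 := congrArg Subtype.val (hle.hom_emb a)
    rw [ExtLE.hom_coe] at h1
    exact h1
  · have h1 := congrArg Subtype.val (hle.hom_emb a)
    rw [ExtLE.hom_coe] at h1
    exact h1.symm

variable (c) in
/-- a chosen base point of the chain. -/
noncomputable def E0 (hne : c.Nonempty) : Ext v S := hne.choose

omit hc in
lemma E0_mem : E0 c hne ∈ c := hne.choose_spec

/-- addition on the union. -/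
noncomputable def Uadd (x y : ↥(Uset (c := c))) : ↥(Uset (c := c)) :=
  let E := (mem_ex2 hc x y).choose
  ⟨((⟨(x : S), (mem_ex2 hc x y).choose_spec.2.1⟩ +
     ⟨(y : S), (mem_ex2 hc x y).choose_spec.2.2⟩ : ↥E.car) : S),
    sub_Uset (mem_ex2 hc x y).choose_spec.1 (Subtype.mem _)⟩

lemma Uadd_coe {E : Ext v S} (hE : E ∈ c) (x y : ↥(Uset (c := c)))
    (hx : (x : S) ∈ E.car) (hy : (y : S) ∈ E.car) :
    ((Uadd hc x y : ↥(Uset (c := c))) : S)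
      = ((⟨(x : S), hx⟩ + ⟨(y : S), hy⟩ : ↥E.car) : S) :=
  compat₂ hc (mem_ex2 hc x y).choose_spec.1 hE (fun _ a b => a + b)
    (fun _ _ hle a b => hle.hom.map_add a b) _ _ hx hy

/-- multiplication on the union. -/
noncomputable def Umul (x y : ↥(Uset (c := c))) : ↥(Uset (c := c)) :=
  let E := (mem_ex2 hc x y).choose
  ⟨((⟨(x : S), (mem_ex2 hc x y).choose_spec.2.1⟩ *
     ⟨(y : S), (mem_ex2 hc x y).choose_spec.2.2⟩ : ↥E.car) : S),
    sub_Uset (mem_ex2 hc x y).choose_spec.1 (Subtype.mem _)⟩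

lemma Umul_coe {E : Ext v S} (hE : E ∈ c) (x y : ↥(Uset (c := c)))
    (hx : (x : S) ∈ E.car) (hy : (y : S) ∈ E.car) :
    ((Umul hc x y : ↥(Uset (c := c))) : S)
      = ((⟨(x : S), hx⟩ * ⟨(y : S), hy⟩ : ↥E.car) : S) :=
  compat₂ hc (mem_ex2 hc x y).choose_spec.1 hE (fun _ a b => a * b)
    (fun _ _ hle a b => hle.hom.map_mul a b) _ _ hx hy

/-- negation on the union. -/
noncomputable def Uneg (x : ↥(Uset (c := c))) : ↥(Uset (c := c)) :=
  let E := (mem_ex x).choose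
  ⟨((-⟨(x : S), (mem_ex x).choose_spec.2⟩ : ↥E.car) : S),
    sub_Uset (mem_ex x).choose_spec.1 (Subtype.mem _)⟩

lemma Uneg_coe {E : Ext v S} (hE : E ∈ c) (x : ↥(Uset (c := c)))
    (hx : (x : S) ∈ E.car) :
    ((Uneg (c := c) x : ↥(Uset (c := c))) : S) = ((-⟨(x : S), hx⟩ : ↥E.car) : S) :=
  compat₁ hc (mem_ex x).choose_spec.1 hE (fun _ a => -a)
    (fun _ _ hle a => hle.hom.map_neg a) _ hx

/-- inversion on the union. -/
noncomputable def Uinv (x : ↥(Uset (c := c))) : ↥(Uset (c := c)) :=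
  let E := (mem_ex x).choose
  ⟨(((⟨(x : S), (mem_ex x).choose_spec.2⟩ : ↥E.car)⁻¹ : ↥E.car) : S),
    sub_Uset (mem_ex x).choose_spec.1 (Subtype.mem _)⟩

lemma Uinv_coe {E : Ext v S} (hE : E ∈ c) (x : ↥(Uset (c := c)))
    (hx : (x : S) ∈ E.car) :
    ((Uinv (c := c) x : ↥(Uset (c := c))) : S) = (((⟨(x : S), hx⟩ : ↥E.car)⁻¹ : ↥E.car) : S) :=
  compat₁ hc (mem_ex x).choose_spec.1 hE (fun _ a => a⁻¹)
    (fun _ _ hle a => map_inv₀ hle.hom a) _ hx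

/-- zero of the union. -/
noncomputable def Uzero : ↥(Uset (c := c)) :=
  ⟨(((0 : ↥(E0 c hne).car)) : S), sub_Uset (E0_mem hne) (Subtype.mem _)⟩

lemma Uzero_coe {E : Ext v S} (hE : E ∈ c) :
    ((Uzero hne : ↥(Uset (c := c))) : S) = (((0 : ↥E.car)) : S) :=
  compat₀ hc (E0_mem hne) hE (fun _ => 0) (fun _ _ hle => hle.hom.map_zero)

/-- one of the union. -/
noncomputable def Uone : ↥(Uset (c := c)) :=
  ⟨(((1 : ↥(E0 c hne).car)) : S), sub_Uset (E0_mem hne) (Subtype.mem _)⟩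

lemma Uone_coe {E : Ext v S} (hE : E ∈ c) :
    ((Uone hne : ↥(Uset (c := c))) : S) = (((1 : ↥E.car)) : S) :=
  compat₀ hc (E0_mem hne) hE (fun _ => 1) (fun _ _ hle => hle.hom.map_one)

lemma Uadd_mem {E : Ext v S} (hE : E ∈ c) (x y : ↥(Uset (c := c)))
    (hx : (x : S) ∈ E.car) (hy : (y : S) ∈ E.car) :
    ((Uadd hc x y : ↥(Uset (c := c))) : S) ∈ E.car := by
  rw [Uadd_coe hc hE x y hx hy]; exact Subtype.mem _

lemma Umul_mem {E : Ext v S} (hE : E ∈ c) (x y : ↥(Uset (c := c)))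
    (hx : (x : S) ∈ E.car) (hy : (y : S) ∈ E.car) :
    ((Umul hc x y : ↥(Uset (c := c))) : S) ∈ E.car := by
  rw [Umul_coe hc hE x y hx hy]; exact Subtype.mem _

lemma Uneg_mem {E : Ext v S} (hE : E ∈ c) (x : ↥(Uset (c := c)))
    (hx : (x : S) ∈ E.car) :
    ((Uneg (c := c) x : ↥(Uset (c := c))) : S) ∈ E.car := by
  rw [Uneg_coe hc hE x hx]; exact Subtype.mem _

lemma Uzero_mem {E : Ext v S} (hE : E ∈ c) :
    ((Uzero hne : ↥(Uset (c := c))) : S) ∈ E.car := by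
  rw [Uzero_coe hc hne hE]; exact Subtype.mem _

lemma Uone_mem {E : Ext v S} (hE : E ∈ c) :
    ((Uone hne : ↥(Uset (c := c))) : S) ∈ E.car := by
  rw [Uone_coe hc hne hE]; exact Subtype.mem _

lemma Uadd_assoc (x y z : ↥(Uset (c := c))) :
    Uadd hc (Uadd hc x y) z = Uadd hc x (Uadd hc y z) := by
  obtain ⟨E, hE, hx, hy, hz⟩ := mem_ex3 hc x y z
  apply Subtype.ext
  rw [Uadd_coe hc hE _ z (Uadd_mem hc hE x y hx hy) hz,
    Uadd_coe hc hE x _ hx (Uadd_mem hc hE y z hy hz)]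
  have e1 : (⟨((Uadd hc x y : ↥(Uset (c := c))) : S), Uadd_mem hc hE x y hx hy⟩ : ↥E.car)
      = ⟨(x : S), hx⟩ + ⟨(y : S), hy⟩ := Subtype.ext (Uadd_coe hc hE x y hx hy)
  have e2 : (⟨((Uadd hc y z : ↥(Uset (c := c))) : S), Uadd_mem hc hE y z hy hz⟩ : ↥E.car)
      = ⟨(y : S), hy⟩ + ⟨(z : S), hz⟩ := Subtype.ext (Uadd_coe hc hE y z hy hz)
  rw [e1, e2, add_assoc]

lemma Uadd_comm (x y : ↥(Uset (c := c))) : Uadd hc x y = Uadd hc y x := by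
  obtain ⟨E, hE, hx, hy⟩ := mem_ex2 hc x y
  apply Subtype.ext
  rw [Uadd_coe hc hE x y hx hy, Uadd_coe hc hE y x hy hx, add_comm]

lemma Uzero_add (x : ↥(Uset (c := c))) : Uadd hc (Uzero hne) x = x := by
  obtain ⟨E, hE, hx⟩ := mem_ex x
  apply Subtype.ext
  rw [Uadd_coe hc hE _ x (Uzero_mem hc hne hE) hx]
  have e1 : (⟨((Uzero hne : ↥(Uset (c := c))) : S), Uzero_mem hc hne hE⟩ : ↥E.car)
      = 0 := Subtype.ext (Uzero_coe hc hne hE)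
  rw [e1, zero_add]

lemma Uadd_zero (x : ↥(Uset (c := c))) : Uadd hc x (Uzero hne) = x := by
  rw [Uadd_comm hc x _, Uzero_add hc hne x]

lemma Uneg_add_cancel (x : ↥(Uset (c := c))) :
    Uadd hc (Uneg (c := c) x) x = Uzero hne := by
  obtain ⟨E, hE, hx⟩ := mem_ex x
  apply Subtype.ext
  rw [Uadd_coe hc hE _ x (Uneg_mem hc hE x hx) hx, Uzero_coe hc hne hE]
  have e1 : (⟨((Uneg (c := c) x : ↥(Uset (c := c))) : S), Uneg_mem hc hE x hx⟩ : ↥E.car)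
      = -⟨(x : S), hx⟩ := Subtype.ext (Uneg_coe hc hE x hx)
  rw [e1, neg_add_cancel]

lemma Umul_assoc (x y z : ↥(Uset (c := c))) :
    Umul hc (Umul hc x y) z = Umul hc x (Umul hc y z) := by
  obtain ⟨E, hE, hx, hy, hz⟩ := mem_ex3 hc x y z
  apply Subtype.ext
  rw [Umul_coe hc hE _ z (Umul_mem hc hE x y hx hy) hz,
    Umul_coe hc hE x _ hx (Umul_mem hc hE y z hy hz)]
  have e1 : (⟨((Umul hc x y : ↥(Uset (c := c))) : S), Umul_mem hc hE x y hx hy⟩ : ↥E.car)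
      = ⟨(x : S), hx⟩ * ⟨(y : S), hy⟩ := Subtype.ext (Umul_coe hc hE x y hx hy)
  have e2 : (⟨((Umul hc y z : ↥(Uset (c := c))) : S), Umul_mem hc hE y z hy hz⟩ : ↥E.car)
      = ⟨(y : S), hy⟩ * ⟨(z : S), hz⟩ := Subtype.ext (Umul_coe hc hE y z hy hz)
  rw [e1, e2, mul_assoc]

lemma Umul_comm (x y : ↥(Uset (c := c))) : Umul hc x y = Umul hc y x := by
  obtain ⟨E, hE, hx, hy⟩ := mem_ex2 hc x y
  apply Subtype.ext
  rw [Umul_coe hc hE x y hx hy, Umul_coe hc hE y x hy hx, mul_comm]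

lemma Uone_mul (x : ↥(Uset (c := c))) : Umul hc (Uone hne) x = x := by
  obtain ⟨E, hE, hx⟩ := mem_ex x
  apply Subtype.ext
  rw [Umul_coe hc hE _ x (Uone_mem hc hne hE) hx]
  have e1 : (⟨((Uone hne : ↥(Uset (c := c))) : S), Uone_mem hc hne hE⟩ : ↥E.car)
      = 1 := Subtype.ext (Uone_coe hc hne hE)
  rw [e1, one_mul]

lemma Umul_one (x : ↥(Uset (c := c))) : Umul hc x (Uone hne) = x := by
  rw [Umul_comm hc x _, Uone_mul hc hne x]

lemma Uleft_distrib (x y z : ↥(Uset (c := c))) :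
    Umul hc x (Uadd hc y z) = Uadd hc (Umul hc x y) (Umul hc x z) := by
  obtain ⟨E, hE, hx, hy, hz⟩ := mem_ex3 hc x y z
  apply Subtype.ext
  rw [Umul_coe hc hE x _ hx (Uadd_mem hc hE y z hy hz),
    Uadd_coe hc hE _ _ (Umul_mem hc hE x y hx hy) (Umul_mem hc hE x z hx hz)]
  have e1 : (⟨((Uadd hc y z : ↥(Uset (c := c))) : S), Uadd_mem hc hE y z hy hz⟩ : ↥E.car)
      = ⟨(y : S), hy⟩ + ⟨(z : S), hz⟩ := Subtype.ext (Uadd_coe hc hE y z hy hz)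
  have e2 : (⟨((Umul hc x y : ↥(Uset (c := c))) : S), Umul_mem hc hE x y hx hy⟩ : ↥E.car)
      = ⟨(x : S), hx⟩ * ⟨(y : S), hy⟩ := Subtype.ext (Umul_coe hc hE x y hx hy)
  have e3 : (⟨((Umul hc x z : ↥(Uset (c := c))) : S), Umul_mem hc hE x z hx hz⟩ : ↥E.car)
      = ⟨(x : S), hx⟩ * ⟨(z : S), hz⟩ := Subtype.ext (Umul_coe hc hE x z hx hz)
  rw [e1, e2, e3, left_distrib]

lemma Uright_distrib (x y z : ↥(Uset (c := c))) :
    Umul hc (Uadd hc x y) z = Uadd hc (Umul hc x z) (Umul hc y z) := by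
  rw [Umul_comm hc _ z, Uleft_distrib hc z x y, Umul_comm hc z x, Umul_comm hc z y]

lemma Uzero_mul (x : ↥(Uset (c := c))) : Umul hc (Uzero hne) x = Uzero hne := by
  obtain ⟨E, hE, hx⟩ := mem_ex x
  apply Subtype.ext
  rw [Umul_coe hc hE _ x (Uzero_mem hc hne hE) hx]
  have e1 : (⟨((Uzero hne : ↥(Uset (c := c))) : S), Uzero_mem hc hne hE⟩ : ↥E.car)
      = 0 := Subtype.ext (Uzero_coe hc hne hE)
  rw [e1, zero_mul]
  exact (Uzero_coe hc hne hE).symm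

lemma Umul_zero (x : ↥(Uset (c := c))) : Umul hc x (Uzero hne) = Uzero hne := by
  rw [Umul_comm hc x _, Uzero_mul hc hne x]

/-- the commutative ring structure on the union of a chain. -/
noncomputable def Ucomm : CommRing ↥(Uset (c := c)) :=
  letI : Zero ↥(Uset (c := c)) := ⟨Uzero hne⟩
  letI : Add ↥(Uset (c := c)) := ⟨Uadd hc⟩
  letI : Neg ↥(Uset (c := c)) := ⟨Uneg (c := c)⟩
  letI : Mul ↥(Uset (c := c)) := ⟨Umul hc⟩
  letI : One ↥(Uset (c := c)) := ⟨Uone hne⟩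
  { add := Uadd hc,
    zero := Uzero hne,
    neg := Uneg (c := c),
    mul := Umul hc,
    one := Uone hne,
    add_assoc := Uadd_assoc hc,
    zero_add := Uzero_add hc hne,
    add_zero := Uadd_zero hc hne,
    add_comm := Uadd_comm hc,
    neg_add_cancel := Uneg_add_cancel hc hne,
    mul_assoc := Umul_assoc hc,
    one_mul := Uone_mul hc hne,
    mul_one := Umul_one hc hne,
    mul_comm := Umul_comm hc,
    left_distrib := Uleft_distrib hc,
    right_distrib := Uright_distrib hc,
    zero_mul := Uzero_mul hc hne,
    mul_zero := Umul_zero hc hne,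
    nsmul := nsmulRec,
    zsmul := zsmulRec }

/-- the field structure on the union of a chain. -/
noncomputable def Ufld : Field ↥(Uset (c := c)) :=
  letI := Ucomm hc hne
  IsField.toField
    { exists_pair_ne := by
        refine ⟨Uzero hne, Uone hne, fun h01 => ?_⟩
        have h2 := congrArg Subtype.val h01
        exact zero_ne_one (α := ↥(E0 c hne).car) (Subtype.ext h2)
      mul_comm := Umul_comm hc
      mul_inv_cancel := by
        intro a ha
        obtain ⟨E, hE, hxa⟩ := mem_ex a
        have ha' : (⟨(a : S), hxa⟩ : ↥E.car) ≠ 0 := by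
          intro h0
          apply ha
          apply Subtype.ext
          exact (congrArg Subtype.val h0).trans (Uzero_coe hc hne hE).symm
        refine ⟨⟨(((⟨(a : S), hxa⟩ : ↥E.car)⁻¹ : ↥E.car) : S),
          sub_Uset hE (Subtype.mem _)⟩, ?_⟩
        show Umul hc a _ = Uone hne
        apply Subtype.ext
        have hbmem : ((((⟨(a : S), hxa⟩ : ↥E.car)⁻¹ : ↥E.car) : S)) ∈ E.car :=
          Subtype.mem _
        rw [Umul_coe hc hE _ _ hxa hbmem]
        have e1 : (⟨(((⟨(a : S), hxa⟩ : ↥E.car)⁻¹ : ↥E.car) : S), hbmem⟩ : ↥E.car)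
            = (⟨(a : S), hxa⟩ : ↥E.car)⁻¹ := Subtype.ext rfl
        rw [e1, mul_inv_cancel₀ ha']
        exact (Uone_coe hc hne hE).symm }

/-- the valuation function on the union of a chain. -/
noncomputable def Uvalfun (x : ↥(Uset (c := c))) : Γ₀ :=
  (mem_ex x).choose.val ⟨(x : S), (mem_ex x).choose_spec.2⟩

lemma Uvalfun_eq {E : Ext v S} (hE : E ∈ c) (x : ↥(Uset (c := c)))
    (hx : (x : S) ∈ E.car) : Uvalfun (c := c) x = E.val ⟨(x : S), hx⟩ :=
  compat_val hc (mem_ex x).choose_spec.1 hE _ hx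

/-- the valuation on the union of a chain. -/
noncomputable def Uval :
    letI := Ufld hc hne
    Valuation (↥(Uset (c := c))) Γ₀ :=
  letI := Ufld hc hne
  { toFun := Uvalfun (c := c)
    map_zero' := by
      show Uvalfun (c := c) (Uzero hne) = 0
      rw [Uvalfun_eq hc (E0_mem hne) _ (Uzero_mem hc hne (E0_mem hne))]
      have e1 : (⟨((Uzero hne : ↥(Uset (c := c))) : S),
          Uzero_mem hc hne (E0_mem hne)⟩ : ↥(E0 c hne).car) = 0 :=
        Subtype.ext (Uzero_coe hc hne (E0_mem hne))
      rw [e1, map_zero]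
    map_one' := by
      show Uvalfun (c := c) (Uone hne) = 1
      rw [Uvalfun_eq hc (E0_mem hne) _ (Uone_mem hc hne (E0_mem hne))]
      have e1 : (⟨((Uone hne : ↥(Uset (c := c))) : S),
          Uone_mem hc hne (E0_mem hne)⟩ : ↥(E0 c hne).car) = 1 :=
        Subtype.ext (Uone_coe hc hne (E0_mem hne))
      rw [e1, map_one]
    map_mul' := by
      intro x y
      obtain ⟨E, hE, hx, hy⟩ := mem_ex2 hc x y
      show Uvalfun (c := c) (Umul hc x y) = _
      rw [Uvalfun_eq hc hE _ (Umul_mem hc hE x y hx hy)]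
      have e1 : (⟨((Umul hc x y : ↥(Uset (c := c))) : S),
          Umul_mem hc hE x y hx hy⟩ : ↥E.car)
          = ⟨(x : S), hx⟩ * ⟨(y : S), hy⟩ := Subtype.ext (Umul_coe hc hE x y hx hy)
      rw [e1, map_mul]
      exact (congrArg₂ (· * ·) (Uvalfun_eq hc hE x hx)
        (Uvalfun_eq hc hE y hy)).symm
    map_add_le_max' := by
      intro x y
      obtain ⟨E, hE, hx, hy⟩ := mem_ex2 hc x y
      show Uvalfun (c := c) (Uadd hc x y) ≤ _
      rw [Uvalfun_eq hc hE _ (Uadd_mem hc hE x y hx hy)]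
      have e1 : (⟨((Uadd hc x y : ↥(Uset (c := c))) : S),
          Uadd_mem hc hE x y hx hy⟩ : ↥E.car)
          = ⟨(x : S), hx⟩ + ⟨(y : S), hy⟩ := Subtype.ext (Uadd_coe hc hE x y hx hy)
      rw [e1]
      exact le_trans (E.val.map_add _ _)
        (le_of_eq (congrArg₂ max (Uvalfun_eq hc hE x hx)
          (Uvalfun_eq hc hE y hy)).symm) }

/-- the embedding of `K` into the union of a chain. -/
noncomputable def Uemb :
    letI := Ufld hc hne
    K →+* ↥(Uset (c := c)) :=
  letI := Ufld hc hne
  { toFun := fun a => ⟨(((E0 c hne).emb a : ↥(E0 c hne).car) : S),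
      sub_Uset (E0_mem hne) (Subtype.mem _)⟩
    map_one' := by
      apply Subtype.ext
      show (((E0 c hne).emb 1 : ↥(E0 c hne).car) : S) = ((Uone hne : ↥(Uset (c := c))) : S)
      rw [map_one]
      exact (Uone_coe hc hne (E0_mem hne)).symm
    map_mul' := by
      intro a b
      apply Subtype.ext
      show (((E0 c hne).emb (a * b) : ↥(E0 c hne).car) : S)
        = ((Umul hc _ _ : ↥(Uset (c := c))) : S)
      rw [Umul_coe hc (E0_mem hne) _ _ (Subtype.mem _) (Subtype.mem _), map_mul]
    map_zero' := by
      apply Subtype.ext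
      show (((E0 c hne).emb 0 : ↥(E0 c hne).car) : S) = ((Uzero hne : ↥(Uset (c := c))) : S)
      rw [map_zero]
      exact (Uzero_coe hc hne (E0_mem hne)).symm
    map_add' := by
      intro a b
      apply Subtype.ext
      show (((E0 c hne).emb (a + b) : ↥(E0 c hne).car) : S)
        = ((Uadd hc _ _ : ↥(Uset (c := c))) : S)
      rw [Uadd_coe hc (E0_mem hne) _ _ (Subtype.mem _) (Subtype.mem _), map_add] }

lemma Uemb_mem {E : Ext v S} (hE : E ∈ c) (a : K) :
    ((Uemb hc hne a : ↥(Uset (c := c))) : S) ∈ E.car := by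
  show (((E0 c hne).emb a : ↥(E0 c hne).car) : S) ∈ E.car
  rw [compat_emb hc (E0_mem hne) hE a]
  exact Subtype.mem _

lemma Uemb_eq {E : Ext v S} (hE : E ∈ c) (a : K) :
    (⟨((Uemb hc hne a : ↥(Uset (c := c))) : S), Uemb_mem hc hne hE a⟩ : ↥E.car)
      = E.emb a :=
  Subtype.ext (compat_emb hc (E0_mem hne) hE a)

lemma Usub_coe {E : Ext v S} (hE : E ∈ c) (x y : ↥(Uset (c := c)))
    (hx : (x : S) ∈ E.car) (hy : (y : S) ∈ E.car) :
    letI := Ufld hc hne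
    ((x - y : ↥(Uset (c := c))) : S) = ((⟨(x : S), hx⟩ - ⟨(y : S), hy⟩ : ↥E.car) : S) := by
  letI := Ufld hc hne
  show ((Uadd hc x (Uneg (c := c) y) : ↥(Uset (c := c))) : S) = _
  rw [Uadd_coe hc hE _ _ hx (Uneg_mem hc hE y hy)]
  have e1 : (⟨((Uneg (c := c) y : ↥(Uset (c := c))) : S), Uneg_mem hc hE y hy⟩ : ↥E.car)
      = -⟨(y : S), hy⟩ := Subtype.ext (Uneg_coe hc hE y hy)
  rw [e1, sub_eq_add_neg]

/-- immediacy of the union over `K`. -/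
lemma Uimm :
    letI := Ufld hc hne
    IsImmediateExtension v (Uval hc hne) (Uemb hc hne) := by
  letI := Ufld hc hne
  refine ⟨?_, ?_, ?_⟩
  · intro a
    show Uvalfun (c := c) _ = v a
    rw [Uvalfun_eq hc (E0_mem hne) _ (Uemb_mem hc hne (E0_mem hne) a),
      Uemb_eq hc hne (E0_mem hne) a]
    exact (E0 c hne).imm.1 a
  · intro y hy
    obtain ⟨E, hE, hmem⟩ := mem_ex y
    have hy' : (⟨(y : S), hmem⟩ : ↥E.car) ≠ 0 := by
      intro h0
      apply hy
      apply Subtype.ext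
      exact (congrArg Subtype.val h0).trans (Uzero_coe hc hne hE).symm
    obtain ⟨x, hx0, hxv⟩ := E.imm.2.1 _ hy'
    refine ⟨x, hx0, ?_⟩
    rw [hxv]
    exact (Uvalfun_eq hc hE y hmem).symm
  · intro y hy
    obtain ⟨E, hE, hmem⟩ := mem_ex y
    have hy1 : E.val ⟨(y : S), hmem⟩ ≤ 1 := by
      rw [← Uvalfun_eq hc hE y hmem]
      exact hy
    obtain ⟨x, hx1, hxv⟩ := E.imm.2.2 _ hy1
    refine ⟨x, hx1, ?_⟩
    have hsubmem : ((y - Uemb hc hne x : ↥(Uset (c := c))) : S) ∈ E.car := by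
      rw [Usub_coe hc hne hE y _ hmem (Uemb_mem hc hne hE x)]
      exact Subtype.mem _
    show Uvalfun (c := c) _ < 1
    rw [Uvalfun_eq hc hE _ hsubmem]
    have e1 : (⟨((y - Uemb hc hne x : ↥(Uset (c := c))) : S), hsubmem⟩ : ↥E.car)
        = ⟨(y : S), hmem⟩ - E.emb x := by
      apply Subtype.ext
      rw [← Uemb_eq hc hne hE x]
      exact Usub_coe hc hne hE y _ hmem (Uemb_mem hc hne hE x)
    rw [e1]
    exact hxv

/-- the union of a chain as an `Ext`. -/
noncomputable def UExt : Ext v S :=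
  { car := Uset (c := c)
    fld := Ufld hc hne
    val := Uval hc hne
    emb := Uemb hc hne
    imm := Uimm hc hne }

lemma le_UExt {E : Ext v S} (hE : E ∈ c) : ExtLE v S E (UExt hc hne) := by
  refine ⟨sub_Uset hE, ?_, ?_, ?_, ?_, ?_⟩
  · intro x y
    apply Subtype.ext
    show ((x + y : ↥E.car) : S) = ((Uadd hc _ _ : ↥(Uset (c := c))) : S)
    exact (Uadd_coe hc hE (Set.inclusion (sub_Uset hE) x) (Set.inclusion (sub_Uset hE) y) x.2 y.2).symm
  · intro x y
    apply Subtype.ext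
    show ((x * y : ↥E.car) : S) = ((Umul hc _ _ : ↥(Uset (c := c))) : S)
    exact (Umul_coe hc hE (Set.inclusion (sub_Uset hE) x) (Set.inclusion (sub_Uset hE) y) x.2 y.2).symm
  · apply Subtype.ext
    show ((1 : ↥E.car) : S) = ((Uone hne : ↥(Uset (c := c))) : S)
    exact (Uone_coe hc hne hE).symm
  · intro x
    show Uvalfun (c := c) _ = E.val x
    exact Uvalfun_eq hc hE (Set.inclusion (sub_Uset hE) x) x.2
  · intro a
    apply Subtype.ext
    show ((E.emb a : ↥E.car) : S) = _
    exact (compat_emb hc (E0_mem hne) hE a).symm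

end Chain
end Zorn

section Transport

lemma imm_refl {K : Type u} [Field K] {Γ₀ : Type v} [LinearOrderedCommGroupWithZero Γ₀]
    (v : Valuation K Γ₀) : IsImmediateExtension v v (RingHom.id K) := by
  refine ⟨fun x => rfl, fun y hy => ⟨y, hy, rfl⟩, fun y hy => ⟨y, hy, ?_⟩⟩
  simp only [RingHom.id_apply, sub_self, map_zero]
  exact zero_lt_one

lemma imm_trans {K : Type u} {M : Type u} {N : Type u} [Field K] [Field M] [Field N]
    {Γ₀ : Type v} [LinearOrderedCommGroupWithZero Γ₀]
    {v : Valuation K Γ₀} {w : Valuation M Γ₀} {t : Valuation N Γ₀}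
    {ι : K →+* M} {j : M →+* N}
    (h1 : IsImmediateExtension v w ι) (h2 : IsImmediateExtension w t j) :
    IsImmediateExtension v t (j.comp ι) := by
  refine ⟨fun x => ?_, fun y hy => ?_, fun y hy => ?_⟩
  · rw [RingHom.comp_apply, h2.1, h1.1]
  · obtain ⟨m, hm0, hmv⟩ := h2.2.1 y hy
    obtain ⟨x, hx0, hxv⟩ := h1.2.1 m hm0
    exact ⟨x, hx0, by rw [hxv, hmv]⟩
  · obtain ⟨m, hm1, hmy⟩ := h2.2.2 y hy
    obtain ⟨x, hx1, hxm⟩ := h1.2.2 m hm1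
    refine ⟨x, hx1, ?_⟩
    have key : y - (j.comp ι) x = (y - j m) + j (m - ι x) := by
      rw [map_sub, RingHom.comp_apply]
      ring
    rw [key]
    refine lt_of_le_of_lt (t.map_add _ _) (max_lt hmy ?_)
    rw [h2.1]
    exact hxm

variable {K : Type u} [Field K] {Γ₀ : Type v} [LinearOrderedCommGroupWithZero Γ₀]
  (v : Valuation K Γ₀) {S : Type u}
  (N : Type u) [Field N] (t : Valuation N Γ₀) (ι' : K →+* N)
  (himm : IsImmediateExtension v t ι') (g : N ↪ S)

/-- the equivalence between the range of `g` and `N`. -/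
noncomputable def mkEquiv : ↥(Set.range (⇑g)) ≃ N :=
  (Equiv.ofInjective (⇑g) g.injective).symm

/-- transported field structure. -/
noncomputable def mkFld : Field ↥(Set.range (⇑g)) := (mkEquiv N g).field

/-- the ring equivalence between the range of `g` and `N`. -/
noncomputable def mkRe :
    letI := mkFld N g
    ↥(Set.range (⇑g)) ≃+* N :=
  letI := mkFld N g
  Equiv.ringEquiv (mkEquiv N g)

lemma mkRe_apply (x : ↥(Set.range (⇑g))) : mkRe N g x = mkEquiv N g x := rfl

lemma mkEquiv_g (n : N) (hn : g n ∈ Set.range (⇑g)) : mkEquiv N g ⟨g n, hn⟩ = n :=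
  Equiv.ofInjective_symm_apply g.injective n

/-- the transported `Ext`. -/
noncomputable def mkExt : Ext v S :=
  letI := mkFld N g
  { car := Set.range (⇑g)
    fld := mkFld N g
    val := t.comap (mkRe N g).toRingHom
    emb := (mkRe N g).symm.toRingHom.comp ι'
    imm := by
      constructor
      · intro a
        show t ((mkRe N g) ((mkRe N g).symm (ι' a))) = v a
        rw [RingEquiv.apply_symm_apply]
        exact himm.1 a
      constructor
      · intro y hy
        have hre : (mkRe N g) y ≠ 0 := by
          intro e0
          apply hy
          have := congrArg (mkRe N g).symm e0
          rwa [RingEquiv.symm_apply_apply, map_zero] at this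
        obtain ⟨x, hx0, hxv⟩ := himm.2.1 _ hre
        exact ⟨x, hx0, hxv⟩
      · intro y hy
        obtain ⟨x, hx1, hlt⟩ := himm.2.2 ((mkRe N g) y) hy
        refine ⟨x, hx1, ?_⟩
        show t ((mkRe N g) (y - (mkRe N g).symm.toRingHom.comp ι' x)) < 1
        rw [map_sub]
        have e2 : (mkRe N g) (((mkRe N g).symm.toRingHom.comp ι') x) = ι' x := by
          show (mkRe N g) ((mkRe N g).symm (ι' x)) = ι' x
          exact RingEquiv.apply_symm_apply _ _
        rw [e2]
        exact hlt }

end Transport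
end KrullAux

open KrullAux in
/-- Every valued field has a maximally complete immediate extension. -/
theorem exists_maximally_complete_immediate_extension
    {K : Type u} [Field K]
    {Γ₀ : Type v} [LinearOrderedCommGroupWithZero Γ₀] (v : Valuation K Γ₀) :
    ∃ (M : Type u) (_ : Field M) (u : Valuation M Γ₀) (ι : K →+* M),
      IsImmediateExtension v u ι ∧ IsMaximallyComplete u := by
  classical
  set B : Cardinal.{u} := 2 ^ Order.succ (#K + ℵ₀) with hB
  set S : Type u := (Order.succ B).out with hSdef
  have hScard : #S = Order.succ B := Cardinal.mk_out _
  have hBinf : ℵ₀ ≤ B := by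
    calc ℵ₀ ≤ #K + ℵ₀ := self_le_add_left _ _
      _ ≤ Order.succ (#K + ℵ₀) := Order.le_succ _
      _ ≤ 2 ^ Order.succ (#K + ℵ₀) := (Cardinal.cantor _).le
  have hSinf : ℵ₀ ≤ #S := by
    rw [hScard]; exact hBinf.trans (Order.le_succ B)
  haveI : Infinite S := Cardinal.infinite_iff.2 hSinf
  have hKS : #K ≤ #S := by
    rw [hScard]
    calc #K ≤ #K + ℵ₀ := self_le_add_right _ _
      _ ≤ Order.succ (#K + ℵ₀) := Order.le_succ _
      _ ≤ B := (Cardinal.cantor _).le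
      _ ≤ Order.succ B := Order.le_succ _
  obtain ⟨g₀⟩ := (Cardinal.le_def K S).1 hKS
  have base : Ext v S := mkExt v K v (RingHom.id K) (imm_refl v) g₀
  obtain ⟨m, hm⟩ := exists_maximal_of_chains_bounded (r := ExtLE v S)
    (fun c hc => by
      rcases Set.eq_empty_or_nonempty c with rfl | hne
      · exact ⟨base, fun a ha => absurd ha (Set.notMem_empty a)⟩
      · exact ⟨UExt hc hne, fun E hE => le_UExt hc hne hE⟩)
    (fun {a b c} h1 h2 => ExtLE.trans h1 h2)
  refine ⟨↥m.car, m.fld, m.val, m.emb, m.imm, ?_⟩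
  intro N fldN t j himm
  letI := fldN
  by_contra hns
  rw [Function.Surjective] at hns
  push_neg at hns
  obtain ⟨n₀, hn₀⟩ := hns
  have himm' : IsImmediateExtension v t (j.comp m.emb) := imm_trans m.imm himm
  have hMcar : #↥m.car ≤ B := card_le_of_immediate m.imm
  have hNcard : #N ≤ B := card_le_of_immediate himm'
  have hMlt : #↥m.car < #S := by
    rw [hScard]; exact lt_of_le_of_lt hMcar (Order.lt_succ B)
  have hcompl : #↥(m.carᶜ) = #S := Cardinal.mk_compl_of_infinite m.car hMlt
  have hsubN : #{n : N // n ∉ Set.range ⇑j} ≤ #↥(m.carᶜ) := by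
    rw [hcompl, hScard]
    exact (Cardinal.mk_subtype_le _).trans (hNcard.trans (Order.le_succ B))
  obtain ⟨h'⟩ := (Cardinal.le_def _ _).1 hsubN
  set g0 : N → S := fun n =>
    if h : n ∈ Set.range ⇑j then ((h.choose : ↥m.car) : S)
    else ((h' ⟨n, h⟩ : ↥(m.carᶜ)) : S) with hg0
  have hg0_in : ∀ (n : N) (h : n ∈ Set.range ⇑j),
      g0 n = ((h.choose : ↥m.car) : S) := fun n h => dif_pos h
  have hg0_out : ∀ (n : N) (h : n ∉ Set.range ⇑j),
      g0 n = ((h' ⟨n, h⟩ : ↥(m.carᶜ)) : S) := fun n h => dif_neg h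
  have hjinj : Function.Injective ⇑j := j.injective
  have hkey1 : ∀ x : ↥m.car, g0 (j x) = (x : S) := by
    intro x
    have hmem : j x ∈ Set.range ⇑j := ⟨x, rfl⟩
    rw [hg0_in _ hmem]
    have hx := hjinj hmem.choose_spec
    rw [hx]
  have hg0inj : Function.Injective g0 := by
    intro n1 n2 heq
    by_cases h1 : n1 ∈ Set.range ⇑j <;> by_cases h2 : n2 ∈ Set.range ⇑j
    · rw [hg0_in _ h1, hg0_in _ h2] at heq
      rw [← h1.choose_spec, ← h2.choose_spec, Subtype.coe_injective heq]
    · rw [hg0_in _ h1, hg0_out _ h2] at heq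
      have hmem := (h1.choose).2
      rw [heq] at hmem
      exact absurd hmem (h' ⟨n2, h2⟩).2
    · rw [hg0_out _ h1, hg0_in _ h2] at heq
      have hmem := (h2.choose).2
      rw [← heq] at hmem
      exact absurd hmem (h' ⟨n1, h1⟩).2
    · rw [hg0_out _ h1, hg0_out _ h2] at heq
      have hinj := h'.injective (Subtype.coe_injective heq)
      exact congrArg Subtype.val hinj
  set g : N ↪ S := ⟨g0, hg0inj⟩ with hgdef
  set E' := mkExt v N t (j.comp m.emb) himm' g with hE'
  have hsub : m.car ⊆ Set.range ⇑g := by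
    intro a ha
    exact ⟨j ⟨a, ha⟩, hkey1 ⟨a, ha⟩⟩
  have hkey2 : ∀ x : ↥m.car, mkEquiv N g (Set.inclusion hsub x) = j x := by
    intro x
    have hx : Set.inclusion hsub x = ⟨⇑g (j x), Set.mem_range_self _⟩ :=
      Subtype.ext (hkey1 x).symm
    rw [hx]
    exact mkEquiv_g N g (j x) _
  have hkey2' : ∀ x : ↥m.car, mkEquiv N g (Set.inclusion (t := E'.car) hsub x) = j x := hkey2
  have hle : ExtLE v S m E' := by
    letI := mkFld N g
    refine ⟨hsub, ?_, ?_, ?_, ?_, ?_⟩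
    · intro x y
      apply (mkEquiv N g).injective
      rw [hkey2', map_add]
      have := map_add (mkRe N g) (Set.inclusion hsub x) (Set.inclusion hsub y)
      rw [mkRe_apply, mkRe_apply, mkRe_apply, hkey2, hkey2] at this
      exact this.symm
    · intro x y
      apply (mkEquiv N g).injective
      rw [hkey2', map_mul]
      have := map_mul (mkRe N g) (Set.inclusion hsub x) (Set.inclusion hsub y)
      rw [mkRe_apply, mkRe_apply, mkRe_apply, hkey2, hkey2] at this
      exact this.symm
    · apply (mkEquiv N g).injective
      rw [hkey2', map_one]
      exact (map_one (mkRe N g)).symm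
    · intro x
      show t ((mkRe N g) (Set.inclusion hsub x)) = m.val x
      rw [mkRe_apply, hkey2]
      exact himm.1 x
    · intro a
      apply (mkEquiv N g).injective
      rw [hkey2']
      show j (m.emb a) = (mkEquiv N g) ((mkRe N g).symm ((j.comp m.emb) a))
      rw [← mkRe_apply, RingEquiv.apply_symm_apply, RingHom.comp_apply]
  obtain ⟨hsub', -, -, -, -, -⟩ := hm E' hle
  have hn0r : n₀ ∉ Set.range ⇑j := fun ⟨x, hx⟩ => hn₀ x hx
  have hin : (⇑g n₀) ∈ E'.car := Set.mem_range_self n₀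
  have h2 := hsub' hin
  have h3 : g0 n₀ ∈ m.carᶜ := by
    rw [hg0_out n₀ hn0r]
    exact (h' _).2
  exact h3 h2
end

section
/- Let (K, v) be a maximally complete valued field of characteristic p > 0 with divisible value group G = v(K*) and residue field F_q. Let F = F_{q^m} ⊆ K̄ be the finite field with q^m elements inside an algebraic closure of K, let L = F·K be the compositum, a Galois extension of K of degree m with Gal(L/K) ≅ Gal(F/F_q), and extend v to the (unique) valuation on L, which satisfies v(σ(x)) = v(x) for all σ ∈ Gal(L/K) and x ∈ L* and has value group G. Let x_0 ∈ L and g ∈ G, let D̄ = { x ∈ L : v(x − x_0) ≥ g } be the closed disk, and let I = { σ ∈ Gal(L/K) : σ(D̄) = D̄ } be the subgroup of the Galois group mapping D̄ into itself. Then there exists x_1 ∈ D̄ such that the open disk D(x_1, g) = { x ∈ L : v(x − x_1) > g } is mapped to itself by every σ ∈ I. -/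
universe u v

section AuxLemmas

lemma gz_eq_one {Γ₀ : Type*} [LinearOrderedCommGroupWithZero Γ₀]
    {u : Γ₀} (hu : u ≠ 0) {N : ℕ} (hN : 2 ≤ N) (h : u ^ N = u) : u = 1 := by
  rcases lt_trichotomy u 1 with hlt | he | hgt
  · have : u ^ N < u ^ 1 := by
      apply pow_lt_pow_right_of_lt_one₀ (zero_lt_iff.2 hu) hlt (by omega)
    simp [h] at this
  · exact he
  · have : u ^ 1 < u ^ N := by
      apply pow_lt_pow_right₀ hgt (by omega)
    simp [h] at this

lemma val_isUnit_iff {F : Type*} [Field F] {Γ : Type*} [LinearOrderedCommGroupWithZero Γ]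
    (u : Valuation F Γ) (x : u.valuationSubring) : IsUnit x ↔ u (x : F) = 1 := by
  constructor
  · rintro ⟨c, rfl⟩
    have h1 : ((c : u.valuationSubring) : F) * (((c⁻¹ : _ˣ) : u.valuationSubring) : F) = 1 := by
      have := c.mul_inv
      exact_mod_cast congrArg (fun z : u.valuationSubring => (z : F)) this
    have h2 := congrArg u h1
    rw [Valuation.map_mul, Valuation.map_one] at h2
    have hle1 : u ((c : u.valuationSubring) : F) ≤ 1 := (c : u.valuationSubring).2
    have hle2 : u (((c⁻¹ : _ˣ) : u.valuationSubring) : F) ≤ 1 := ((c⁻¹ : _ˣ) : u.valuationSubring).2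
    refine le_antisymm hle1 ?_
    calc (1 : Γ) = u ((c : u.valuationSubring) : F) * u (((c⁻¹ : _ˣ) : u.valuationSubring) : F) :=
          h2.symm
      _ ≤ u ((c : u.valuationSubring) : F) * 1 := mul_le_mul_right hle2 _
      _ = u ((c : u.valuationSubring) : F) := mul_one _
  · intro hx
    have hx0 : (x : F) ≠ 0 := by
      intro h0
      rw [h0, Valuation.map_zero] at hx
      exact zero_ne_one hx
    have hmul : u ((x : F)⁻¹) * u (x : F) = 1 := by
      rw [← Valuation.map_mul, inv_mul_cancel₀ hx0, Valuation.map_one]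
    have hinv : u ((x : F)⁻¹) ≤ 1 := by
      rw [hx, mul_one] at hmul
      exact le_of_eq hmul
    refine isUnit_iff_exists_inv.mpr ⟨⟨(x : F)⁻¹, hinv⟩, ?_⟩
    ext
    push_cast
    exact mul_inv_cancel₀ hx0

lemma val_residue_eq_iff {F : Type*} [Field F] {Γ : Type*} [LinearOrderedCommGroupWithZero Γ]
    (u : Valuation F Γ) (x y : u.valuationSubring) :
    IsLocalRing.residue u.valuationSubring x = IsLocalRing.residue u.valuationSubring y ↔
      u ((x : F) - (y : F)) < 1 := by
  have h1 : IsLocalRing.residue u.valuationSubring x = IsLocalRing.residue u.valuationSubring y ↔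
      IsLocalRing.residue u.valuationSubring (x - y) = 0 := by
    rw [map_sub, sub_eq_zero]
  rw [h1]
  have h2 : IsLocalRing.residue u.valuationSubring (x - y) = 0 ↔
      (x - y) ∈ IsLocalRing.maximalIdeal u.valuationSubring :=
    Ideal.Quotient.eq_zero_iff_mem
  rw [h2, IsLocalRing.mem_maximalIdeal, mem_nonunits_iff, val_isUnit_iff]
  have hle : u ((x - y : u.valuationSubring) : F) ≤ 1 := (x - y).2
  have hco : ((x - y : u.valuationSubring) : F) = (x : F) - (y : F) := by push_cast; ring
  rw [hco] at hle ⊢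
  constructor
  · intro hne
    exact lt_of_le_of_ne hle hne
  · intro hlt
    exact ne_of_lt hlt

lemma isCyclic_ringAut (k : Type*) [Field k] [Finite k] : IsCyclic (k ≃+* k) := by
  cases nonempty_fintype k
  obtain ⟨p, hpc⟩ := CharP.exists k
  haveI : CharP k p := hpc
  haveI hfp : Fact p.Prime := ⟨CharP.char_is_prime k p⟩
  letI : Algebra (ZMod p) k := ZMod.algebra k p
  haveI : Finite (k ≃ₐ[ZMod p] k) :=
    Finite.of_injective (fun f => (f : k → k)) (fun f g h => AlgEquiv.ext (congrFun h))
  have hcomm : ∀ (f : k ≃+* k) (x : ZMod p),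
      f (algebraMap (ZMod p) k x) = algebraMap (ZMod p) k x := by
    intro f x
    have : (f.toRingHom.comp (algebraMap (ZMod p) k)) = algebraMap (ZMod p) k :=
      RingHom.ext_zmod _ _
    exact RingHom.congr_fun this x
  let e : (k ≃ₐ[ZMod p] k) ≃* (k ≃+* k) :=
    { toFun := fun f => f.toRingEquiv
      invFun := fun f => AlgEquiv.ofRingEquiv (f := f) (hcomm f)
      left_inv := fun f => by ext x; rfl
      right_inv := fun f => by ext x; rfl
      map_mul' := fun f g => by ext x; rfl }
  haveI : IsCyclic (k ≃ₐ[ZMod p] k) := by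
    obtain ⟨d, hd⟩ : ∃ d, Module.finrank (ZMod p) k = d := ⟨_, rfl⟩
    have hcard : Fintype.card (k ≃ₐ[ZMod p] k) = d := by
      rw [← Nat.card_eq_fintype_card, IsGalois.card_aut_eq_finrank, hd]
    have hkcard : Fintype.card k = p ^ d := by
      have := Module.card_eq_pow_finrank (K := ZMod p) (V := k)
      rwa [ZMod.card, hd] at this
    let φ : k ≃ₐ[ZMod p] k := AlgEquiv.ofRingEquiv (f := frobeniusEquiv k p)
      (fun x => by
        have : ((frobeniusEquiv k p : k →+* k).comp (algebraMap (ZMod p) k))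
            = algebraMap (ZMod p) k := RingHom.ext_zmod _ _
        exact RingHom.congr_fun this x)
    have hφpow : ∀ (i : ℕ) (x : k), (φ ^ i) x = x ^ p ^ i := by
      intro i
      induction i with
      | zero => intro x; simp
      | succ n ih =>
        intro x
        rw [pow_succ', AlgEquiv.mul_apply, ih]
        show (frobeniusEquiv k p) _ = _
        rw [frobeniusEquiv_def, ← pow_mul, pow_succ', mul_comm p (p ^ n)]
    have hd_pos : 0 < d := hd ▸ Module.finrank_pos
    apply isCyclic_of_orderOf_eq_card φ
    rw [Nat.card_eq_fintype_card, hcard]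
    have h1 : φ ^ d = 1 := by
      ext x
      rw [hφpow, ← hkcard]
      simp [FiniteField.pow_card]
    have h2 : ∀ i, 0 < i → i < d → φ ^ i ≠ 1 := by
      intro i hi0 hid heq
      obtain ⟨g, hg⟩ := IsCyclic.exists_generator (α := kˣ)
      have hog : orderOf g = Fintype.card k - 1 := by
        have := orderOf_eq_card_of_forall_mem_zpowers hg
        rwa [Nat.card_units, Nat.card_eq_fintype_card] at this
      have hgx : ((g : k)) ^ p ^ i = (g : k) := by
        have := congrArg (fun f => (f : k ≃ₐ[ZMod p] k) (g : k)) heq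
        simpa [hφpow] using this
      have hp1 : 1 ≤ p ^ i := Nat.one_le_pow _ _ hfp.1.pos
      have hgu : g ^ (p ^ i) = g :=
        Units.ext (by push_cast [Units.val_pow_eq_pow_val]; exact hgx)
      have hone : g ^ (p ^ i - 1) = 1 := by
        have hh : g ^ (p ^ i - 1) * g = 1 * g := by
          rw [one_mul, ← pow_succ, Nat.sub_add_cancel hp1]; exact hgu
        exact mul_right_cancel hh
      have hdvd : Fintype.card k - 1 ∣ p ^ i - 1 := by
        rw [← hog]; exact orderOf_dvd_of_pow_eq_one hone
      have hlt : p ^ i - 1 < Fintype.card k - 1 := by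
        rw [hkcard]
        have h3 : p ^ i < p ^ d := Nat.pow_lt_pow_right hfp.1.one_lt hid
        omega
      have hpos : 0 < p ^ i - 1 := by
        have : 2 ≤ p ^ i := le_trans hfp.1.two_le (Nat.le_self_pow (by omega) p)
        omega
      exact absurd (Nat.le_of_dvd hpos hdvd) (by omega)
    have hdvd : orderOf φ ∣ d := orderOf_dvd_of_pow_eq_one h1
    have hpos : 0 < orderOf φ := orderOf_pos φ
    rcases Nat.lt_or_ge (orderOf φ) d with hlt | hge
    · exact absurd (pow_orderOf_eq_one φ) (h2 _ hpos hlt)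
    · exact le_antisymm (Nat.le_of_dvd hd_pos hdvd) hge
  exact isCyclic_of_surjective e e.surjective

lemma addH90 {k : Type*} [Field k] [Finite k] (f : k ≃+* k) {n : ℕ} (hn : 0 < n)
    (hord : orderOf f = n) (a : k) (ha : ∑ i ∈ Finset.range n, (f ^ i) a = 0) :
    ∃ u : k, f u - u = a := by
  have fn : f ^ n = 1 := by rw [← hord]; exact pow_orderOf_eq_one f
  have fpow_apply : ∀ (i : ℕ) (x : k), (f ^ (i+1)) x = f ((f ^ i) x) := by
    intro i x; rw [pow_succ']; rfl
  let T : k →+ k :=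
    { toFun := fun x => ∑ i ∈ Finset.range n, (f ^ i) x
      map_zero' := by simp
      map_add' := fun x y => by
        simp [map_add, Finset.sum_add_distrib] }
  let E : k →+ k :=
    { toFun := fun x => f x - x
      map_zero' := by simp
      map_add' := fun x y => by simp [map_add]; ring }
  have hTdef : ∀ x, T x = ∑ i ∈ Finset.range n, (f ^ i) x := fun _ => rfl
  have hEdef : ∀ x, E x = f x - x := fun _ => rfl
  have key1 : ∀ x, T (f x) = T x := by
    intro x
    have hA : ∑ i ∈ Finset.range (n+1), (f ^ i) x = T x + x := by
      rw [Finset.sum_range_succ, hTdef]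
      congr 1
      rw [fn]; rfl
    have hA' : ∑ i ∈ Finset.range (n+1), (f ^ i) x
        = (∑ i ∈ Finset.range n, (f ^ (i+1)) x) + x := by
      rw [Finset.sum_range_succ', pow_zero]; rfl
    have : ∑ i ∈ Finset.range n, (f ^ (i+1)) x = T x := by
      have := hA.symm.trans hA'
      exact (add_right_cancel this).symm
    rw [hTdef]
    calc ∑ i ∈ Finset.range n, (f ^ i) (f x)
        = ∑ i ∈ Finset.range n, (f ^ (i+1)) x := by
          apply Finset.sum_congr rfl
          intro i _
          rw [pow_succ]; rfl
      _ = T x := this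
  have key2 : ∀ x, f (T x) = T x := by
    intro x
    have : f (T x) = ∑ i ∈ Finset.range n, (f ^ (i+1)) x := by
      rw [hTdef, map_sum]
      exact Finset.sum_congr rfl fun i _ => (fpow_apply i x).symm
    rw [this]
    have hA : ∑ i ∈ Finset.range (n+1), (f ^ i) x = T x + x := by
      rw [Finset.sum_range_succ, hTdef]
      congr 1
      rw [fn]; rfl
    have hA' : ∑ i ∈ Finset.range (n+1), (f ^ i) x
        = (∑ i ∈ Finset.range n, (f ^ (i+1)) x) + x := by
      rw [Finset.sum_range_succ', pow_zero]; rfl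
    exact add_right_cancel (hA'.symm.trans hA)
  have hTE : ∀ x, T (E x) = 0 := by
    intro x
    rw [hEdef, map_sub, key1, sub_self]
  have hfix_pow : ∀ (c : k), f c = c → ∀ i, (f ^ i) c = c := by
    intro c hc i
    induction i with
    | zero => rfl
    | succ j ih => rw [fpow_apply, ih, hc]
  have hTlin : ∀ (c x : k), f c = c → T (c * x) = c * T x := by
    intro c x hc
    rw [hTdef, hTdef, Finset.mul_sum]
    exact Finset.sum_congr rfl fun i _ => by rw [map_mul, hfix_pow c hc i]
  haveI : Finite (k ≃+* k) :=
    Finite.of_injective (fun g => (g : k → k)) (fun g h hgh => RingEquiv.ext (congrFun hgh))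
  have hTne : ∃ x, T x ≠ 0 := by
    by_contra hcon
    push_neg at hcon
    have hinj : Function.Injective (fun i : Fin n => ((f ^ (i : ℕ) : k ≃+* k) : k →* k)) := by
      intro i j hij
      have : (f ^ (i : ℕ) : k ≃+* k) = f ^ (j : ℕ) := by
        ext x
        exact DFunLike.congr_fun hij x
      have := pow_injOn_Iio_orderOf (x := f)
        (by rw [hord]; exact i.2) (by rw [hord]; exact j.2) this
      exact Fin.ext this
    have hli := (linearIndependent_monoidHom k k).comp _ hinj
    have := Fintype.linearIndependent_iff.mp hli (fun _ => (1 : k)) ?_ ⟨0, hn⟩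
    · exact one_ne_zero this
    · funext x
      have h1 : ∑ i : Fin n, ((f ^ (i : ℕ)) x) = T x := by
        rw [hTdef, Finset.sum_range fun i => (f ^ i) x]
      rw [Finset.sum_apply]
      simp only [Pi.smul_apply, one_smul, Function.comp_apply, MonoidHom.coe_coe,
        Pi.zero_apply]
      rw [h1]
      exact hcon x
  have hrange_eq : T.range = E.ker := by
    ext s
    simp only [AddMonoidHom.mem_range, AddMonoidHom.mem_ker]
    constructor
    · rintro ⟨x, rfl⟩
      rw [hEdef, key2, sub_self]
    · intro hs
      have hfs : f s = s := by
        have := hs; rw [hEdef] at this; exact sub_eq_zero.mp this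
      obtain ⟨x₀, hx₀⟩ := hTne
      refine ⟨s / T x₀ * x₀, ?_⟩
      have hfq : f (s / T x₀) = s / T x₀ := by
        rw [map_div₀, hfs, key2]
      rw [hTlin _ _ hfq, div_mul_cancel₀ _ hx₀]
  have hcardT : Nat.card k = Nat.card T.ker * Nat.card T.range := by
    rw [AddSubgroup.card_eq_card_quotient_mul_card_addSubgroup T.ker,
      Nat.card_congr (QuotientAddGroup.quotientKerEquivRange T).toEquiv, mul_comm]
  have hcardE : Nat.card k = Nat.card E.ker * Nat.card E.range := by
    rw [AddSubgroup.card_eq_card_quotient_mul_card_addSubgroup E.ker,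
      Nat.card_congr (QuotientAddGroup.quotientKerEquivRange E).toEquiv, mul_comm]
  have hEker_pos : 0 < Nat.card E.ker := Nat.card_pos
  have hcards : Nat.card E.range = Nat.card T.ker := by
    have h0 := hcardT.symm.trans hcardE
    rw [hrange_eq] at h0
    have h2 : Nat.card E.ker * Nat.card T.ker = Nat.card E.ker * Nat.card E.range := by
      rw [mul_comm]; exact h0
    exact (Nat.eq_of_mul_eq_mul_left hEker_pos h2).symm
  have hle : E.range ≤ T.ker := by
    rintro y ⟨x, rfl⟩
    exact hTE x
  have hset : (E.range : Set k) = (T.ker : Set k) := by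
    apply Set.eq_of_subset_of_ncard_le hle
    rw [← Nat.card_coe_set_eq, ← Nat.card_coe_set_eq]
    simp only [SetLike.coe_sort_coe]
    rw [hcards]
  have : a ∈ E.range := by
    have haT : a ∈ T.ker := ha
    rw [← SetLike.mem_coe, hset]
    exact haT
  obtain ⟨u, hu⟩ := this
  exact ⟨u, hu⟩

end AuxLemmas

set_option maxHeartbeats 1000000 in
theorem exists_galois_stable_open_disk
    {K : Type u} [Field K] {p : ℕ} [hp : Fact p.Prime] [CharP K p]
    {Γ₀ : Type u} [LinearOrderedCommGroupWithZero Γ₀] (v : Valuation K Γ₀)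
    (hmax : IsMaximallyComplete v)
    (hdiv : ∀ x : K, x ≠ 0 → ∀ m : ℕ, 1 ≤ m → ∃ y : K, y ≠ 0 ∧ (v y) ^ m = v x)
    {q : ℕ} (hq : Nat.card (IsLocalRing.ResidueField v.valuationSubring) = q)
    (hqp : ∃ e : ℕ, 1 ≤ e ∧ q = p ^ e)
    -- `L = F_{q^m} · K`, a Galois extension of `K` of degree `m`
    {L : Type u} [Field L] [Algebra K L] [IsGalois K L] [FiniteDimensional K L]
    {m : ℕ} (hm : 1 ≤ m) (hdeg : Module.finrank K L = m)
    (hgen : IntermediateField.adjoin K {x : L | x ^ q ^ m = x} = ⊤)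
    -- `w` is the unique extension of `v` to `L`: it is Galois-invariant and
    -- has the same value group `G = v(K*)`
    (w : Valuation L Γ₀)
    (hext : ∀ x : K, w (algebraMap K L x) = v x)
    (hinv : ∀ (σ : L ≃ₐ[K] L) (x : L), w (σ x) = w x)
    (hgrp : ∀ y : L, y ≠ 0 → ∃ x : K, x ≠ 0 ∧ w y = v x)
    -- the closed disk `D̄ = D̄(x₀, g)` with `g ∈ G`
    (x₀ : L) (g : Γ₀) (hg : g ≠ 0) (hgG : ∃ b : K, b ≠ 0 ∧ v b = g) :
    ∃ x₁ : L, w (x₁ - x₀) ≤ g ∧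
      ∀ σ : L ≃ₐ[K] L,
        σ '' {x : L | w (x - x₀) ≤ g} = {x : L | w (x - x₀) ≤ g} →
        ∀ x : L, w (x - x₁) < g → w (σ x - x₁) < g := by
    classical
  obtain ⟨e, he1, hqe⟩ := hqp
  have hq2 : 2 ≤ q := by
    rw [hqe]
    calc 2 ≤ p := hp.1.two_le
      _ ≤ p ^ e := Nat.le_self_pow (by omega) p
  have hqm2 : 2 ≤ q ^ m := le_trans hq2 (Nat.le_self_pow (by omega) q)
  haveI hCharL : CharP L p := charP_of_injective_algebraMap (algebraMap K L).injective p
  -- residue fields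
  have hsurjL : Function.Surjective (IsLocalRing.residue w.valuationSubring) :=
    IsLocalRing.residue_surjective
  have hsurjK : Function.Surjective (IsLocalRing.residue v.valuationSubring) :=
    IsLocalRing.residue_surjective
  haveI hfinK : Finite (IsLocalRing.ResidueField v.valuationSubring) := by
    have : 0 < Nat.card (IsLocalRing.ResidueField v.valuationSubring) := by omega
    exact (Nat.card_pos_iff.mp this).2
  set ρ := IsLocalRing.residue w.valuationSubring with hρ
  set ρK := IsLocalRing.residue v.valuationSubring with hρK
  -- restriction of a Galois automorphism to the valuation subring
  let rhom : (L ≃ₐ[K] L) → (w.valuationSubring →+* w.valuationSubring) := fun σ =>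
    { toFun := fun x => ⟨σ x, by
        rw [Valuation.mem_valuationSubring_iff, hinv]
        exact x.2⟩
      map_one' := Subtype.ext (map_one σ)
      map_mul' := fun x y => Subtype.ext (map_mul σ (x : L) (y : L))
      map_zero' := Subtype.ext (map_zero σ)
      map_add' := fun x y => Subtype.ext (map_add σ (x : L) (y : L)) }
  have hloc : ∀ σ : L ≃ₐ[K] L, IsLocalHom (rhom σ) := by
    intro σ
    constructor
    intro x hx
    rw [val_isUnit_iff w] at hx ⊢
    have : w (σ (x : L)) = w (x : L) := hinv σ x
    rw [← this]
    exact hx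
  let Φ₀ : (L ≃ₐ[K] L) → (IsLocalRing.ResidueField w.valuationSubring →+*
      IsLocalRing.ResidueField w.valuationSubring) := fun σ =>
    @IsLocalRing.ResidueField.map _ _ _ _ _ _ (rhom σ) (hloc σ)
  have hΦ₀res : ∀ (σ : L ≃ₐ[K] L) (x : w.valuationSubring),
      Φ₀ σ (ρ x) = ρ (rhom σ x) := fun σ x =>
    @IsLocalRing.ResidueField.map_residue _ _ _ _ _ _ (rhom σ) (hloc σ) x
  have hrhom_comp : ∀ (σ τ : L ≃ₐ[K] L) (x : w.valuationSubring),
      rhom σ (rhom τ x) = rhom (σ * τ) x := by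
    intro σ τ x
    apply Subtype.ext
    exact (AlgEquiv.mul_apply σ τ (x : L)).symm
  have hrhom_one : ∀ x : w.valuationSubring, rhom 1 x = x := by
    intro x; apply Subtype.ext; rfl
  let Φe : (L ≃ₐ[K] L) → (IsLocalRing.ResidueField w.valuationSubring ≃+*
      IsLocalRing.ResidueField w.valuationSubring) := fun σ =>
    RingEquiv.ofRingHom (Φ₀ σ) (Φ₀ σ⁻¹)
      (by
        ext z
        obtain ⟨x, rfl⟩ := hsurjL z
        show Φ₀ σ (Φ₀ σ⁻¹ (ρ x)) = ρ x
        rw [hΦ₀res, hΦ₀res, hrhom_comp, mul_inv_cancel, hrhom_one])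
      (by
        ext z
        obtain ⟨x, rfl⟩ := hsurjL z
        show Φ₀ σ⁻¹ (Φ₀ σ (ρ x)) = ρ x
        rw [hΦ₀res, hΦ₀res, hrhom_comp, inv_mul_cancel, hrhom_one])
  have hΦe_apply : ∀ (σ : L ≃ₐ[K] L) (x : w.valuationSubring),
      Φe σ (ρ x) = ρ (rhom σ x) := fun σ x => hΦ₀res σ x
  let Φ : (L ≃ₐ[K] L) →* (IsLocalRing.ResidueField w.valuationSubring ≃+*
      IsLocalRing.ResidueField w.valuationSubring) :=
    MonoidHom.mk' Φe (by
      intro σ τ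
      ext z
      obtain ⟨x, rfl⟩ := hsurjL z
      show Φe (σ * τ) (ρ x) = Φe σ (Φe τ (ρ x))
      rw [hΦe_apply, hΦe_apply, hΦe_apply, hrhom_comp])
  have hΦ_apply : ∀ (σ : L ≃ₐ[K] L) (x : w.valuationSubring),
      Φ σ (ρ x) = ρ (rhom σ x) := hΦe_apply
  -- injectivity of Φ
  have hΦinj : Function.Injective Φ := by
    rw [injective_iff_map_eq_one]
    intro σ hσ1
    by_contra hne
    have hfixall : ¬ ∀ ζ ∈ {x : L | x ^ q ^ m = x}, σ ζ = ζ := by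
      intro hfix
      apply hne
      let Esub : Subalgebra K L := AlgHom.equalizer (σ : L →ₐ[K] L) (AlgHom.id K L)
      have hinvmem : ∀ x ∈ Esub, x⁻¹ ∈ Esub := by
        intro x hx
        have hx' : σ x = x := hx
        show σ x⁻¹ = x⁻¹
        rw [map_inv₀, hx']
      have hle : IntermediateField.adjoin K {x : L | x ^ q ^ m = x} ≤
          Esub.toIntermediateField hinvmem := by
        rw [IntermediateField.adjoin_le_iff]
        intro ζ hζ
        exact hfix ζ hζ
      rw [hgen] at hle
      ext x
      have hx : x ∈ Esub.toIntermediateField hinvmem := hle (IntermediateField.mem_top (x := x))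
      exact hx
    push_neg at hfixall
    obtain ⟨ζ, hζS, hζne⟩ := hfixall
    have hζS' : ζ ^ q ^ m = ζ := hζS
    have hζ0 : ζ ≠ 0 := by
      intro h0
      apply hζne
      rw [h0, map_zero]
    have hwζ : w ζ = 1 := by
      apply gz_eq_one (N := q ^ m) (fun h => hζ0 ((Valuation.zero_iff w).mp h)) hqm2
      rw [← map_pow, hζS']
    -- the difference of two roots of x^(q^m) = x is again such a root
    set δ := σ ζ - ζ with hδ
    have hδ0 : δ ≠ 0 := sub_ne_zero.mpr hζne
    have hσζS : (σ ζ) ^ q ^ m = σ ζ := by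
      rw [← map_pow, hζS']
    have hδS : δ ^ q ^ m = δ := by
      haveI : ExpChar L p := ExpChar.prime hp.1
      rw [hδ, hqe, ← pow_mul, sub_pow_expChar_pow, pow_mul, ← hqe, hσζS, hζS']
    have hwδ : w δ = 1 :=
      gz_eq_one (fun h => hδ0 ((Valuation.zero_iff w).mp h)) hqm2 (by rw [← map_pow, hδS])
    -- but the residue of ζ is fixed by Φ σ = 1, contradiction
    have hζmem : ζ ∈ w.valuationSubring := by
      rw [Valuation.mem_valuationSubring_iff, hwζ]
    have hres : Φ σ (ρ ⟨ζ, hζmem⟩) = ρ ⟨ζ, hζmem⟩ := by rw [hσ1]; rfl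
    rw [hΦ_apply] at hres
    have := (val_residue_eq_iff w _ _).mp hres
    rw [show ((rhom σ ⟨ζ, hζmem⟩ : w.valuationSubring) : L) = σ ζ from rfl] at this
    rw [show ((⟨ζ, hζmem⟩ : w.valuationSubring) : L) = ζ from rfl] at this
    rw [← hδ] at this
    rw [hwδ] at this
    exact lt_irrefl 1 this
  -- the embedding of residue fields
  let ψ : v.valuationSubring →+* w.valuationSubring :=
    { toFun := fun x => ⟨algebraMap K L (x : K), by
        rw [Valuation.mem_valuationSubring_iff, hext]
        exact x.2⟩
      map_one' := Subtype.ext (map_one (algebraMap K L))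
      map_mul' := fun x y => Subtype.ext (map_mul (algebraMap K L) (x : K) (y : K))
      map_zero' := Subtype.ext (map_zero (algebraMap K L))
      map_add' := fun x y => Subtype.ext (map_add (algebraMap K L) (x : K) (y : K)) }
  have hψloc : IsLocalHom ψ := by
    constructor
    intro x hx
    rw [val_isUnit_iff w] at hx
    rw [val_isUnit_iff v]
    rw [show ((ψ x : w.valuationSubring) : L) = algebraMap K L (x : K) from rfl] at hx
    rw [hext] at hx
    exact hx
  let ψbar : IsLocalRing.ResidueField v.valuationSubring →+*
      IsLocalRing.ResidueField w.valuationSubring :=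
    @IsLocalRing.ResidueField.map _ _ _ _ _ _ ψ hψloc
  have hψbar_res : ∀ x : v.valuationSubring, ψbar (ρK x) = ρ (ψ x) := fun x =>
    @IsLocalRing.ResidueField.map_residue _ _ _ _ _ _ ψ hψloc x
  letI : Algebra (IsLocalRing.ResidueField v.valuationSubring)
      (IsLocalRing.ResidueField w.valuationSubring) := ψbar.toAlgebra
  have halgmap : (algebraMap (IsLocalRing.ResidueField v.valuationSubring)
      (IsLocalRing.ResidueField w.valuationSubring)) = ψbar := rfl
  -- the residue field of L is finite
  haveI hfinL : Finite (IsLocalRing.ResidueField w.valuationSubring) := by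
    have hbound : ∀ s : Finset (IsLocalRing.ResidueField w.valuationSubring),
        (LinearIndependent (IsLocalRing.ResidueField v.valuationSubring)
          fun i : s => (i : IsLocalRing.ResidueField w.valuationSubring)) → s.card ≤ m := by
      intro s hs
      -- lift the elements of s to the valuation subring
      have hy : ∀ i : s, ∃ x : w.valuationSubring, ρ x = (i : _) := fun i => hsurjL _
      choose y hyres using hy
      have hliK : LinearIndependent K fun i : s => ((y i : L)) := by
        rw [Fintype.linearIndependent_iff]
        intro c hc
        by_contra hcne
        push_neg at hcne
        obtain ⟨i₁, hi₁⟩ := hcne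
        obtain ⟨i₀, -, hmax⟩ := Finset.exists_max_image Finset.univ (fun j => v (c j))
          ⟨i₁, Finset.mem_univ _⟩
        have hc0 : c i₀ ≠ 0 := by
          intro h0
          apply hi₁
          have := hmax i₁ (Finset.mem_univ _)
          rw [h0, Valuation.map_zero, le_zero_iff, Valuation.zero_iff] at this
          exact this
        set d : s → K := fun j => c j * (c i₀)⁻¹ with hdd
        have hdmem : ∀ j, v (d j) ≤ 1 := by
          intro j
          have h1 : v (c j) ≤ v (c i₀) := hmax j (Finset.mem_univ _)
          have h2 : v (d j) = v (c j) * (v (c i₀))⁻¹ := by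
            rw [hdd, Valuation.map_mul, map_inv₀]
          rw [h2]
          calc v (c j) * (v (c i₀))⁻¹ ≤ v (c i₀) * (v (c i₀))⁻¹ :=
                mul_le_mul_left h1 _
            _ = 1 := by
                rw [mul_inv_cancel₀]
                intro hz
                exact hc0 ((Valuation.zero_iff v).mp hz)
        have hsumL : ∑ j : s, algebraMap K L (d j) * (y j : L) = 0 := by
          have h3 : ∀ j : s, algebraMap K L (d j) * (y j : L)
              = algebraMap K L (c i₀)⁻¹ * (c j • (y j : L)) := by
            intro j
            rw [Algebra.smul_def, hdd, map_mul]
            ring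
          rw [Finset.sum_congr rfl (fun j _ => h3 j), ← Finset.mul_sum, hc, mul_zero]
        let Dk : s → v.valuationSubring := fun j => ⟨d j, hdmem j⟩
        have hOsum : ∑ j : s, ψ (Dk j) * y j = (0 : w.valuationSubring) := by
          apply (Subtype.coe_injective :
            Function.Injective (Subtype.val : w.valuationSubring → L))
          have hcoe : ((∑ j : s, ψ (Dk j) * y j : w.valuationSubring) : L)
              = ∑ j : s, ((ψ (Dk j) * y j : w.valuationSubring) : L) :=
            map_sum w.valuationSubring.subtype _ _
          have h4 : ∀ j : s, ((ψ (Dk j) * y j : w.valuationSubring) : L)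
              = algebraMap K L (d j) * (y j : L) := fun j => rfl
          show ((∑ j : s, ψ (Dk j) * y j : w.valuationSubring) : L)
              = ((0 : w.valuationSubring) : L)
          rw [hcoe, Finset.sum_congr rfl (fun j _ => h4 j), ZeroMemClass.coe_zero]
          exact hsumL
        have h5 : ∀ j : s, ψbar (ρK (Dk j)) * (j : _) = ρ (ψ (Dk j) * y j) := by
          intro j
          rw [map_mul, hψbar_res, hyres]
        have hkLsum : ∑ j : s, ψbar (ρK (Dk j)) * (j : _) = 0 := by
          rw [Finset.sum_congr rfl (fun j _ => h5 j), ← map_sum ρ, hOsum, map_zero]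
        have hall := Fintype.linearIndependent_iff.mp hs (fun j => ρK (Dk j)) (by
          rw [← hkLsum]
          apply Finset.sum_congr rfl
          intro j _
          rw [Algebra.smul_def, halgmap]) i₀
        have hD1 : Dk i₀ = 1 := by
          apply Subtype.ext
          show d i₀ = 1
          rw [hdd]
          exact mul_inv_cancel₀ hc0
        rw [hD1, map_one] at hall
        exact one_ne_zero hall
      have hcard := hliK.fintype_card_le_finrank
      rwa [hdeg, Fintype.card_coe] at hcard
    have hrank : Module.rank (IsLocalRing.ResidueField v.valuationSubring)
        (IsLocalRing.ResidueField w.valuationSubring) ≤ m := rank_le hbound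
    haveI hfree : Module.Free (IsLocalRing.ResidueField v.valuationSubring)
        (IsLocalRing.ResidueField w.valuationSubring) := Module.Free.of_divisionRing _ _
    haveI : Module.Finite (IsLocalRing.ResidueField v.valuationSubring)
        (IsLocalRing.ResidueField w.valuationSubring) := by
      rw [← Module.rank_lt_aleph0_iff]
      exact lt_of_le_of_lt hrank (Cardinal.nat_lt_aleph0 m)
    exact Module.finite_of_finite (IsLocalRing.ResidueField v.valuationSubring)
  -- the Galois group is cyclic
  haveI hcycAut : IsCyclic (IsLocalRing.ResidueField w.valuationSubring ≃+*
      IsLocalRing.ResidueField w.valuationSubring) := isCyclic_ringAut _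
  haveI hcycGal : IsCyclic (L ≃ₐ[K] L) := by
    have eiso := MonoidHom.ofInjective hΦinj
    exact isCyclic_of_surjective eiso.symm eiso.symm.surjective
  set Dset : Set L := {x : L | w (x - x₀) ≤ g} with hDset
  let I : Subgroup (L ≃ₐ[K] L) :=
    { carrier := {σ : L ≃ₐ[K] L | σ '' Dset = Dset}
      one_mem' := by
        show (1 : L ≃ₐ[K] L) '' Dset = Dset
        have h1 : ⇑(1 : L ≃ₐ[K] L) = id := rfl
        rw [h1, Set.image_id]
      mul_mem' := by
        intro aa bb ha hb
        show (aa * bb) '' Dset = Dset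
        have hco : ⇑(aa * bb) = ⇑aa ∘ ⇑bb := rfl
        rw [hco, Set.image_comp]
        rw [show bb '' Dset = Dset from hb, show aa '' Dset = Dset from ha]
      inv_mem' := by
        intro aa ha
        show (aa⁻¹ : L ≃ₐ[K] L) '' Dset = Dset
        have h1 : (aa⁻¹ : L ≃ₐ[K] L) '' (aa '' Dset) = Dset := by
          rw [← Set.image_comp]
          have h2 : ⇑(aa⁻¹ : L ≃ₐ[K] L) ∘ ⇑aa = id := by
            funext z
            show (aa⁻¹ : L ≃ₐ[K] L) (aa z) = z
            exact aa.symm_apply_apply z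
          rw [h2, Set.image_id]
        rw [show aa '' Dset = Dset from ha] at h1
        exact h1 }
  obtain ⟨τ', hτgen⟩ := IsCyclic.exists_generator (α := I)
  set τ : L ≃ₐ[K] L := (τ' : L ≃ₐ[K] L) with hτdef
  have hτD : τ '' Dset = Dset := τ'.2
  set n := orderOf τ with hndef
  have hτn : τ ^ n = 1 := pow_orderOf_eq_one τ
  have hnpos : 0 < n := orderOf_pos τ
  obtain ⟨b, hb0, hvb⟩ := hgG
  set bL : L := algebraMap K L b with hbLdef
  have hwbL : w bL = g := by rw [hbLdef, hext, hvb]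
  have hbL0 : bL ≠ 0 := by
    intro h0; apply hg; rw [← hwbL, h0, Valuation.map_zero]
  have hτbL : ∀ σ : L ≃ₐ[K] L, σ bL = bL := fun σ => σ.commutes b
  have hgpos : (0 : Γ₀) < g := zero_lt_iff.mpr hg
  have hx₀D : x₀ ∈ Dset := by
    show w (x₀ - x₀) ≤ g
    rw [sub_self, Valuation.map_zero]
    exact zero_le'
  set a : L := τ x₀ - x₀ with hadef
  have hwa : w a ≤ g := by
    have hτx₀ : τ x₀ ∈ Dset := by
      rw [← hτD]; exact ⟨x₀, hx₀D, rfl⟩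
    exact hτx₀
  set c : L := a / bL with hcdef
  have hwc : w c ≤ 1 := by
    rw [hcdef, map_div₀, hwbL, div_eq_mul_inv]
    calc w a * g⁻¹ ≤ g * g⁻¹ := mul_le_mul_left hwa _
      _ = 1 := mul_inv_cancel₀ hg
  have hcmem : c ∈ w.valuationSubring := hwc
  -- telescoping sums
  have htel : ∀ N : ℕ, ∑ i ∈ Finset.range N, (τ ^ i) a = (τ ^ N) x₀ - x₀ := by
    intro N
    induction N with
    | zero => simp
    | succ N ih =>
      rw [Finset.sum_range_succ, ih]
      have h1 : (τ ^ N) a = (τ ^ (N+1)) x₀ - (τ ^ N) x₀ := by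
        rw [hadef, map_sub]
        congr 1
      rw [h1]; ring
  have hsum0 : ∑ i ∈ Finset.range n, (τ ^ i) a = 0 := by
    rw [htel n, hτn]
    simp
  -- apply additive Hilbert 90 on the residue field
  set f := Φ τ with hfdef
  have hford : orderOf f = n := by
    rw [hfdef, orderOf_injective Φ hΦinj τ]
  have hτi_c : ∀ i : ℕ, (τ ^ i) c = ((τ ^ i) a) / bL := by
    intro i
    rw [hcdef, map_div₀, hτbL]
  have hτi_c_mem : ∀ i : ℕ, (τ ^ i) c ∈ w.valuationSubring := by
    intro i
    show w ((τ ^ i) c) ≤ 1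
    rw [hinv]
    exact hwc
  have hOsum2 : ∑ i ∈ Finset.range n, rhom (τ ^ i) ⟨c, hcmem⟩ = (0 : w.valuationSubring) := by
    apply (Subtype.coe_injective :
      Function.Injective (Subtype.val : w.valuationSubring → L))
    have hcoe : ((∑ i ∈ Finset.range n, rhom (τ ^ i) ⟨c, hcmem⟩ : w.valuationSubring) : L)
        = ∑ i ∈ Finset.range n, ((rhom (τ ^ i) ⟨c, hcmem⟩ : w.valuationSubring) : L) :=
      map_sum w.valuationSubring.subtype _ _
    show ((∑ i ∈ Finset.range n, rhom (τ ^ i) ⟨c, hcmem⟩ : w.valuationSubring) : L)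
        = ((0 : w.valuationSubring) : L)
    rw [hcoe, ZeroMemClass.coe_zero]
    have h6 : ∀ i ∈ Finset.range n, ((rhom (τ ^ i) ⟨c, hcmem⟩ : w.valuationSubring) : L)
        = ((τ ^ i) a) / bL := by
      intro i _
      show (τ ^ i) c = ((τ ^ i) a) / bL
      exact hτi_c i
    rw [Finset.sum_congr rfl h6, ← Finset.sum_div, hsum0, zero_div]
  have htr : ∑ i ∈ Finset.range n, (f ^ i) (ρ ⟨c, hcmem⟩) = 0 := by
    have h7 : ∀ i ∈ Finset.range n, (f ^ i) (ρ ⟨c, hcmem⟩) = ρ (rhom (τ ^ i) ⟨c, hcmem⟩) := by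
      intro i _
      rw [hfdef, ← map_pow Φ τ i]
      exact hΦ_apply _ _
    rw [Finset.sum_congr rfl h7, ← map_sum ρ, hOsum2, map_zero]
  obtain ⟨ubar, hubar⟩ := addH90 f hnpos hford (ρ ⟨c, hcmem⟩) htr
  obtain ⟨uO, huO⟩ := hsurjL ubar
  set u : L := (uO : L) with hudef
  have hwu : w u ≤ 1 := uO.2
  refine ⟨x₀ - bL * u, ?_, ?_⟩
  · have h8 : x₀ - bL * u - x₀ = -(bL * u) := by ring
    rw [h8, Valuation.map_neg, Valuation.map_mul, hwbL]
    calc g * w u ≤ g * 1 := mul_le_mul_right hwu _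
      _ = g := mul_one g
  · -- the key estimate for the generator τ
    have hres1 : ρ (rhom τ uO - uO) = ρ ⟨c, hcmem⟩ := by
      rw [map_sub, ← hΦ_apply τ uO, huO]
      exact hubar
    have hwlt1 : w (τ u - u - c) < 1 := by
      have := (val_residue_eq_iff w (rhom τ uO - uO) ⟨c, hcmem⟩).mp hres1
      have hco2 : ((rhom τ uO - uO : w.valuationSubring) : L) = τ u - u := rfl
      rw [hco2] at this
      exact this
    have hwlt2 : w (bL * (τ u - u - c)) < g := by
      rw [Valuation.map_mul, hwbL]
      calc g * w (τ u - u - c) < g * 1 :=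
            mul_lt_mul_of_pos_left hwlt1 hgpos
        _ = g := mul_one g
    have hkey : w (τ (x₀ - bL * u) - (x₀ - bL * u)) < g := by
      have h9 : τ (x₀ - bL * u) - (x₀ - bL * u) = -(bL * (τ u - u - c)) := by
        rw [map_sub, map_mul, hτbL, hcdef, mul_sub, mul_sub,
          mul_div_cancel₀ _ hbL0, hadef]
        ring
      rw [h9, Valuation.map_neg]
      exact hwlt2
    have hpow : ∀ k : ℕ, w ((τ ^ k) (x₀ - bL * u) - (x₀ - bL * u)) < g := by
      intro k
      induction k with
      | zero =>
        have : (τ ^ 0) (x₀ - bL * u) - (x₀ - bL * u) = 0 := by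
          rw [pow_zero]
          show (1 : L ≃ₐ[K] L) (x₀ - bL * u) - (x₀ - bL * u) = 0
          rw [AlgEquiv.one_apply, sub_self]
        rw [this, Valuation.map_zero]
        exact hgpos
      | succ k ih =>
        have h10 : (τ ^ (k+1)) (x₀ - bL * u) - (x₀ - bL * u)
            = (τ ^ k) (τ (x₀ - bL * u) - (x₀ - bL * u))
              + ((τ ^ k) (x₀ - bL * u) - (x₀ - bL * u)) := by
          have e1 : (τ ^ (k+1)) (x₀ - bL * u) = (τ ^ k) (τ (x₀ - bL * u)) := by
            rw [pow_succ, AlgEquiv.mul_apply]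
          rw [e1, map_sub (τ ^ k) (τ (x₀ - bL * u)) (x₀ - bL * u)]
          ring
        rw [h10]
        apply Valuation.map_add_lt
        · rw [hinv]; exact hkey
        · exact ih
    -- conclusion for any σ stabilizing the closed disk
    intro σ hσ x hx
    have hmemI : σ ∈ I := hσ
    have hzp : (⟨σ, hmemI⟩ : I) ∈ Subgroup.zpowers τ' := hτgen _
    have hpp : (⟨σ, hmemI⟩ : I) ∈ Submonoid.powers τ' :=
      mem_powers_iff_mem_zpowers.mpr hzp
    obtain ⟨k, hk⟩ := hpp
    have hσeq : σ = τ ^ k := by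
      have := congrArg (fun z : I => (z : L ≃ₐ[K] L)) hk
      simpa [hτdef] using this.symm
    have h11 : σ x - (x₀ - bL * u) = σ (x - (x₀ - bL * u))
        + (σ (x₀ - bL * u) - (x₀ - bL * u)) := by
      rw [map_sub]
      ring
    rw [h11]
    apply Valuation.map_add_lt
    · rw [hinv]; exact hx
    · rw [hσeq]
      exact hpow k
end
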